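/- arXiv:1502.06155 — 9 statements merged into one kernel-verified Lean document; each statement's English description precedes it below -/
import Mathlib

section
/- Let ℛ₁,…,ℛₙ be coherent risk measures on L² with risk envelopes 𝒬₁,…,𝒬ₙ, and suppose that all but at most one of the ℛᵢ are finite. Let λ₁,…,λₙ > 0 with λ₁+⋯+λₙ = 1. Then ℛ := λ₁ℛ₁+⋯+λₙℛₙ is a coherent risk measure on L², the Minkowski sum 𝒬 := λ₁𝒬₁+⋯+λₙ𝒬ₙ = {λ₁Q₁+⋯+λₙQₙ : Qᵢ ∈ 𝒬ᵢ} is a nonempty closed convex subset of 𝒫, and ℛ has risk envelope 𝒬, i.e. ℛ(X) = sup_{Q∈𝒬} E[XQ] for all X ∈ L². -/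
open MeasureTheory Filter Topology

noncomputable section

variable {Ω : Type*} [MeasurableSpace Ω] (μ : Measure Ω) [IsProbabilityMeasure μ]

/-- The space `L²(Ω, Σ, P₀; ℝ)`. -/
abbrev L2 := Lp ℝ 2 μ

/-- Expectation of an `L²` random variable. -/
def expect (X : L2 μ) : ℝ := ∫ ω, X ω ∂μ

/-- `E[X Q]`. -/
def pairing (X Q : L2 μ) : ℝ := ∫ ω, X ω * Q ω ∂μ

/-- The set of densities `𝒫 = {Q ∈ L² : Q ≥ 0 a.s., E[Q] = 1}`. -/
def densities : Set (L2 μ) := {Q | (0 : Ω → ℝ) ≤ᵐ[μ] ⇑Q ∧ ∫ ω, Q ω ∂μ = 1}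

/-- The constant random variable as an element of `L²`. -/
def constL2 (c : ℝ) : L2 μ := (memLp_const c).toLp (fun _ => c)

/-- A coherent risk measure (values in `(-∞, +∞]`, i.e. never `⊥`), axioms (A1)–(A5). -/
structure IsCoherent (ℛ : L2 μ → EReal) : Prop where
  nonbot : ∀ X : L2 μ, ℛ X ≠ ⊥
  const : ∀ C : ℝ, ℛ (constL2 μ C) = (C : EReal)
  convex : ∀ X X' : L2 μ, ∀ l : ℝ, 0 ≤ l → l ≤ 1 →
    ℛ ((1 - l) • X + l • X') ≤ ((1 - l : ℝ) : EReal) * ℛ X + (l : EReal) * ℛ X'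
  mono : ∀ X X' : L2 μ, (⇑X ≤ᵐ[μ] ⇑X') → ℛ X ≤ ℛ X'
  closed : ∀ (Xk : ℕ → L2 μ) (X : L2 μ),
    Tendsto (fun k => ‖Xk k - X‖) atTop (𝓝 0) → (∀ k, ℛ (Xk k) ≤ 0) → ℛ X ≤ 0
  posHom : ∀ (X : L2 μ) (l : ℝ), 0 < l → ℛ (l • X) = (l : EReal) * ℛ X

/-- A risk envelope: a nonempty closed convex subset of `𝒫`. -/
def IsRiskEnvelope (𝒬 : Set (L2 μ)) : Prop :=
  𝒬.Nonempty ∧ IsClosed 𝒬 ∧ Convex ℝ 𝒬 ∧ 𝒬 ⊆ densities μ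

/-- `ℛ` has risk envelope `𝒬`: `ℛ(X) = sup_{Q ∈ 𝒬} E[XQ]`. -/
def HasEnvelope (ℛ : L2 μ → EReal) (𝒬 : Set (L2 μ)) : Prop :=
  ∀ X : L2 μ, ℛ X = ⨆ Q ∈ 𝒬, ((pairing μ X Q : ℝ) : EReal)

/-- Inf-convolution of finitely many functionals. -/
def infConv {n : ℕ} (ℛ : Fin n → L2 μ → EReal) (X : L2 μ) : EReal :=
  ⨅ (Y : Fin n → L2 μ) (_ : ∑ i, Y i = X), ∑ i, ℛ i (Y i)

/-- The lower semicontinuous hull (largest lsc minorant) of an `EReal`-valued function. -/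
def lscHull {α : Type*} [TopologicalSpace α] (f : α → EReal) (x : α) : EReal :=
  ⨆ g ∈ {g : α → EReal | LowerSemicontinuous g ∧ ∀ y, g y ≤ f y}, g x

/-! ### Auxiliary lemmas -/

section Aux

set_option linter.unusedSectionVars false

open Pointwise NormedSpace

lemma pairing_eq_inner (X Q : L2 μ) : pairing μ X Q = @inner ℝ _ _ X Q := by
  rw [L2.inner_def, pairing]
  simp only [RCLike.inner_apply, conj_trivial]
  exact integral_congr_ae (Filter.Eventually.of_forall fun _ => mul_comm _ _)

lemma pairing_sum_smul (X : L2 μ) {n : ℕ} (c : Fin n → ℝ) (Q : Fin n → L2 μ) :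
    pairing μ X (∑ i, c i • Q i) = ∑ i, c i * pairing μ X (Q i) := by
  simp only [pairing_eq_inner]
  rw [inner_sum]
  exact Finset.sum_congr rfl fun i _ => real_inner_smul_right _ _ _

lemma pairing_comb (a b : ℝ) (X X' q : L2 μ) :
    pairing μ (a • X + b • X') q = a * pairing μ X q + b * pairing μ X' q := by
  simp [pairing_eq_inner, inner_add_left, real_inner_smul_left]

lemma pairing_smul_left (c : ℝ) (X q : L2 μ) :
    pairing μ (c • X) q = c * pairing μ X q := by
  simp [pairing_eq_inner, real_inner_smul_left]

lemma pairing_neg_left (X q : L2 μ) : pairing μ (-X) q = - pairing μ X q := by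
  simp [pairing_eq_inner, inner_neg_left]

lemma Lp_coeFn_sum {ι : Type*} (s : Finset ι) (f : ι → L2 μ) :
    ⇑(∑ i ∈ s, f i) =ᵐ[μ] fun ω => ∑ i ∈ s, f i ω := by
  classical
  induction s using Finset.cons_induction with
  | empty =>
      simp only [Finset.sum_empty]
      filter_upwards [Lp.coeFn_zero (E := ℝ) (p := 2) (μ := μ)] with ω h
      simpa using h
  | cons i s hi ih =>
      simp only [Finset.sum_cons]
      filter_upwards [Lp.coeFn_add (f i) (∑ j ∈ s, f j), ih] with ω h1 h2
      simp only [h1, Pi.add_apply, h2]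

/-! #### `EReal` lemmas -/

lemma ereal_iSup_eq_top {ι : Sort*} {f : ι → EReal} (h : ∀ M : ℝ, ∃ i, (M : EReal) < f i) :
    ⨆ i, f i = ⊤ := by
  refine le_antisymm le_top ?_
  by_contra h'
  rw [not_le] at h'
  obtain ⟨M, hM1, -⟩ := EReal.exists_between_coe_real h'
  obtain ⟨i, hi⟩ := h M
  exact absurd ((hi.trans_le (le_iSup f i)).trans hM1) (lt_irrefl _)

lemma ereal_le_of_forall_lt {r : ℝ} {y : EReal} (h : ∀ c : ℝ, c < r → (c : EReal) ≤ y) :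
    (r : EReal) ≤ y := by
  by_contra h'
  rw [not_le] at h'
  obtain ⟨c, hc1, hc2⟩ := EReal.exists_between_coe_real h'
  exact absurd (h c (EReal.coe_lt_coe_iff.1 hc2)) (not_le.2 hc1)

lemma ereal_coe_sum {α : Type*} (s : Finset α) (f : α → ℝ) :
    ((∑ i ∈ s, f i : ℝ) : EReal) = ∑ i ∈ s, (f i : EReal) :=
  map_sum (⟨⟨Real.toEReal, EReal.coe_zero⟩, EReal.coe_add⟩ : ℝ →+ EReal) f s

lemma ereal_mul_iSup {c : ℝ} (hc : 0 < c) {ι : Sort*} (f : ι → EReal) :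
    (c : EReal) * (⨆ i, f i) = ⨆ i, (c : EReal) * f i := by
  refine le_antisymm ?_ (iSup_le fun i => mul_le_mul_of_nonneg_left (le_iSup f i)
    (by exact_mod_cast hc.le))
  have key : (⨆ i, f i) ≤ (c⁻¹ : ℝ) * ⨆ i, (c : EReal) * f i := by
    refine iSup_le fun i => ?_
    have h2 : f i = ((c⁻¹ : ℝ) : EReal) * ((c : EReal) * f i) := by
      rw [← mul_assoc, ← EReal.coe_mul, inv_mul_cancel₀ hc.ne', EReal.coe_one, one_mul]
    rw [h2]
    exact mul_le_mul_of_nonneg_left (le_iSup (fun i => (c : EReal) * f i) i)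
      (by exact_mod_cast (inv_pos.2 hc).le)
  calc (c : EReal) * (⨆ i, f i) ≤ (c : EReal) * ((c⁻¹ : ℝ) * ⨆ i, (c : EReal) * f i) :=
        mul_le_mul_of_nonneg_left key (by exact_mod_cast hc.le)
    _ = ⨆ i, (c : EReal) * f i := by
        rw [← mul_assoc, ← EReal.coe_mul, mul_inv_cancel₀ hc.ne', EReal.coe_one, one_mul]

lemma ereal_sum_iSup {n : ℕ} (hn : 0 < n) {ι : Fin n → Type*} [inst : ∀ i, Nonempty (ι i)]
    (f : ∀ i, ι i → ℝ) :
    ∑ i, (⨆ j, ((f i j : ℝ) : EReal)) = ⨆ j : ∀ i, ι i, ((∑ i, f i (j i) : ℝ) : EReal) := by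
  refine le_antisymm ?_ (iSup_le fun j => ?_)
  · set s : Fin n → EReal := fun i => ⨆ j, ((f i j : ℝ) : EReal) with hs
    by_cases H : ∃ i₁, s i₁ = ⊤
    · obtain ⟨i₁, hi₁⟩ := H
      have htop : (⨆ j : ∀ i, ι i, ((∑ i, f i (j i) : ℝ) : EReal)) = ⊤ := by
        apply ereal_iSup_eq_top
        intro M
        set j₀ : ∀ i, ι i := fun i => Classical.arbitrary (ι i)
        set c : ℝ := ∑ i ∈ Finset.univ.erase i₁, f i (j₀ i) with hc
        have h1 : ((M - c : ℝ) : EReal) < s i₁ := by rw [hi₁]; exact EReal.coe_lt_top _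
        rw [hs, lt_iSup_iff] at h1
        obtain ⟨j₁, hj₁⟩ := h1
        rw [EReal.coe_lt_coe_iff] at hj₁
        refine ⟨Function.update j₀ i₁ j₁, ?_⟩
        rw [EReal.coe_lt_coe_iff]
        have hsplit : ∑ i, f i (Function.update j₀ i₁ j₁ i)
            = f i₁ j₁ + ∑ i ∈ Finset.univ.erase i₁, f i (j₀ i) := by
          rw [← Finset.add_sum_erase _ _ (Finset.mem_univ i₁), Function.update_self]
          congr 1
          refine Finset.sum_congr rfl fun i hi => ?_
          rw [Function.update_of_ne (Finset.mem_erase.1 hi).1]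
        rw [hsplit]
        linarith
      rw [htop]
      exact le_top
    · push_neg at H
      have hbot : ∀ i, s i ≠ ⊥ := fun i =>
        ((EReal.bot_lt_coe (f i (Classical.arbitrary (ι i)))).trans_le
          (le_iSup (fun k => ((f i k : ℝ) : EReal)) (Classical.arbitrary (ι i)))).ne'
      set r : Fin n → ℝ := fun i => (s i).toReal with hr
      have hcoe : ∀ i, ((r i : ℝ) : EReal) = s i := fun i => EReal.coe_toReal (H i) (hbot i)
      have hLHS : ∑ i, s i = ((∑ i, r i : ℝ) : EReal) := by
        rw [ereal_coe_sum]
        exact Finset.sum_congr rfl fun i _ => (hcoe i).symm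
      rw [hLHS]
      apply ereal_le_of_forall_lt
      intro c hc
      set δ : ℝ := (∑ i, r i - c) / n with hδ
      have hδpos : 0 < δ := div_pos (by linarith) (by exact_mod_cast hn)
      have hex : ∀ i, ∃ j : ι i, r i - δ < f i j := by
        intro i
        have h3 : ((r i - δ : ℝ) : EReal) < s i := by
          rw [← hcoe i, EReal.coe_lt_coe_iff]; linarith
        rw [hs, lt_iSup_iff] at h3
        obtain ⟨j, hj⟩ := h3
        exact ⟨j, EReal.coe_lt_coe_iff.1 hj⟩
      choose j hj using hex
      have hsum : c < ∑ i, f i (j i) := by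
        have h1 : ∑ i, (r i - δ) < ∑ i, f i (j i) :=
          Finset.sum_lt_sum_of_nonempty
            (by simp [Finset.univ_nonempty_iff, Fin.pos_iff_nonempty.1 hn]) fun i _ => hj i
        have h2 : ∑ i : Fin n, (r i - δ) = ∑ i, r i - n * δ := by
          rw [Finset.sum_sub_distrib, Finset.sum_const, Finset.card_univ, Fintype.card_fin,
            nsmul_eq_mul]
        rw [h2] at h1
        have h3 : (n : ℝ) * δ = ∑ i, r i - c := by
          rw [hδ, mul_div_cancel₀]
          exact_mod_cast hn.ne'
        linarith
      calc ((c : ℝ) : EReal) ≤ ((∑ i, f i (j i) : ℝ) : EReal) := by exact_mod_cast hsum.le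
        _ ≤ _ := le_iSup (fun j : ∀ i, ι i => ((∑ i, f i (j i) : ℝ) : EReal)) j
  · rw [ereal_coe_sum]
    exact Finset.sum_le_sum fun i _ => le_iSup (fun k => ((f i k : ℝ) : EReal)) (j i)

/-! #### Weak topology lemmas -/

variable {E : Type*} [NormedAddCommGroup E] [InnerProductSpace ℝ E] [CompleteSpace E]

/-- The canonical map from a real Hilbert space to its weak-star dual. -/
def toW (x : E) : WeakDual ℝ E := StrongDual.toWeakDual (InnerProductSpace.toDual ℝ E x)

lemma toW_apply (x y : E) : toW x y = @inner ℝ _ _ x y := rfl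

lemma toW_injective : Function.Injective (toW (E := E)) := by
  intro a b h
  have := congrArg WeakDual.toStrongDual h
  exact (InnerProductSpace.toDual ℝ E).injective (by exact_mod_cast this)

lemma toW_continuous : Continuous (toW (E := E)) := by
  apply WeakDual.continuous_of_continuous_eval
  intro y
  simp only [toW_apply]
  exact Continuous.inner continuous_id continuous_const

lemma toW_add (x y : E) : toW (x + y) = toW x + toW y := by
  simp only [toW, map_add]

lemma toW_smul (c : ℝ) (x : E) : toW (c • x) = c • toW x := by
  simp only [toW, LinearIsometryEquiv.map_smulₛₗ, starRingEnd_apply, star_trivial,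
    _root_.map_smul]

/-- `toW` as an `AddMonoidHom`. -/
def toWhom : E →+ WeakDual ℝ E := AddMonoidHom.mk' toW toW_add

lemma toW_sum {n : ℕ} (f : Fin n → E) : toW (∑ i, f i) = ∑ i, toW (f i) :=
  map_sum toWhom f Finset.univ

/-- Image of a norm-closed convex set under `toW` is weak-star closed. -/
lemma isClosed_toW_image {C : Set E} (hC : IsClosed C) (hconv : Convex ℝ C) :
    IsClosed (toW '' C) := by
  rw [← isOpen_compl_iff, isOpen_iff_mem_nhds]
  intro p hp
  set q : E := (InnerProductSpace.toDual ℝ E).symm (WeakDual.toStrongDual p) with hq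
  have hφq : toW q = p := by
    simp only [toW, hq, LinearIsometryEquiv.apply_symm_apply]
    rfl
  have hqC : q ∉ C := fun h => hp ⟨q, h, hφq⟩
  obtain ⟨f, s, hfq, hfC⟩ := geometric_hahn_banach_point_closed hconv hC hqC
  set X : E := (InnerProductSpace.toDual ℝ E).symm f with hX
  have hfX : ∀ z : E, f z = @inner ℝ _ _ X z := by
    intro z
    rw [hX, ← InnerProductSpace.toDual_apply_apply, LinearIsometryEquiv.apply_symm_apply]
  refine Filter.mem_of_superset
    (IsOpen.mem_nhds (s := (fun p' : WeakDual ℝ E => p' X) ⁻¹' Set.Iio s)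
      ((isOpen_Iio.preimage (WeakDual.eval_continuous X))) ?_) ?_
  · show p X < s
    rw [← hφq, toW_apply, real_inner_comm, ← hfX]
    exact hfq
  · rintro p' hp' ⟨y, hy, rfl⟩
    have hXy : toW y X = @inner ℝ _ _ X y := by rw [toW_apply, real_inner_comm]
    rw [Set.mem_preimage, Set.mem_Iio, hXy, ← hfX] at hp'
    exact absurd (hfC y hy) (not_lt.2 hp'.le)

/-- Image of a bounded, norm-closed, convex set under `toW` is weak-star compact. -/
lemma isCompact_toW_image {C : Set E} (hC : IsClosed C) (hconv : Convex ℝ C)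
    {R : ℝ} (hb : ∀ x ∈ C, ‖x‖ ≤ R) : IsCompact (toW '' C) := by
  apply WeakDual.isCompact_of_bounded_of_closed
  · apply Bornology.IsBounded.subset (Metric.isBounded_closedBall (x := (0 : StrongDual ℝ E)) (r := R))
    rintro g hg
    obtain ⟨x, hx, hgx⟩ := hg
    have hg' : g = InnerProductSpace.toDual ℝ E x := by
      have h2 := congrArg WeakDual.toStrongDual hgx
      have h3 : WeakDual.toStrongDual (toW x) = InnerProductSpace.toDual ℝ E x := rfl
      rw [h3] at h2
      exact_mod_cast h2.symm
    rw [Metric.mem_closedBall, dist_zero_right, hg', LinearIsometryEquiv.norm_map]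
    exact hb x hx
  · exact isClosed_toW_image hC hconv

lemma isClosed_sum_sets {G : Type*} [AddCommGroup G] [TopologicalSpace G] [IsTopologicalAddGroup G]
    {n : ℕ} (i₀ : Fin n) (A : Fin n → Set G)
    (hA : ∀ i, i ≠ i₀ → IsCompact (A i)) (hA₀ : IsClosed (A i₀)) :
    IsClosed {w : G | ∃ a : Fin n → G, (∀ i, a i ∈ A i) ∧ w = ∑ i, a i} := by
  classical
  have hmem : ∀ j : Fin n, j ∈ Finset.univ.erase i₀ ↔ j ≠ i₀ := fun j => by
    simp [Finset.mem_erase]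
  set K : Set G := (fun a : {j : Fin n // j ≠ i₀} → G => ∑ j, a j) ''
    (Set.univ.pi fun j => A j.1) with hK
  have hKc : IsCompact K := by
    refine (isCompact_univ_pi fun (j : {j : Fin n // j ≠ i₀}) => hA j.1 j.2).image ?_
    exact continuous_finset_sum _ fun j _ => continuous_apply j
  have heq : {w : G | ∃ a : Fin n → G, (∀ i, a i ∈ A i) ∧ w = ∑ i, a i} = K + A i₀ := by
    ext w
    constructor
    · rintro ⟨a, ha, rfl⟩
      refine Set.mem_add.2 ⟨∑ j : {j : Fin n // j ≠ i₀}, a j.1, ?_, a i₀, ha i₀, ?_⟩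
      · exact ⟨fun j => a j.1, fun j _ => ha j.1, rfl⟩
      · rw [← Finset.sum_erase_add _ _ (Finset.mem_univ i₀)]
        congr 1
        exact (Finset.sum_subtype (p := fun j => j ≠ i₀) _ hmem a).symm
    · rintro ⟨k, hk, b, hb, rfl⟩
      obtain ⟨at_, hat, rfl⟩ := hk
      refine ⟨fun i => if h : i = i₀ then b else at_ ⟨i, h⟩, fun i => ?_, ?_⟩
      · by_cases h : i = i₀
        · subst h; simp [hb]
        · simpa [h] using hat ⟨i, h⟩ (Set.mem_univ _)
      · rw [← Finset.sum_erase_add _ _ (Finset.mem_univ i₀)]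
        simp only [dif_pos]
        congr 1
        rw [Finset.sum_subtype (p := fun j => j ≠ i₀) _ hmem
          (fun j => if h : j = i₀ then b else at_ ⟨j, h⟩)]
        exact Finset.sum_congr rfl fun j _ => by simp [dif_neg j.2]
  rw [heq]
  exact hA₀.add_left_of_isCompact hKc

end Aux

/-- a convex combination of coherent risk measures, all but at most one of
which are finite, is a coherent risk measure whose risk envelope is the corresponding
convex (Minkowski) combination of the risk envelopes. -/
theorem stmt_0 {n : ℕ} (ℛ : Fin n → L2 μ → EReal) (𝒬 : Fin n → Set (L2 μ))
    (hcoh : ∀ i, IsCoherent μ (ℛ i))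
    (hRE : ∀ i, IsRiskEnvelope μ (𝒬 i))
    (henv : ∀ i, HasEnvelope μ (ℛ i) (𝒬 i))
    (hfin : ∃ i₀ : Fin n, ∀ i, i ≠ i₀ → ∀ X : L2 μ, ℛ i X ≠ ⊤)
    (l : Fin n → ℝ) (hl : ∀ i, 0 < l i) (hsum : ∑ i, l i = 1) :
    IsCoherent μ (fun X => ∑ i, (l i : EReal) * ℛ i X) ∧
    IsRiskEnvelope μ
      {q : L2 μ | ∃ Q : Fin n → L2 μ, (∀ i, Q i ∈ 𝒬 i) ∧ q = ∑ i, l i • Q i} ∧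
    HasEnvelope μ (fun X => ∑ i, (l i : EReal) * ℛ i X)
      {q : L2 μ | ∃ Q : Fin n → L2 μ, (∀ i, Q i ∈ 𝒬 i) ∧ q = ∑ i, l i • Q i} := by
  classical
  obtain ⟨i₀, hi₀⟩ := hfin
  have hn : 0 < n := i₀.pos
  set S : Set (L2 μ) :=
    {q : L2 μ | ∃ Q : Fin n → L2 μ, (∀ i, Q i ∈ 𝒬 i) ∧ q = ∑ i, l i • Q i} with hSdef
  have hQne : ∀ i, (𝒬 i).Nonempty := fun i => (hRE i).1
  haveI : ∀ i, Nonempty ↥(𝒬 i) := fun i => (hQne i).to_subtype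
  have hpair_le : ∀ i (X : L2 μ), ∀ Q ∈ 𝒬 i,
      ((pairing μ X Q : ℝ) : EReal) ≤ ℛ i X := by
    intro i X Q hQ
    rw [henv i X]
    exact le_iSup₂ (f := fun Q _ => ((pairing μ X Q : ℝ) : EReal)) Q hQ
  -- the envelope representation of the combination
  have hENV' : ∀ X : L2 μ, ∑ i, (l i : EReal) * ℛ i X
      = ⨆ q ∈ S, ((pairing μ X q : ℝ) : EReal) := by
    intro X
    have hstep1 : ∀ i, (l i : EReal) * ℛ i X
        = ⨆ Q : ↥(𝒬 i), ((l i * pairing μ X Q.1 : ℝ) : EReal) := by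
      intro i
      rw [henv i X, iSup_subtype', ereal_mul_iSup (hl i)]
      exact iSup_congr fun Q => (EReal.coe_mul _ _).symm
    calc ∑ i, (l i : EReal) * ℛ i X
        = ∑ i, ⨆ Q : ↥(𝒬 i), ((l i * pairing μ X Q.1 : ℝ) : EReal) :=
          Finset.sum_congr rfl fun i _ => hstep1 i
      _ = ⨆ Qt : ∀ i, ↥(𝒬 i), ((∑ i, l i * pairing μ X (Qt i).1 : ℝ) : EReal) :=
          ereal_sum_iSup hn (f := fun i (Q : ↥(𝒬 i)) => l i * pairing μ X Q.1)
      _ = ⨆ q ∈ S, ((pairing μ X q : ℝ) : EReal) := by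
          apply le_antisymm
          · refine iSup_le fun Qt => ?_
            have hmem : (∑ i, l i • (Qt i).1) ∈ S :=
              ⟨fun i => (Qt i).1, fun i => (Qt i).2, rfl⟩
            have heqp : pairing μ X (∑ i, l i • (Qt i).1)
                = ∑ i, l i * pairing μ X (Qt i).1 := pairing_sum_smul μ X l _
            rw [← heqp]
            exact le_iSup₂ (f := fun q _ => ((pairing μ X q : ℝ) : EReal)) _ hmem
          · refine iSup₂_le fun q hq => ?_
            obtain ⟨Q, hQ, rfl⟩ := hq
            rw [pairing_sum_smul μ X l Q]
            exact le_iSup (fun Qt : ∀ i, ↥(𝒬 i) =>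
              ((∑ i, l i * pairing μ X (Qt i).1 : ℝ) : EReal)) (fun i => ⟨Q i, hQ i⟩)
  have hS_ne : S.Nonempty :=
    ⟨∑ i, l i • (hQne i).some, fun i => (hQne i).some, fun i => (hQne i).some_mem, rfl⟩
  refine ⟨?_, ⟨hS_ne, ?_, ?_, ?_⟩, hENV'⟩
  · -- coherence
    refine ⟨?_, ?_, ?_, ?_, ?_, ?_⟩
    · -- nonbot
      intro X
      show (∑ i, (l i : EReal) * ℛ i X) ≠ ⊥
      rw [hENV' X]
      obtain ⟨q, hq⟩ := hS_ne
      exact (lt_of_lt_of_le (EReal.bot_lt_coe _)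
        (le_iSup₂ (f := fun q _ => ((pairing μ X q : ℝ) : EReal)) q hq)).ne'
    · -- const
      intro C
      show (∑ i, (l i : EReal) * ℛ i (constL2 μ C)) = (C : EReal)
      calc ∑ i, (l i : EReal) * ℛ i (constL2 μ C)
          = ∑ i, ((l i * C : ℝ) : EReal) := Finset.sum_congr rfl fun i _ => by
            rw [(hcoh i).const, ← EReal.coe_mul]
        _ = ((∑ i, l i * C : ℝ) : EReal) := (ereal_coe_sum _ _).symm
        _ = (C : EReal) := by rw [← Finset.sum_mul, hsum, one_mul]
    · -- convexity
      intro X X' t ht0 ht1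
      show (∑ i, (l i : EReal) * ℛ i ((1 - t) • X + t • X'))
        ≤ ((1 - t : ℝ) : EReal) * (∑ i, (l i : EReal) * ℛ i X)
          + (t : EReal) * (∑ i, (l i : EReal) * ℛ i X')
      rw [hENV' ((1 - t) • X + t • X'), hENV' X, hENV' X']
      refine iSup₂_le fun q hq => ?_
      calc ((pairing μ ((1 - t) • X + t • X') q : ℝ) : EReal)
          = (((1 - t) * pairing μ X q + t * pairing μ X' q : ℝ) : EReal) := by
            rw [pairing_comb]
        _ = ((1 - t : ℝ) : EReal) * ((pairing μ X q : ℝ) : EReal)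
            + ((t : ℝ) : EReal) * ((pairing μ X' q : ℝ) : EReal) := by
            rw [EReal.coe_add, EReal.coe_mul, EReal.coe_mul]
        _ ≤ ((1 - t : ℝ) : EReal) * (⨆ q ∈ S, ((pairing μ X q : ℝ) : EReal))
            + ((t : ℝ) : EReal) * (⨆ q ∈ S, ((pairing μ X' q : ℝ) : EReal)) :=
            add_le_add
              (mul_le_mul_of_nonneg_left
                (le_iSup₂ (f := fun q _ => ((pairing μ X q : ℝ) : EReal)) q hq)
                (by exact_mod_cast sub_nonneg.2 ht1))
              (mul_le_mul_of_nonneg_left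
                (le_iSup₂ (f := fun q _ => ((pairing μ X' q : ℝ) : EReal)) q hq)
                (by exact_mod_cast ht0))
    · -- monotone
      intro X X' h
      exact Finset.sum_le_sum fun i _ =>
        mul_le_mul_of_nonneg_left ((hcoh i).mono X X' h) (by exact_mod_cast (hl i).le)
    · -- closedness (A4)
      intro Xk X hlim hle
      show (∑ i, (l i : EReal) * ℛ i X) ≤ 0
      rw [hENV' X]
      refine iSup₂_le fun q hq => ?_
      have hk : ∀ k, pairing μ (Xk k) q ≤ 0 := by
        intro k
        have h1 : ((pairing μ (Xk k) q : ℝ) : EReal) ≤ 0 := by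
          refine le_trans ?_ (hle k)
          show ((pairing μ (Xk k) q : ℝ) : EReal) ≤ ∑ i, (l i : EReal) * ℛ i (Xk k)
          rw [hENV' (Xk k)]
          exact le_iSup₂ (f := fun q _ => ((pairing μ (Xk k) q : ℝ) : EReal)) q hq
        exact_mod_cast h1
      have hX : Tendsto Xk atTop (𝓝 X) := tendsto_iff_norm_sub_tendsto_zero.2 hlim
      have ht : Tendsto (fun k => pairing μ (Xk k) q) atTop (𝓝 (pairing μ X q)) := by
        simp only [pairing_eq_inner]
        exact Filter.Tendsto.inner hX tendsto_const_nhds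
      exact EReal.coe_nonpos.2 (le_of_tendsto ht (Filter.Eventually.of_forall hk))
    · -- positive homogeneity
      intro X c hc
      show (∑ i, (l i : EReal) * ℛ i (c • X))
        = (c : EReal) * ∑ i, (l i : EReal) * ℛ i X
      rw [hENV' (c • X), hENV' X, ereal_mul_iSup hc]
      refine iSup_congr fun q => ?_
      rw [ereal_mul_iSup hc]
      refine iSup_congr fun hq => ?_
      rw [← EReal.coe_mul, pairing_smul_left]
  · -- closedness of the Minkowski combination
    set W := WeakDual ℝ (L2 μ)
    set A : Fin n → Set W := fun i => (fun Q : L2 μ => toW (l i • Q)) '' 𝒬 i with hA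
    have hA_eq : ∀ i, A i = (fun w : W => l i • w) '' (toW '' 𝒬 i) := by
      intro i
      rw [Set.image_image]
      exact Set.image_congr fun Q _ => toW_smul (l i) Q
    have hbound : ∀ i, i ≠ i₀ → ∃ R : ℝ, ∀ Q ∈ 𝒬 i, ‖Q‖ ≤ R := by
      intro i hi
      set r : L2 μ → ℝ := fun X => (ℛ i X).toReal with hrdef
      have hr : ∀ X : L2 μ, ((r X : ℝ) : EReal) = ℛ i X := fun X =>
        EReal.coe_toReal (hi₀ i hi X) ((hcoh i).nonbot X)
      have hb : ∀ X : L2 μ, ∀ Q ∈ 𝒬 i, pairing μ X Q ≤ r X := by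
        intro X Q hQ
        have h1 := hpair_le i X Q hQ
        rw [← hr X] at h1
        exact_mod_cast h1
      have hpt : ∀ X : L2 μ, ∃ C : ℝ, ∀ Q : ↥(𝒬 i), ‖innerSL ℝ (Q.1 : L2 μ) X‖ ≤ C := by
        intro X
        refine ⟨max (r X) (r (-X)), fun Q => ?_⟩
        have heq : innerSL ℝ (Q.1 : L2 μ) X = pairing μ X Q.1 := by
          rw [pairing_eq_inner μ X Q.1, innerSL_apply_apply]
          exact real_inner_comm _ _
        rw [Real.norm_eq_abs, heq, abs_le]
        constructor
        · have h2 := hb (-X) Q.1 Q.2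
          rw [pairing_neg_left] at h2
          have h3 : r (-X) ≤ max (r X) (r (-X)) := le_max_right _ _
          linarith
        · exact (hb X Q.1 Q.2).trans (le_max_left _ _)
      obtain ⟨R, hR⟩ := banach_steinhaus hpt
      refine ⟨R, fun Q hQ => ?_⟩
      have := hR ⟨Q, hQ⟩
      rwa [innerSL_apply_norm] at this
    have hAcpt : ∀ i, i ≠ i₀ → IsCompact (A i) := by
      intro i hi
      obtain ⟨R, hR⟩ := hbound i hi
      rw [hA_eq i]
      exact (isCompact_toW_image (hRE i).2.1 (hRE i).2.2.1 hR).image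
        (continuous_const_smul (l i))
    have hAcl : IsClosed (A i₀) := by
      rw [hA_eq i₀]
      exact isClosedMap_smul_of_ne_zero (hl i₀).ne' _
        (isClosed_toW_image (hRE i₀).2.1 (hRE i₀).2.2.1)
    have hSrep : S = toW ⁻¹'
        {w : W | ∃ a : Fin n → W, (∀ i, a i ∈ A i) ∧ w = ∑ i, a i} := by
      ext q
      constructor
      · rintro ⟨Q, hQ, rfl⟩
        refine ⟨fun i => toW (l i • Q i), fun i => ⟨Q i, hQ i, rfl⟩, ?_⟩
        exact toW_sum _
      · rintro ⟨a, ha, hsum'⟩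
        choose Q hQ hQa using fun i => ha i
        have : toW q = toW (∑ i, l i • Q i) := by
          rw [toW_sum]
          rw [hsum']
          exact Finset.sum_congr rfl fun i _ => (hQa i).symm
        exact ⟨Q, hQ, toW_injective this⟩
    rw [hSrep]
    exact (isClosed_sum_sets i₀ A hAcpt hAcl).preimage toW_continuous
  · -- convexity of the combination
    rintro q ⟨Q, hQ, rfl⟩ q' ⟨Q', hQ', rfl⟩ a b ha hb hab
    refine ⟨fun i => a • Q i + b • Q' i,
      fun i => (hRE i).2.2.1 (hQ i) (hQ' i) ha hb hab, ?_⟩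
    rw [Finset.smul_sum, Finset.smul_sum, ← Finset.sum_add_distrib]
    refine Finset.sum_congr rfl fun i _ => ?_
    rw [smul_add, smul_smul, smul_smul, smul_smul, smul_smul, mul_comm a, mul_comm b]
  · -- contained in densities
    rintro q ⟨Q, hQ, rfl⟩
    have hdens : ∀ i, Q i ∈ densities μ := fun i => (hRE i).2.2.2 (hQ i)
    have hae : ⇑(∑ i, l i • Q i) =ᵐ[μ] fun ω => ∑ i, l i * Q i ω := by
      have h1 := Lp_coeFn_sum μ Finset.univ (fun i => l i • Q i)
      have h2 : ∀ i : Fin n, ⇑(l i • Q i) =ᵐ[μ] fun ω => l i * Q i ω := by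
        intro i
        filter_upwards [Lp.coeFn_smul (l i) (Q i)] with ω h
        simpa [smul_eq_mul] using h
      have h3 : ∀ᵐ ω ∂μ, ∀ i : Fin n, (l i • Q i) ω = l i * Q i ω := ae_all_iff.2 h2
      filter_upwards [h1, h3] with ω hω1 hω2
      rw [hω1]
      exact Finset.sum_congr rfl fun i _ => hω2 i
    constructor
    · have hpos : ∀ᵐ ω ∂μ, ∀ i : Fin n, 0 ≤ Q i ω := ae_all_iff.2 fun i => (hdens i).1
      filter_upwards [hae, hpos] with ω h1 h2
      rw [Pi.zero_apply, h1]
      exact Finset.sum_nonneg fun i _ => mul_nonneg (hl i).le (h2 i)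
    · rw [integral_congr_ae hae]
      have hint : ∀ i : Fin n, Integrable (fun ω => l i * Q i ω) μ :=
        fun i => ((Lp.memLp (Q i)).integrable (by norm_num)).const_mul _
      rw [integral_finset_sum _ fun i _ => hint i]
      have : ∀ i : Fin n, ∫ ω, l i * Q i ω ∂μ = l i := by
        intro i
        rw [integral_const_mul, (hdens i).2, mul_one]
      rw [Finset.sum_congr rfl fun i _ => this i, hsum]
end
end

section
/- Let ℛ₁,…,ℛₙ be coherent risk measures on L² with risk envelopes 𝒬₁,…,𝒬ₙ, and let ℛ̃₃ be the lower semicontinuous hull of their inf-convolution. Then ℛ̃₃ is a coherent risk measure on L² with risk envelope ⋂_{i=1}^n 𝒬ᵢ if and only if ⋂_{i=1}^n 𝒬ᵢ ≠ ∅. -/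
open MeasureTheory Filter Topology

noncomputable section

variable {Ω : Type*} [MeasurableSpace Ω] (μ : Measure Ω) [IsProbabilityMeasure μ]

set_option linter.unusedSectionVars false in
lemma ERealCoe_sum {ι : Type*} (s : Finset ι) (f : ι → ℝ) :
    ((∑ i ∈ s, f i : ℝ) : EReal) = ∑ i ∈ s, ((f i : ℝ) : EReal) :=
  map_sum (⟨⟨(↑· : ℝ → EReal), EReal.coe_zero⟩, EReal.coe_add⟩ : ℝ →+ EReal) f s

set_option linter.unusedSectionVars false in
lemma constL2_ae (C : ℝ) : ⇑(constL2 μ C) =ᵐ[μ] fun _ => C := MemLp.coeFn_toLp _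

set_option linter.unusedSectionVars false in
lemma pairing_inner (X Q : L2 μ) : pairing μ X Q = (inner ℝ X Q : ℝ) := by
  rw [pairing, L2.inner_def]
  simp [RCLike.inner_apply, starRingEnd_apply, star_trivial, mul_comm]

set_option linter.unusedSectionVars false in
lemma pairing_int (X Q : L2 μ) : Integrable (fun ω => X ω * Q ω) μ := by
  simpa [RCLike.inner_apply, mul_comm] using L2.integrable_inner (𝕜 := ℝ) X Q

lemma pairing_const (C : ℝ) (Q : L2 μ) (hQ : ∫ ω, Q ω ∂μ = 1) :
    pairing μ (constL2 μ C) Q = C := by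
  have h1 : pairing μ (constL2 μ C) Q = ∫ ω, C * Q ω ∂μ := by
    refine integral_congr_ae ?_
    filter_upwards [constL2_ae μ C] with ω hω
    rw [hω]
  rw [h1, integral_const_mul, hQ, mul_one]

section Envelope

variable {n : ℕ} {ℛ : Fin n → L2 μ → EReal} {𝒬 : Fin n → Set (L2 μ)}

set_option linter.unusedSectionVars false in
lemma env_ge {i : Fin n} (henv : HasEnvelope μ (ℛ i) (𝒬 i)) {Q : L2 μ} (hQ : Q ∈ 𝒬 i)
    (X : L2 μ) : ((pairing μ X Q : ℝ) : EReal) ≤ ℛ i X := by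
  rw [henv X]
  exact le_iSup₂ (f := fun Q _ => ((pairing μ X Q : ℝ) : EReal)) Q hQ

set_option linter.unusedSectionVars false in
lemma env_zero {i : Fin n} (henv : HasEnvelope μ (ℛ i) (𝒬 i)) (hne : (𝒬 i).Nonempty) :
    ℛ i 0 = 0 := by
  obtain ⟨Q₀, hQ₀⟩ := hne
  have hp : ∀ Q : L2 μ, pairing μ (0 : L2 μ) Q = 0 := fun Q => by
    rw [pairing_inner]; exact inner_zero_left Q
  rw [henv 0]
  refine le_antisymm (iSup₂_le fun Q hQ => by rw [hp Q]; exact le_refl _) ?_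
  have := le_iSup₂ (f := fun Q (_ : Q ∈ 𝒬 i) => ((pairing μ (0 : L2 μ) Q : ℝ) : EReal)) Q₀ hQ₀
  rwa [hp Q₀] at this

set_option linter.unusedSectionVars false in
lemma env_nonbot {i : Fin n} (henv : HasEnvelope μ (ℛ i) (𝒬 i)) {Q : L2 μ} (hQ : Q ∈ 𝒬 i)
    (X : L2 μ) : ℛ i X ≠ ⊥ := by
  intro h
  have := env_ge μ henv hQ X
  rw [h, le_bot_iff] at this
  exact EReal.coe_ne_bot _ this

set_option linter.unusedSectionVars false in
lemma env_convex {i : Fin n} (henv : HasEnvelope μ (ℛ i) (𝒬 i)) (Y Z : L2 μ)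
    {a b r s : ℝ} (ha : 0 ≤ a) (hb : 0 ≤ b)
    (hY : ℛ i Y ≤ (r : EReal)) (hZ : ℛ i Z ≤ (s : EReal)) :
    ℛ i (a • Y + b • Z) ≤ ((a * r + b * s : ℝ) : EReal) := by
  rw [henv (a • Y + b • Z)]
  refine iSup₂_le fun Q hQ => ?_
  rw [EReal.coe_le_coe_iff]
  have h1 : pairing μ Y Q ≤ r := EReal.coe_le_coe_iff.mp ((env_ge μ henv hQ Y).trans hY)
  have h2 : pairing μ Z Q ≤ s := EReal.coe_le_coe_iff.mp ((env_ge μ henv hQ Z).trans hZ)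
  have hp : pairing μ (a • Y + b • Z) Q = a * pairing μ Y Q + b * pairing μ Z Q := by
    simp_rw [pairing_inner]
    rw [inner_add_left, real_inner_smul_left, real_inner_smul_left]
  rw [hp]
  exact add_le_add (mul_le_mul_of_nonneg_left h1 ha) (mul_le_mul_of_nonneg_left h2 hb)

set_option linter.unusedSectionVars false in
lemma sum_real_bounds (henv : ∀ i, HasEnvelope μ (ℛ i) (𝒬 i)) {Q₀ : L2 μ}
    (hQ₀ : ∀ i, Q₀ ∈ 𝒬 i) (Y : Fin n → L2 μ) (t : ℝ)
    (h : ∑ i, ℛ i (Y i) ≤ (t : EReal)) :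
    ∃ r : Fin n → ℝ, (∀ i, ℛ i (Y i) = (r i : EReal)) ∧ ∑ i, r i ≤ t := by
  have hnb : ∀ i, ℛ i (Y i) ≠ ⊥ := fun i => env_nonbot μ (henv i) (hQ₀ i) (Y i)
  have hnt : ∀ i, ℛ i (Y i) ≠ ⊤ := by
    intro i htop
    have hsplit : ℛ i (Y i) + ∑ j ∈ Finset.univ.erase i, ℛ j (Y j) = ∑ j, ℛ j (Y j) :=
      Finset.add_sum_erase Finset.univ (fun j => ℛ j (Y j)) (Finset.mem_univ i)
    have h2 : ((∑ j ∈ Finset.univ.erase i, pairing μ (Y j) Q₀ : ℝ) : EReal)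
        ≤ ∑ j ∈ Finset.univ.erase i, ℛ j (Y j) := by
      rw [ERealCoe_sum]
      exact Finset.sum_le_sum fun j _ => env_ge μ (henv j) (hQ₀ j) (Y j)
    have h3 : (⊤ : EReal) ≤ ∑ j, ℛ j (Y j) := by
      rw [← hsplit, htop]
      calc (⊤ : EReal) = ⊤ + ((∑ j ∈ Finset.univ.erase i, pairing μ (Y j) Q₀ : ℝ) : EReal) :=
            (EReal.top_add_of_ne_bot (EReal.coe_ne_bot _)).symm
        _ ≤ ⊤ + ∑ j ∈ Finset.univ.erase i, ℛ j (Y j) := add_le_add le_rfl h2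
    have := le_trans h3 h
    simp at this
  refine ⟨fun i => (ℛ i (Y i)).toReal, fun i => (EReal.coe_toReal (hnt i) (hnb i)).symm, ?_⟩
  rw [← EReal.coe_le_coe_iff, ERealCoe_sum]
  calc ∑ i, (((ℛ i (Y i)).toReal : ℝ) : EReal)
      = ∑ i, ℛ i (Y i) :=
        Finset.sum_congr rfl fun i _ => EReal.coe_toReal (hnt i) (hnb i)
    _ ≤ (t : EReal) := h

end Envelope

section Main

variable {n : ℕ}

/-- The "epigraph-like" set of the inf-convolution. -/
def Sconv (ℛ : Fin n → L2 μ → EReal) : Set (L2 μ × ℝ) :=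
  {p | ∃ Y : Fin n → L2 μ, ∑ i, Y i = p.1 ∧ ∑ i, ℛ i (Y i) ≤ (p.2 : EReal)}

variable {ℛ : Fin n → L2 μ → EReal} {𝒬 : Fin n → Set (L2 μ)}

set_option linter.unusedSectionVars false in
lemma Sconv_zero (henv : ∀ i, HasEnvelope μ (ℛ i) (𝒬 i)) {Q₀ : L2 μ}
    (hQ₀ : ∀ i, Q₀ ∈ 𝒬 i) {m : ℝ} (hm : 0 ≤ m) : ((0 : L2 μ), m) ∈ Sconv μ ℛ := by
  refine ⟨fun _ => 0, by simp, ?_⟩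
  have : ∀ i : Fin n, ℛ i 0 = 0 := fun i => env_zero μ (henv i) ⟨Q₀, hQ₀ i⟩
  simp only [this, Finset.sum_const_zero]
  exact_mod_cast EReal.coe_nonneg.mpr hm

set_option linter.unusedSectionVars false in
lemma Sconv_single (henv : ∀ i, HasEnvelope μ (ℛ i) (𝒬 i)) {Q₀ : L2 μ}
    (hQ₀ : ∀ i, Q₀ ∈ 𝒬 i) (i : Fin n) (W : L2 μ) (r : ℝ)
    (h : ℛ i W ≤ (r : EReal)) : (W, r) ∈ Sconv μ ℛ := by
  refine ⟨(Pi.single i W : Fin n → L2 μ), by simp, ?_⟩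
  have hterm : ∀ j : Fin n, ℛ j ((Pi.single i W : Fin n → L2 μ) j) = if j = i then ℛ i W else 0 := by
    intro j
    by_cases hj : j = i
    · subst hj; simp [Pi.single_eq_same]
    · simp [Pi.single_eq_of_ne hj, env_zero μ (henv j) ⟨Q₀, hQ₀ j⟩, hj]
  rw [Finset.sum_congr rfl fun j _ => hterm j]
  simpa using h

set_option linter.unusedSectionVars false in
lemma Sconv_pair (henv : ∀ i, HasEnvelope μ (ℛ i) (𝒬 i)) {Q₀ : L2 μ}
    (hQ₀ : ∀ i, Q₀ ∈ 𝒬 i) {p : L2 μ × ℝ} (hp : p ∈ Sconv μ ℛ) :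
    pairing μ p.1 Q₀ ≤ p.2 := by
  obtain ⟨Y, hY, hle⟩ := hp
  have h1 : ((∑ i, pairing μ (Y i) Q₀ : ℝ) : EReal) ≤ (p.2 : EReal) := by
    rw [ERealCoe_sum]
    exact le_trans (Finset.sum_le_sum fun i _ => env_ge μ (henv i) (hQ₀ i) (Y i)) hle
  have h2 : ∑ i, pairing μ (Y i) Q₀ = pairing μ p.1 Q₀ := by
    simp_rw [pairing_inner]
    rw [← hY]
    exact (sum_inner Finset.univ Y Q₀).symm
  rw [h2] at h1
  exact EReal.coe_le_coe_iff.mp h1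

set_option linter.unusedSectionVars false in
lemma Sconv_convex (henv : ∀ i, HasEnvelope μ (ℛ i) (𝒬 i)) {Q₀ : L2 μ}
    (hQ₀ : ∀ i, Q₀ ∈ 𝒬 i) : Convex ℝ (Sconv μ ℛ) := by
  rintro p hp q hq a b ha hb hab
  obtain ⟨Y, hY, hYle⟩ := hp
  obtain ⟨Z, hZ, hZle⟩ := hq
  obtain ⟨r, hr, hrs⟩ := sum_real_bounds μ henv hQ₀ Y p.2 hYle
  obtain ⟨s, hs, hss⟩ := sum_real_bounds μ henv hQ₀ Z q.2 hZle
  refine ⟨fun i => a • Y i + b • Z i, ?_, ?_⟩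
  · rw [Finset.sum_add_distrib, ← Finset.smul_sum, ← Finset.smul_sum, hY, hZ]
    rfl
  · have hterm : ∀ i : Fin n, ℛ i (a • Y i + b • Z i) ≤ ((a * r i + b * s i : ℝ) : EReal) :=
      fun i => env_convex μ (henv i) (Y i) (Z i) ha hb (hr i).le (hs i).le
    calc ∑ i, ℛ i (a • Y i + b • Z i)
        ≤ ∑ i, ((a * r i + b * s i : ℝ) : EReal) := Finset.sum_le_sum fun i _ => hterm i
      _ = ((∑ i, (a * r i + b * s i) : ℝ) : EReal) := (ERealCoe_sum _ _).symm
      _ ≤ (((a • p + b • q).2 : ℝ) : EReal) := by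
          rw [EReal.coe_le_coe_iff]
          have : (a • p + b • q).2 = a * p.2 + b * q.2 := rfl
          rw [this]
          have h1 : ∑ i, (a * r i + b * s i) = a * ∑ i, r i + b * ∑ i, s i := by
            rw [Finset.sum_add_distrib, ← Finset.mul_sum, ← Finset.mul_sum]
          rw [h1]
          exact add_le_add (mul_le_mul_of_nonneg_left hrs ha) (mul_le_mul_of_nonneg_left hss hb)

end Main

section Sep

variable {n : ℕ} {ℛ : Fin n → L2 μ → EReal} {𝒬 : Fin n → Set (L2 μ)}

set_option linter.unusedSectionVars false in
set_option maxHeartbeats 1000000 in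
lemma mem_closure_Sconv (hRE : ∀ i, IsRiskEnvelope μ (𝒬 i))
    (henv : ∀ i, HasEnvelope μ (ℛ i) (𝒬 i)) {Q₀ : L2 μ}
    (hQ₀ : ∀ i, Q₀ ∈ 𝒬 i) (X : L2 μ) (c : ℝ)
    (hc : (⨆ Q ∈ ⋂ i, 𝒬 i, ((pairing μ X Q : ℝ) : EReal)) ≤ (c : EReal)) :
    (X, c) ∈ closure (Sconv μ ℛ) := by
  by_contra hX
  obtain ⟨φ, u, hu1, hu2⟩ := geometric_hahn_banach_point_closed
    ((Sconv_convex μ henv hQ₀).closure) isClosed_closure hX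
  have hS2 : ∀ p ∈ Sconv μ ℛ, u < φ p := fun p hp => hu2 p (subset_closure hp)
  set ψ : L2 μ →L[ℝ] ℝ := φ.comp (ContinuousLinearMap.inl ℝ (L2 μ) ℝ) with hψdef
  set P : L2 μ := (InnerProductSpace.toDual ℝ (L2 μ)).symm ψ with hPdef
  have hPy : ∀ y : L2 μ, (inner ℝ P y : ℝ) = φ (y, 0) := by
    intro y
    have := InnerProductSpace.toDual_symm_apply (𝕜 := ℝ) (E := L2 μ) (x := y) (y := ψ)
    rw [← hPdef] at this
    rw [this, hψdef]
    rfl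
  set a : ℝ := φ ((0 : L2 μ), (1 : ℝ)) with hadef
  have hφsplit : ∀ (y : L2 μ) (t : ℝ), φ (y, t) = (inner ℝ P y : ℝ) + t * a := by
    intro y t
    have h1 : ((y, t) : L2 μ × ℝ) = (y, 0) + t • ((0 : L2 μ), (1 : ℝ)) := by
      simp [Prod.ext_iff]
    rw [h1, map_add, φ.map_smul, smul_eq_mul, hPy]
  have ha : 0 ≤ a := by
    by_contra hcon
    push_neg at hcon
    have hm : ∀ m : ℝ, 0 ≤ m → u < m * a := by
      intro m hm0
      have := hS2 _ (Sconv_zero μ henv hQ₀ hm0)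
      rwa [hφsplit, inner_zero_right, zero_add] at this
    have h1 : u < 0 := by simpa using hm 0 le_rfl
    have h2 := hm (u / a) (le_of_lt (div_pos_of_neg_of_neg h1 hcon))
    rw [div_mul_cancel₀ u hcon.ne] at h2
    exact lt_irrefl _ h2
  set P₁ : L2 μ := -P with hP₁def
  have hL : ∀ p ∈ Sconv μ ℛ, (inner ℝ P₁ p.1 : ℝ) - a * p.2 < -u := by
    intro p hp
    have h1 := hS2 p hp
    rw [show p = (p.1, p.2) from rfl, hφsplit p.1 p.2] at h1
    rw [hP₁def, inner_neg_left]
    linarith [h1]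
  have hLX : -u < (inner ℝ P₁ X : ℝ) - a * c := by
    have := hu1
    rw [hφsplit X c] at this
    rw [hP₁def, inner_neg_left]
    linarith
  set d : ℝ := ((inner ℝ P₁ X : ℝ) - a * c) - (-u) with hddef
  have hd : 0 < d := by rw [hddef]; linarith
  set M : ℝ := |(inner ℝ Q₀ X : ℝ) - c| with hMdef
  have hM : 0 ≤ M := abs_nonneg _
  set ε : ℝ := d / (2 * (M + 1)) with hεdef
  have hε : 0 < ε := by positivity
  have hεM : -(d / 2) ≤ ε * ((inner ℝ Q₀ X : ℝ) - c) := by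
    have h1 : -M ≤ (inner ℝ Q₀ X : ℝ) - c := neg_abs_le _
    have h2 : ε * (-M) ≤ ε * ((inner ℝ Q₀ X : ℝ) - c) := mul_le_mul_of_nonneg_left h1 hε.le
    have h3 : ε * M ≤ d / 2 := by
      rw [hεdef]
      rw [div_mul_eq_mul_div, div_le_div_iff₀ (by positivity) (by norm_num)]
      nlinarith
    linarith
  set A : ℝ := a + ε with hAdef
  have hA : 0 < A := by rw [hAdef]; linarith
  set R : L2 μ := A⁻¹ • (P₁ + ε • Q₀) with hRdef
  set β : ℝ := (-u) / A with hβdef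
  have hinnerR : ∀ y : L2 μ, (inner ℝ R y : ℝ) = A⁻¹ * ((inner ℝ P₁ y : ℝ) + ε * (inner ℝ Q₀ y : ℝ)) := by
    intro y
    rw [hRdef, real_inner_smul_left, inner_add_left, real_inner_smul_left]
  have hRS : ∀ p ∈ Sconv μ ℛ, (inner ℝ R p.1 : ℝ) ≤ p.2 + β := by
    intro p hp
    have h1 := hL p hp
    have h2 : (inner ℝ Q₀ p.1 : ℝ) ≤ p.2 := by
      rw [real_inner_comm, ← pairing_inner]
      exact Sconv_pair μ henv hQ₀ hp
    have h3 : (inner ℝ P₁ p.1 : ℝ) + ε * (inner ℝ Q₀ p.1 : ℝ) ≤ A * p.2 + (-u) := by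
      have h4 : ε * (inner ℝ Q₀ p.1 : ℝ) ≤ ε * p.2 := mul_le_mul_of_nonneg_left h2 hε.le
      rw [hAdef]; nlinarith
    rw [hinnerR]
    calc A⁻¹ * ((inner ℝ P₁ p.1 : ℝ) + ε * (inner ℝ Q₀ p.1 : ℝ))
        ≤ A⁻¹ * (A * p.2 + (-u)) := mul_le_mul_of_nonneg_left h3 (inv_nonneg.mpr hA.le)
      _ = p.2 + β := by rw [hβdef]; field_simp
  have hRX : c + β < (inner ℝ R X : ℝ) := by
    have h3 : A * c + (-u) < (inner ℝ P₁ X : ℝ) + ε * (inner ℝ Q₀ X : ℝ) := by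
      have h5 : (inner ℝ P₁ X : ℝ) - a * c = -u + d := by rw [hddef]; ring
      have h6 : ε * ((inner ℝ Q₀ X : ℝ) - c) ≥ -(d / 2) := hεM
      rw [hAdef]; nlinarith
    rw [hinnerR]
    calc c + β = A⁻¹ * (A * c + (-u)) := by rw [hβdef]; field_simp
      _ < A⁻¹ * ((inner ℝ P₁ X : ℝ) + ε * (inner ℝ Q₀ X : ℝ)) :=
          (mul_lt_mul_iff_right₀ (inv_pos.mpr hA)).mpr h3
  have hβ0 : 0 ≤ β := by
    have := hRS _ (Sconv_zero μ henv hQ₀ le_rfl)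
    simpa [inner_zero_right] using this
  -- R belongs to every 𝒬 i
  have hRQ : ∀ i, R ∈ 𝒬 i := by
    intro i
    by_contra hR
    obtain ⟨f, v, hf1, hf2⟩ :=
      geometric_hahn_banach_point_closed (hRE i).2.2.1 (hRE i).2.1 hR
    set W : L2 μ := -((InnerProductSpace.toDual ℝ (L2 μ)).symm f) with hWdef
    have hWx : ∀ x : L2 μ, (inner ℝ W x : ℝ) = -(f x) := by
      intro x
      rw [hWdef, inner_neg_left, InnerProductSpace.toDual_symm_apply]
    have hRW : ∀ l : ℝ, 0 < l → ℛ i (l • W) ≤ ((l * (-v) : ℝ) : EReal) := by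
      intro l hl
      rw [(henv i) (l • W)]
      refine iSup₂_le fun Q hQ => ?_
      rw [EReal.coe_le_coe_iff]
      have h1 : pairing μ (l • W) Q = l * (inner ℝ W Q : ℝ) := by
        rw [pairing_inner, real_inner_smul_left]
      have h2 : (inner ℝ W Q : ℝ) ≤ -v := by rw [hWx]; linarith [hf2 Q hQ]
      rw [h1]
      exact mul_le_mul_of_nonneg_left h2 hl.le
    have hkey : ∀ l : ℝ, 0 < l → l * ((inner ℝ R W : ℝ) + v) ≤ β := by
      intro l hl
      have hmem := Sconv_single μ henv hQ₀ i (l • W) (l * (-v)) (hRW l hl)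
      have := hRS _ hmem
      simp only at this
      rw [real_inner_smul_right] at this
      nlinarith
    have hpos : 0 < (inner ℝ R W : ℝ) + v := by
      have := hWx R
      rw [real_inner_comm] at this
      rw [this]
      linarith
    have := hkey ((β + 1) / ((inner ℝ R W : ℝ) + v)) (by positivity)
    rw [div_mul_cancel₀ _ hpos.ne'] at this
    linarith
  -- final contradiction
  have hmem : R ∈ ⋂ i, 𝒬 i := Set.mem_iInter.mpr hRQ
  have h1 : ((pairing μ X R : ℝ) : EReal) ≤ (c : EReal) :=
    le_trans (le_iSup₂ (f := fun Q (_ : Q ∈ ⋂ i, 𝒬 i) => ((pairing μ X Q : ℝ) : EReal)) R hmem) hc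
  have h2 : pairing μ X R ≤ c := EReal.coe_le_coe_iff.mp h1
  have h3 : c + β < pairing μ X R := by
    rw [pairing_inner, real_inner_comm]
    exact hRX
  linarith

end Sep

section Hull

variable {n : ℕ} {ℛ : Fin n → L2 μ → EReal} {𝒬 : Fin n → Set (L2 μ)}

set_option linter.unusedSectionVars false in
lemma isClosed_lsc_epi {h : L2 μ → EReal} (hlsc : LowerSemicontinuous h) :
    IsClosed {p : L2 μ × ℝ | h p.1 ≤ (p.2 : EReal)} := by
  rw [← isOpen_compl_iff, isOpen_iff_mem_nhds]
  intro p hp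
  simp only [Set.mem_compl_iff, Set.mem_setOf_eq, not_le] at hp
  obtain ⟨c', hc1, hc2⟩ := EReal.exists_between_coe_real hp
  have h1 : {y : L2 μ | (c' : EReal) < h y} ∈ 𝓝 p.1 := hlsc p.1 (c' : EReal) hc2
  have h2 : Set.Iio c' ∈ 𝓝 p.2 := Iio_mem_nhds (EReal.coe_lt_coe_iff.mp hc1)
  refine Filter.mem_of_superset (prod_mem_nhds h1 h2) ?_
  rintro ⟨y, t⟩ ⟨hy, ht⟩
  simp only [Set.mem_compl_iff, Set.mem_setOf_eq, not_le]
  exact lt_trans (EReal.coe_lt_coe_iff.mpr ht) hy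

set_option linter.unusedSectionVars false in
set_option maxHeartbeats 1000000 in
lemma lscHull_infConv_eq (hRE : ∀ i, IsRiskEnvelope μ (𝒬 i))
    (henv : ∀ i, HasEnvelope μ (ℛ i) (𝒬 i)) {Q₀ : L2 μ}
    (hQ₀ : Q₀ ∈ ⋂ i, 𝒬 i) :
    lscHull (infConv μ ℛ) = fun X => ⨆ Q ∈ ⋂ i, 𝒬 i, ((pairing μ X Q : ℝ) : EReal) := by
  have hQ₀' : ∀ i, Q₀ ∈ 𝒬 i := fun i => Set.mem_iInter.mp hQ₀ i
  set G : L2 μ → EReal := fun X => ⨆ Q ∈ ⋂ i, 𝒬 i, ((pairing μ X Q : ℝ) : EReal) with hGdef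
  have hGle : ∀ y, G y ≤ infConv μ ℛ y := by
    intro y
    refine le_iInf fun Y => le_iInf fun hY => iSup₂_le fun Q hQ => ?_
    have hpq : pairing μ y Q = ∑ i, pairing μ (Y i) Q := by
      simp_rw [pairing_inner]
      rw [← hY]
      exact sum_inner Finset.univ Y Q
    rw [hpq, ERealCoe_sum]
    exact Finset.sum_le_sum fun i _ => env_ge μ (henv i) (Set.mem_iInter.mp hQ i) (Y i)
  have hGlsc : LowerSemicontinuous G := by
    refine lowerSemicontinuous_biSup fun Q hQ => ?_
    have hcont : Continuous fun X : L2 μ => ((pairing μ X Q : ℝ) : EReal) := by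
      have h1 : (fun X : L2 μ => pairing μ X Q) = fun X : L2 μ => (inner ℝ X Q : ℝ) :=
        funext fun X => pairing_inner μ X Q
      exact continuous_coe_real_ereal.comp (h1 ▸ continuous_id.inner continuous_const)
    exact hcont.lowerSemicontinuous
  have hGmem : G ∈ {g : L2 μ → EReal | LowerSemicontinuous g ∧ ∀ y, g y ≤ infConv μ ℛ y} :=
    ⟨hGlsc, hGle⟩
  funext X
  refine le_antisymm (iSup₂_le fun h hh => ?_)
    (le_iSup₂ (f := fun (g : L2 μ → EReal) (_ : g ∈ {g : L2 μ → EReal |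
      LowerSemicontinuous g ∧ ∀ y, g y ≤ infConv μ ℛ y}) => g X) G hGmem)
  obtain ⟨hlsc, hhf⟩ := hh
  by_contra hlt
  push_neg at hlt
  obtain ⟨c, hc1, hc2⟩ := EReal.exists_between_coe_real hlt
  have hmem := mem_closure_Sconv μ hRE henv hQ₀' X c hc1.le
  have hsub : Sconv μ ℛ ⊆ {p : L2 μ × ℝ | h p.1 ≤ (p.2 : EReal)} := by
    rintro p ⟨Y, hY, hle⟩
    refine le_trans (hhf p.1) (le_trans ?_ hle)
    exact iInf₂_le Y hY
  have := ((isClosed_lsc_epi μ hlsc).closure_subset_iff.mpr hsub) hmem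
  exact absurd this (not_le.mpr hc2)

end Hull

set_option maxHeartbeats 1000000 in
set_option linter.unusedSectionVars false in
lemma coh_sup (S : Set (L2 μ)) (hne : S.Nonempty) (hd : S ⊆ densities μ) :
    IsCoherent μ (fun X => ⨆ Q ∈ S, ((pairing μ X Q : ℝ) : EReal)) := by
  obtain ⟨Q₀, hQ₀⟩ := hne
  have hle : ∀ (X Q : L2 μ) (h : Q ∈ S),
      ((pairing μ X Q : ℝ) : EReal) ≤ ⨆ Q ∈ S, ((pairing μ X Q : ℝ) : EReal) :=
    fun X Q h => le_iSup₂ (f := fun Q _ => ((pairing μ X Q : ℝ) : EReal)) Q h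
  constructor
  · -- nonbot
    intro X h
    have := hle X Q₀ hQ₀
    rw [h, le_bot_iff] at this
    exact EReal.coe_ne_bot _ this
  · -- const
    intro C
    have hp : ∀ Q ∈ S, ((pairing μ (constL2 μ C) Q : ℝ) : EReal) = (C : EReal) :=
      fun Q hQ => by rw [pairing_const μ C Q (hd hQ).2]
    refine le_antisymm (iSup₂_le fun Q hQ => (hp Q hQ).le) ?_
    rw [← hp Q₀ hQ₀]
    exact hle _ Q₀ hQ₀
  · -- convex
    intro X X' l hl0 hl1
    refine iSup₂_le fun Q hQ => ?_
    have hp : pairing μ ((1 - l) • X + l • X') Q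
        = (1 - l) * pairing μ X Q + l * pairing μ X' Q := by
      simp_rw [pairing_inner]
      rw [inner_add_left, real_inner_smul_left, real_inner_smul_left]
    rw [hp, EReal.coe_add, EReal.coe_mul, EReal.coe_mul]
    refine add_le_add ?_ ?_
    · exact mul_le_mul_of_nonneg_left (hle X Q hQ)
        (by exact_mod_cast sub_nonneg.mpr hl1)
    · exact mul_le_mul_of_nonneg_left (hle X' Q hQ) (by exact_mod_cast hl0)
  · -- mono
    intro X X' hXX'
    refine iSup₂_le fun Q hQ => le_trans ?_ (hle X' Q hQ)
    rw [EReal.coe_le_coe_iff]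
    refine integral_mono_ae (pairing_int μ X Q) (pairing_int μ X' Q) ?_
    filter_upwards [hXX', (hd hQ).1] with ω h1 h2
    exact mul_le_mul_of_nonneg_right h1 h2
  · -- closed
    intro Xk X hconv hle0
    refine iSup₂_le fun Q hQ => ?_
    have h1 : Tendsto Xk atTop (𝓝 X) := tendsto_iff_norm_sub_tendsto_zero.mpr hconv
    have hcont : Continuous (fun (V : L2 μ) => (inner ℝ V Q : ℝ)) :=
      continuous_id.inner continuous_const
    have hten : Tendsto (fun k => pairing μ (Xk k) Q) atTop (𝓝 (pairing μ X Q)) := by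
      simp_rw [pairing_inner]
      exact (hcont.tendsto X).comp h1
    have hb : ∀ k, pairing μ (Xk k) Q ≤ 0 := by
      intro k
      have := le_trans (hle (Xk k) Q hQ) (hle0 k)
      exact_mod_cast EReal.coe_nonpos.mp (by exact_mod_cast this)
    have : pairing μ X Q ≤ 0 := le_of_tendsto hten (Eventually.of_forall hb)
    exact_mod_cast EReal.coe_nonpos.mpr this
  · -- posHom
    intro X l hl
    have hp : ∀ Q, pairing μ (l • X) Q = l * pairing μ X Q := fun Q => by
      simp_rw [pairing_inner]; exact real_inner_smul_left _ _ _
    have hl' : (0 : EReal) ≤ (l : ℝ) := by exact_mod_cast hl.le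
    refine le_antisymm (iSup₂_le fun Q hQ => ?_) ?_
    · rw [hp, EReal.coe_mul]
      exact mul_le_mul_of_nonneg_left (hle X Q hQ) hl'
    · have h2 : (⨆ Q ∈ S, ((pairing μ X Q : ℝ) : EReal))
          ≤ ((l⁻¹ : ℝ) : EReal) * ⨆ Q ∈ S, ((pairing μ (l • X) Q : ℝ) : EReal) := by
        refine iSup₂_le fun Q hQ => ?_
        have : ((pairing μ X Q : ℝ) : EReal)
            = ((l⁻¹ : ℝ) : EReal) * ((pairing μ (l • X) Q : ℝ) : EReal) := by
          rw [← EReal.coe_mul, hp]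
          congr 1
          field_simp
        rw [this]
        exact mul_le_mul_of_nonneg_left (hle (l • X) Q hQ)
          (by exact_mod_cast (inv_nonneg.mpr hl.le))
      calc ((l : ℝ) : EReal) * ⨆ Q ∈ S, ((pairing μ X Q : ℝ) : EReal)
          ≤ ((l : ℝ) : EReal) * (((l⁻¹ : ℝ) : EReal)
              * ⨆ Q ∈ S, ((pairing μ (l • X) Q : ℝ) : EReal)) :=
            mul_le_mul_of_nonneg_left h2 hl'
        _ = ⨆ Q ∈ S, ((pairing μ (l • X) Q : ℝ) : EReal) := by
            rw [← mul_assoc, ← EReal.coe_mul, mul_inv_cancel₀ hl.ne', EReal.coe_one, one_mul]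

set_option maxHeartbeats 1000000 in
/-- the lsc hull of the inf-convolution of coherent risk measures with risk
envelopes `𝒬ᵢ` is a coherent risk measure with risk envelope `⋂ᵢ 𝒬ᵢ` if and only if
`⋂ᵢ 𝒬ᵢ ≠ ∅`. -/
theorem stmt_4 {n : ℕ} (hn : 0 < n) (ℛ : Fin n → L2 μ → EReal) (𝒬 : Fin n → Set (L2 μ))
    (hcoh : ∀ i, IsCoherent μ (ℛ i))
    (hRE : ∀ i, IsRiskEnvelope μ (𝒬 i))
    (henv : ∀ i, HasEnvelope μ (ℛ i) (𝒬 i)) :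
    (IsCoherent μ (lscHull (infConv μ ℛ)) ∧
      HasEnvelope μ (lscHull (infConv μ ℛ)) (⋂ i, 𝒬 i)) ↔ (⋂ i, 𝒬 i).Nonempty := by
  constructor
  · rintro ⟨hc, he⟩
    by_contra hne
    rw [Set.not_nonempty_iff_eq_empty] at hne
    have h0 := he 0
    rw [hne] at h0
    simp only [Set.mem_empty_iff_false, iSup_false, iSup_bot] at h0
    exact hc.nonbot 0 h0
  · intro hne
    obtain ⟨Q₀, hQ₀⟩ := hne
    have hkey := lscHull_infConv_eq μ hRE henv hQ₀
    have hsub : (⋂ i, 𝒬 i) ⊆ densities μ :=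
      (Set.iInter_subset 𝒬 ⟨0, hn⟩).trans (hRE ⟨0, hn⟩).2.2.2
    constructor
    · rw [hkey]
      exact coh_sup μ _ ⟨Q₀, hQ₀⟩ hsub
    · intro X
      rw [hkey]
end
end

section
/- Let A ∈ Σ with P₀(A) > 0 and set 𝒬_A := {Q ∈ 𝒫 : Q = 0 a.s. on Ω∖A}. Then for every X ∈ L², sup_{Q ∈ 𝒬_A} E[XQ] = inf{a ∈ ℝ : P₀({X > a} ∩ A) = 0}, as an equality in (-∞, +∞] (with the infimum of the empty set equal to +∞); that is, the risk measure X ↦ ess sup_{ω∈A} X(ω) has risk envelope 𝒬_A. -/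
open MeasureTheory Filter Topology

noncomputable section

variable {Ω : Type*} [MeasurableSpace Ω] (μ : Measure Ω) [IsProbabilityMeasure μ]

/-- for a measurable set `A` of positive probability,
`sup_{Q ∈ 𝒬_A} E[XQ] = ess sup_{ω ∈ A} X(ω)`, where
`𝒬_A = {Q ∈ 𝒫 : Q = 0 a.s. on Ω∖A}` and the essential supremum over `A` is
`inf{a ∈ ℝ : P₀({X > a} ∩ A) = 0}` (with `inf ∅ = +∞`), as an equality in `(-∞,+∞]`. -/
theorem stmt_6 (A : Set Ω) (hA : MeasurableSet A) (hpos : 0 < μ A) (X : L2 μ) :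
    (⨆ Q ∈ {Q ∈ densities μ | ∀ᵐ ω ∂μ, ω ∉ A → Q ω = 0},
        ((pairing μ X Q : ℝ) : EReal))
      = sInf {y : EReal | ∃ a : ℝ, y = (a : EReal) ∧ μ ({ω | a < X ω} ∩ A) = 0} := by
  set 𝒬 : Set (L2 μ) := {Q ∈ densities μ | ∀ᵐ ω ∂μ, ω ∉ A → Q ω = 0} with h𝒬
  set S : Set EReal := {y : EReal | ∃ a : ℝ, y = (a : EReal) ∧ μ ({ω | a < X ω} ∩ A) = 0}
    with hS
  have hXmeas : Measurable (⇑X) := (Lp.stronglyMeasurable X).measurable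
  have hXint : Integrable (⇑X) μ := (Lp.memLp X).integrable one_le_two
  have hint : ∀ Q : L2 μ, Integrable (fun ω => X ω * Q ω) μ := by
    intro Q
    have := L2.integrable_inner (𝕜 := ℝ) X Q
    simpa [RCLike.inner_apply, mul_comm] using this
  -- upper bound
  have upper : ∀ Q ∈ 𝒬, ∀ a : ℝ, μ ({ω | a < X ω} ∩ A) = 0 → pairing μ X Q ≤ a := by
    rintro Q ⟨⟨hQ0, hQ1⟩, hQA⟩ a ha
    have hae : ∀ᵐ ω ∂μ, ω ∈ A → X ω ≤ a := by
      have h0 : ∀ᵐ ω ∂μ, ω ∉ ({ω | a < X ω} ∩ A) := by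
        rw [ae_iff]
        simp only [not_not]
        exact ha
      filter_upwards [h0] with ω h hA'
      by_contra h'
      exact h ⟨lt_of_not_ge h', hA'⟩
    have hmono : (fun ω => X ω * Q ω) ≤ᵐ[μ] fun ω => a * Q ω := by
      filter_upwards [hae, hQ0, hQA] with ω h1 h2 h3
      by_cases hω : ω ∈ A
      · exact mul_le_mul_of_nonneg_right (h1 hω) h2
      · simp [h3 hω]
    have hQint : Integrable (⇑Q) μ := (Lp.memLp Q).integrable one_le_two
    calc pairing μ X Q = ∫ ω, X ω * Q ω ∂μ := rfl
      _ ≤ ∫ ω, a * Q ω ∂μ := integral_mono_ae (hint Q) (hQint.const_mul a) hmono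
      _ = a := by rw [integral_const_mul, hQ1, mul_one]
  -- lower bound construction
  have lower : ∀ b : ℝ, μ ({ω | b < X ω} ∩ A) ≠ 0 → ∃ Q ∈ 𝒬, b ≤ pairing μ X Q := by
    intro b hb
    set B : Set Ω := {ω | b < X ω} ∩ A with hB
    have hBmeas : MeasurableSet B := (measurableSet_lt measurable_const hXmeas).inter hA
    have hBfin : μ B ≠ ⊤ := measure_ne_top μ B
    have htpos : 0 < (μ B).toReal := ENNReal.toReal_pos hb hBfin
    set c : ℝ := ((μ B).toReal)⁻¹ with hc
    have hcpos : 0 < c := inv_pos.2 htpos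
    set Q : L2 μ := c • indicatorConstLp 2 hBmeas hBfin (1 : ℝ) with hQ
    have hcoe : ⇑Q =ᵐ[μ] fun ω => c * B.indicator (fun _ => (1 : ℝ)) ω := by
      filter_upwards [Lp.coeFn_smul c (indicatorConstLp 2 hBmeas hBfin (1 : ℝ)),
        indicatorConstLp_coeFn (p := 2) (hs := hBmeas) (hμs := hBfin) (c := (1 : ℝ))]
        with ω h1 h2
      rw [hQ, h1, Pi.smul_apply, h2, smul_eq_mul]
    have hQmem : Q ∈ 𝒬 := by
      refine ⟨⟨?_, ?_⟩, ?_⟩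
      · filter_upwards [hcoe] with ω h
        rw [Pi.zero_apply, h]
        exact mul_nonneg hcpos.le (Set.indicator_nonneg (fun _ _ => zero_le_one) ω)
      · rw [integral_congr_ae hcoe, integral_const_mul, integral_indicator_const _ hBmeas]
        simp only [smul_eq_mul, mul_one]
        exact inv_mul_cancel₀ htpos.ne'
      · filter_upwards [hcoe] with ω h hω
        rw [h, Set.indicator_of_notMem (fun hωB => hω hωB.2), mul_zero]
    refine ⟨Q, hQmem, ?_⟩
    have hpair : pairing μ X Q = c * ∫ ω in B, X ω ∂μ := by
      have heq : (fun ω => X ω * Q ω) =ᵐ[μ] fun ω => c * B.indicator (⇑X) ω := by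
        filter_upwards [hcoe] with ω h
        rw [h]
        by_cases hω : ω ∈ B
        · rw [Set.indicator_of_mem hω, Set.indicator_of_mem hω]
          ring
        · rw [Set.indicator_of_notMem hω, Set.indicator_of_notMem hω]
          ring
      rw [pairing, integral_congr_ae heq, integral_const_mul, integral_indicator hBmeas]
    have hge : b * (μ B).toReal ≤ ∫ ω in B, X ω ∂μ := by
      have := setIntegral_ge_of_const_le_real hBmeas hBfin (fun x hx => le_of_lt hx.1)
        hXint.integrableOn
      exact this
    calc b = c * (b * (μ B).toReal) := by
            rw [hc, mul_comm b, ← mul_assoc, inv_mul_cancel₀ htpos.ne', one_mul]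
      _ ≤ c * ∫ ω in B, X ω ∂μ := by
            exact mul_le_mul_of_nonneg_left hge hcpos.le
      _ = pairing μ X Q := hpair.symm
  -- conclude
  refine le_antisymm ?_ ?_
  · refine le_sInf ?_
    rintro y ⟨a, rfl, ha⟩
    refine iSup₂_le fun Q hQ => ?_
    exact_mod_cast upper Q hQ a ha
  · by_contra h
    push_neg at h
    obtain ⟨b, hb1, hb2⟩ := EReal.exists_between_coe_real h
    have hbS : (b : EReal) ∉ S := fun hm => absurd (sInf_le hm) (not_le.2 hb2)
    have hμb : μ ({ω | b < X ω} ∩ A) ≠ 0 := by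
      intro h0
      exact hbS ⟨b, rfl, h0⟩
    obtain ⟨Q, hQ, hle⟩ := lower b hμb
    have : (b : EReal) ≤ ⨆ Q ∈ 𝒬, ((pairing μ X Q : ℝ) : EReal) :=
      le_trans (by exact_mod_cast hle) (le_iSup₂ (f := fun Q (_ : Q ∈ 𝒬) =>
        ((pairing μ X Q : ℝ) : EReal)) Q hQ)
    exact absurd (lt_of_le_of_lt this hb1) (lt_irrefl _)
end
end

section
/- Let 0 ≤ γ₂ < 1 < γ₁ and X ∈ L². Then inf_{β ∈ ℝ} { β + E[γ₁(X−β)₊ − γ₂(β−X)₊] } = sup{ E[XQ] : Q ∈ L², γ₂ ≤ Q ≤ γ₁ a.s., E[Q] = 1 }, the infimum on the left is attained, and both sides are finite real numbers. (This is the dual representation of the coherent risk measure S_r associated with the optimized certainty equivalent for the piecewise linear function r(t) = γ₁ t₊ − γ₂ (−t)₊.) -/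
open MeasureTheory Filter Topology

noncomputable section

variable {Ω : Type*} [MeasurableSpace Ω] (μ : Measure Ω) [IsProbabilityMeasure μ]

section Stmt7Aux
variable {Ω : Type*} [MeasurableSpace Ω] (μ : Measure Ω) [IsProbabilityMeasure μ]

lemma stmt7_int (γ₁ γ₂ β : ℝ) (X : L2 μ) :
    Integrable (fun ω => γ₁ * max (X ω - β) 0 - γ₂ * max (β - X ω) 0) μ := by
  have hX : Integrable (fun ω => X ω) μ := (Lp.memLp X).integrable one_le_two
  exact (((hX.sub (integrable_const β)).pos_part).const_mul γ₁).sub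
    ((((integrable_const β).sub hX).pos_part).const_mul γ₂)

lemma stmt7_le (γ₁ γ₂ : ℝ) (h2 : 0 ≤ γ₂) (h1 : γ₂ ≤ γ₁) (X : L2 μ) (β : ℝ)
    (Q : L2 μ) (hQb : ∀ᵐ ω ∂μ, γ₂ ≤ Q ω ∧ Q ω ≤ γ₁) (hQ1 : ∫ ω, Q ω ∂μ = 1) :
    (∫ ω, X ω * Q ω ∂μ) ≤ β + ∫ ω, (γ₁ * max (X ω - β) 0 - γ₂ * max (β - X ω) 0) ∂μ := by
  have hX : Integrable (fun ω => X ω) μ := (Lp.memLp X).integrable one_le_two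
  have hQi : Integrable (fun ω => Q ω) μ := (Lp.memLp Q).integrable one_le_two
  have hXQ : Integrable (fun ω => X ω * Q ω) μ := by
    have h := hX.bdd_mul (c := γ₁) (Lp.aestronglyMeasurable Q)
      (hQb.mono fun ω h => by rw [Real.norm_eq_abs, abs_le]; constructor <;> linarith [h.1, h.2])
    simpa [mul_comm] using h
  have hR : Integrable (fun ω => β * Q ω + (γ₁ * max (X ω - β) 0 - γ₂ * max (β - X ω) 0)) μ :=
    (hQi.const_mul β).add (stmt7_int μ γ₁ γ₂ β X)
  have hmono : ∀ᵐ ω ∂μ, X ω * Q ω ≤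
      β * Q ω + (γ₁ * max (X ω - β) 0 - γ₂ * max (β - X ω) 0) := by
    filter_upwards [hQb] with ω hω
    rcases le_total (X ω) β with h | h
    · rw [max_eq_right (by linarith), max_eq_left (by linarith)]
      nlinarith [mul_nonneg (sub_nonneg.2 h) (sub_nonneg.2 hω.1)]
    · rw [max_eq_left (by linarith), max_eq_right (by linarith)]
      nlinarith [mul_nonneg (sub_nonneg.2 h) (sub_nonneg.2 hω.2)]
  calc (∫ ω, X ω * Q ω ∂μ)
      ≤ ∫ ω, (β * Q ω + (γ₁ * max (X ω - β) 0 - γ₂ * max (β - X ω) 0)) ∂μ :=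
        integral_mono_ae hXQ hR hmono
    _ = β + ∫ ω, (γ₁ * max (X ω - β) 0 - γ₂ * max (β - X ω) 0) ∂μ := by
        rw [integral_add (hQi.const_mul β) (stmt7_int μ γ₁ γ₂ β X), integral_const_mul β, hQ1,
          mul_one]

end Stmt7Aux

set_option maxHeartbeats 1000000 in
/-- dual representation of the OCE-type risk measure
`S_r(X) = inf_β {β + E[γ₁(X−β)₊ − γ₂(β−X)₊]}` for `0 ≤ γ₂ < 1 < γ₁`: the infimum is
attained at some `β*`, and the attained value is exactly the (finite) supremum
`sup{E[XQ] : Q ∈ L², γ₂ ≤ Q ≤ γ₁ a.s., E[Q] = 1}`. -/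
theorem stmt_7 (γ₁ γ₂ : ℝ) (h2 : 0 ≤ γ₂) (h21 : γ₂ < 1) (h1 : 1 < γ₁) (X : L2 μ) :
    ∃ βs : ℝ,
      (∀ β : ℝ,
        βs + ∫ ω, (γ₁ * max (X ω - βs) 0 - γ₂ * max (βs - X ω) 0) ∂μ ≤
        β + ∫ ω, (γ₁ * max (X ω - β) 0 - γ₂ * max (β - X ω) 0) ∂μ) ∧
      IsLUB {e : ℝ | ∃ Q : L2 μ, (∀ᵐ ω ∂μ, γ₂ ≤ Q ω ∧ Q ω ≤ γ₁) ∧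
          (∫ ω, Q ω ∂μ) = 1 ∧ e = pairing μ X Q}
        (βs + ∫ ω, (γ₁ * max (X ω - βs) 0 - γ₂ * max (βs - X ω) 0) ∂μ) := by
  classical
  have hgm : Measurable (fun ω => X ω) := (Lp.stronglyMeasurable X).measurable
  have hγγ : (0:ℝ) < γ₁ - γ₂ := by linarith
  set p : ℝ := (γ₁ - 1) / (γ₁ - γ₂) with hp_def
  have hp0 : 0 < p := div_pos (by linarith) hγγ
  have hp1 : p < 1 := (div_lt_one hγγ).2 (by linarith)
  have hpγ : p * (γ₁ - γ₂) = γ₁ - 1 := div_mul_cancel₀ _ (ne_of_gt hγγ)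
  set F : ℝ → ℝ := fun x => (μ {ω | X ω ≤ x}).toReal with hF_def
  have hFmono : Monotone F := fun x y hxy =>
    ENNReal.toReal_mono (measure_ne_top μ _) (measure_mono fun ω hω => le_trans hω hxy)
  set S : Set ℝ := {x : ℝ | p ≤ F x} with hS_def
  -- S is nonempty
  have hSne : S.Nonempty := by
    have hmono : Monotone fun n : ℕ => {ω | X ω ≤ (n:ℝ)} := by
      intro i j hij ω hω
      simp only [Set.mem_setOf_eq] at hω ⊢
      exact le_trans hω (by exact_mod_cast hij)
    have huniv : ⋃ n : ℕ, {ω | X ω ≤ (n:ℝ)} = Set.univ := by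
      ext ω; simp only [Set.mem_iUnion, Set.mem_setOf_eq, Set.mem_univ, iff_true]
      exact exists_nat_ge _
    have h := tendsto_measure_iUnion_atTop (μ := μ) hmono
    rw [huniv, measure_univ] at h
    have h2 : Tendsto (fun n : ℕ => F n) atTop (𝓝 1) := by
      have := (ENNReal.tendsto_toReal ENNReal.one_ne_top).comp h
      simpa [Function.comp_def, hF_def] using this
    obtain ⟨n, hn⟩ := (h2.eventually (eventually_ge_nhds hp1)).exists
    exact ⟨n, hn⟩
  -- S is bounded below
  have hSbdd : BddBelow S := by
    have hanti : Antitone fun n : ℕ => {ω | X ω ≤ -(n:ℝ)} := by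
      intro i j hij ω hω
      simp only [Set.mem_setOf_eq] at hω ⊢
      refine le_trans hω (neg_le_neg ?_)
      exact_mod_cast hij
    have hempty : ⋂ n : ℕ, {ω | X ω ≤ -(n:ℝ)} = (∅ : Set Ω) := by
      ext ω; simp only [Set.mem_iInter, Set.mem_setOf_eq, Set.mem_empty_iff_false, iff_false,
        not_forall, not_le]
      obtain ⟨n, hn⟩ := exists_nat_gt (-(X ω))
      exact ⟨n, by linarith⟩
    have hns : ∀ n : ℕ, NullMeasurableSet {ω | X ω ≤ -(n:ℝ)} μ := fun n =>
      (hgm measurableSet_Iic).nullMeasurableSet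
    have h := tendsto_measure_iInter_atTop (μ := μ) hns hanti ⟨0, measure_ne_top μ _⟩
    rw [hempty, measure_empty] at h
    have h2 : Tendsto (fun n : ℕ => F (-(n:ℝ))) atTop (𝓝 0) := by
      have := (ENNReal.tendsto_toReal ENNReal.zero_ne_top).comp h
      simpa [Function.comp_def, hF_def] using this
    obtain ⟨n, hn⟩ := (h2.eventually (eventually_lt_nhds hp0)).exists
    refine ⟨-(n:ℝ), fun x hx => ?_⟩
    by_contra hc
    push_neg at hc
    exact absurd (le_trans hx (hFmono hc.le)) (not_le.2 hn)
  set βs : ℝ := sInf S with hβs_def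
  -- Claim A : p ≤ F βs
  have claimA : p ≤ F βs := by
    have key : ∀ n : ℕ, p ≤ F (βs + 1/((n:ℝ)+1)) := by
      intro n
      have hpos : (0:ℝ) < 1/((n:ℝ)+1) := by positivity
      obtain ⟨x, hxS, hxlt⟩ := (csInf_lt_iff hSbdd hSne).1
        (lt_add_of_pos_right βs hpos)
      exact le_trans hxS (hFmono hxlt.le)
    have hanti : Antitone fun n : ℕ => {ω | X ω ≤ βs + 1/((n:ℝ)+1)} := by
      intro i j hij ω hω
      simp only [Set.mem_setOf_eq] at hω ⊢
      have : 1/((j:ℝ)+1) ≤ 1/((i:ℝ)+1) := by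
        apply one_div_le_one_div_of_le (by positivity)
        have : (i:ℝ) ≤ j := by exact_mod_cast hij
        linarith
      linarith
    have hiInter : ⋂ n : ℕ, {ω | X ω ≤ βs + 1/((n:ℝ)+1)} = {ω | X ω ≤ βs} := by
      ext ω
      simp only [Set.mem_iInter, Set.mem_setOf_eq]
      constructor
      · intro h
        by_contra hc
        push_neg at hc
        obtain ⟨n, hn⟩ := exists_nat_one_div_lt (show (0:ℝ) < X ω - βs by linarith)
        linarith [h n]
      · intro h n
        have : (0:ℝ) < 1/((n:ℝ)+1) := by positivity
        linarith
    have hns : ∀ n : ℕ, NullMeasurableSet {ω | X ω ≤ βs + 1/((n:ℝ)+1)} μ := fun n =>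
      (hgm measurableSet_Iic).nullMeasurableSet
    have h := tendsto_measure_iInter_atTop (μ := μ) hns hanti ⟨0, measure_ne_top μ _⟩
    rw [hiInter] at h
    have h2 : Tendsto (fun n : ℕ => F (βs + 1/((n:ℝ)+1))) atTop (𝓝 (F βs)) := by
      have := (ENNReal.tendsto_toReal (measure_ne_top μ _)).comp h
      simpa [Function.comp_def, hF_def] using this
    exact ge_of_tendsto' h2 key
  -- Claim B : μ {X < βs} ≤ p
  have claimB : (μ {ω | X ω < βs}).toReal ≤ p := by
    have key : ∀ n : ℕ, F (βs - 1/((n:ℝ)+1)) ≤ p := by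
      intro n
      have hpos : (0:ℝ) < 1/((n:ℝ)+1) := by positivity
      have hnot : βs - 1/((n:ℝ)+1) ∉ S :=
        notMem_of_lt_csInf (by rw [← hβs_def]; linarith) hSbdd
      exact le_of_lt (not_le.1 hnot)
    have hmono : Monotone fun n : ℕ => {ω | X ω ≤ βs - 1/((n:ℝ)+1)} := by
      intro i j hij ω hω
      simp only [Set.mem_setOf_eq] at hω ⊢
      have : 1/((j:ℝ)+1) ≤ 1/((i:ℝ)+1) := by
        apply one_div_le_one_div_of_le (by positivity)
        have : (i:ℝ) ≤ j := by exact_mod_cast hij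
        linarith
      linarith
    have hiUnion : ⋃ n : ℕ, {ω | X ω ≤ βs - 1/((n:ℝ)+1)} = {ω | X ω < βs} := by
      ext ω
      simp only [Set.mem_iUnion, Set.mem_setOf_eq]
      constructor
      · rintro ⟨n, hn⟩
        have : (0:ℝ) < 1/((n:ℝ)+1) := by positivity
        linarith
      · intro h
        obtain ⟨n, hn⟩ := exists_nat_one_div_lt (show (0:ℝ) < βs - X ω by linarith)
        exact ⟨n, by linarith⟩
    have h := tendsto_measure_iUnion_atTop (μ := μ) hmono
    rw [hiUnion] at h
    have h2 : Tendsto (fun n : ℕ => F (βs - 1/((n:ℝ)+1))) atTop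
        (𝓝 ((μ {ω | X ω < βs}).toReal)) := by
      have := (ENNReal.tendsto_toReal (measure_ne_top μ _)).comp h
      simpa [Function.comp_def, hF_def] using this
    exact le_of_tendsto' h2 key
  clear_value βs
  clear hβs_def hS_def hF_def
  -- abbreviations
  set a : ℝ := (μ {ω | βs < X ω}).toReal with ha_def
  set b : ℝ := (μ {ω | X ω < βs}).toReal with hb_def
  set m : ℝ := (μ {ω | X ω = βs}).toReal with hm_def
  have hMs : MeasurableSet {ω | X ω = βs} := hgm (measurableSet_singleton βs)
  have hAs : MeasurableSet {ω | βs < X ω} := measurableSet_lt measurable_const hgm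
  have hBs : MeasurableSet {ω | X ω < βs} := measurableSet_lt hgm measurable_const
  have hFbm : F βs = b + m := by
    have hset : {ω | X ω ≤ βs} = {ω | X ω < βs} ∪ {ω | X ω = βs} := by
      ext ω; simp only [Set.mem_setOf_eq, Set.mem_union]; exact le_iff_lt_or_eq
    have hdisj : Disjoint {ω | X ω < βs} {ω | X ω = βs} :=
      Set.disjoint_left.2 fun ω h1 h2 => absurd h2 (ne_of_lt h1)
    have hme : μ {ω | X ω ≤ βs} = μ {ω | X ω < βs} + μ {ω | X ω = βs} := by
      rw [hset, measure_union hdisj hMs]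
    show (μ {ω | X ω ≤ βs}).toReal = b + m
    rw [hme, ENNReal.toReal_add (measure_ne_top μ _) (measure_ne_top μ _)]
  have hsum1 : F βs + a = 1 := by
    have hcompl : {ω | X ω ≤ βs}ᶜ = {ω | βs < X ω} := by
      ext ω; simp only [Set.mem_compl_iff, Set.mem_setOf_eq, not_le]
    have h := measure_add_measure_compl (μ := μ) (s := {ω | X ω ≤ βs})
      (hgm measurableSet_Iic)
    rw [hcompl, measure_univ] at h
    have := congrArg ENNReal.toReal h
    rw [ENNReal.toReal_add (measure_ne_top μ _) (measure_ne_top μ _), ENNReal.toReal_one] at this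
    exact this
  have habm : a + b + m = 1 := by rw [hFbm] at hsum1; linarith
  have hbm_ge : p ≤ b + m := by rw [← hFbm]; exact claimA
  have hb_le : b ≤ p := claimB
  have hm0 : 0 ≤ m := ENNReal.toReal_nonneg
  clear_value a b m
  -- key inequalities
  have hI1 : γ₁ * a + γ₂ * (b + m) ≤ 1 := by
    nlinarith [mul_nonneg (sub_nonneg.2 hbm_ge) (le_of_lt hγγ)]
  have hI2 : 1 ≤ γ₁ * (a + m) + γ₂ * b := by
    nlinarith [mul_nonneg (sub_nonneg.2 hb_le) (le_of_lt hγγ)]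
  -- the middle value c
  set c : ℝ := if m = 0 then γ₂ else (1 - γ₁*a - γ₂*b)/m with hc_def
  have hc2 : γ₂ ≤ c := by
    rw [hc_def]; split_ifs with h
    · exact le_refl _
    · have hm : 0 < m := lt_of_le_of_ne hm0 (Ne.symm h)
      rw [le_div_iff₀ hm]; nlinarith
  have hc1 : c ≤ γ₁ := by
    rw [hc_def]; split_ifs with h
    · linarith
    · have hm : 0 < m := lt_of_le_of_ne hm0 (Ne.symm h)
      rw [div_le_iff₀ hm]; nlinarith
  have hcm : c * m = 1 - γ₁*a - γ₂*b := by
    rw [hc_def]; split_ifs with h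
    · rw [h] at hI1 hI2 ⊢
      nlinarith
    · exact div_mul_cancel₀ _ h
  -- the dual optimizer
  clear_value c
  set Qf : Ω → ℝ := fun ω => if βs < X ω then γ₁ else if X ω < βs then γ₂ else c with hQf_def
  have hQfm : Measurable Qf :=
    Measurable.ite hAs measurable_const
      (Measurable.ite hBs measurable_const measurable_const)
  have hQfb : ∀ ω, γ₂ ≤ Qf ω ∧ Qf ω ≤ γ₁ := by
    intro ω
    simp only [hQf_def]
    split_ifs <;> constructor <;> linarith
  have hQfmem : MemLp Qf 2 μ := by
    refine MemLp.of_bound hQfm.aestronglyMeasurable γ₁ (Filter.Eventually.of_forall fun ω => ?_)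
    rw [Real.norm_eq_abs, abs_le]
    exact ⟨by linarith [(hQfb ω).1], (hQfb ω).2⟩
  have hQfi : Integrable Qf μ := hQfmem.integrable one_le_two
  -- integral of Qf is 1
  have hQf_eq : Qf = fun ω =>
      Set.indicator {ω | βs < X ω} (fun _ => γ₁) ω +
      Set.indicator {ω | X ω < βs} (fun _ => γ₂) ω +
      Set.indicator {ω | X ω = βs} (fun _ => c) ω := by
    funext ω
    simp only [hQf_def]
    rcases lt_trichotomy βs (X ω) with h | h | h
    · rw [if_pos h, Set.indicator_of_mem (show ω ∈ {ω | βs < X ω} from h),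
        Set.indicator_of_notMem (show ω ∉ {ω | X ω < βs} from fun hc => lt_asymm h hc),
        Set.indicator_of_notMem (show ω ∉ {ω | X ω = βs} from fun hc => (ne_of_gt h) hc)]
      ring
    · rw [if_neg (show ¬ βs < X ω from h ▸ lt_irrefl βs),
        if_neg (show ¬ X ω < βs from h ▸ lt_irrefl βs),
        Set.indicator_of_notMem (show ω ∉ {ω | βs < X ω} from h ▸ lt_irrefl βs),
        Set.indicator_of_notMem (show ω ∉ {ω | X ω < βs} from h ▸ lt_irrefl βs),
        Set.indicator_of_mem (show ω ∈ {ω | X ω = βs} from h.symm)]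
      ring
    · rw [if_neg (show ¬ βs < X ω from lt_asymm h), if_pos h,
        Set.indicator_of_notMem (show ω ∉ {ω | βs < X ω} from lt_asymm h),
        Set.indicator_of_mem (show ω ∈ {ω | X ω < βs} from h),
        Set.indicator_of_notMem (show ω ∉ {ω | X ω = βs} from ne_of_lt h)]
      ring
  have hiA : Integrable (fun ω => Set.indicator {ω | βs < X ω} (fun _ => γ₁) ω) μ :=
    (integrable_const γ₁).indicator hAs
  have hiB : Integrable (fun ω => Set.indicator {ω | X ω < βs} (fun _ => γ₂) ω) μ :=
    (integrable_const γ₂).indicator hBs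
  have hiM : Integrable (fun ω => Set.indicator {ω | X ω = βs} (fun _ => c) ω) μ :=
    (integrable_const c).indicator hMs
  have hiAB : Integrable (fun ω => Set.indicator {ω | βs < X ω} (fun _ => γ₁) ω +
      Set.indicator {ω | X ω < βs} (fun _ => γ₂) ω) μ := hiA.add hiB
  have hQfint1 : ∫ ω, Qf ω ∂μ = 1 := by
    rw [hQf_eq]
    rw [integral_add hiAB hiM, integral_add hiA hiB,
      integral_indicator_const _ hAs, integral_indicator_const _ hBs,
      integral_indicator_const _ hMs]
    simp only [smul_eq_mul, measureReal_def, ← ha_def, ← hb_def, ← hm_def]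
    linear_combination hcm
  -- pairing identity
  have hpoint : ∀ ω, X ω * Qf ω =
      βs * Qf ω + (γ₁ * max (X ω - βs) 0 - γ₂ * max (βs - X ω) 0) := by
    intro ω
    simp only [hQf_def]
    rcases lt_trichotomy βs (X ω) with h | h | h
    · rw [if_pos h, max_eq_left (by linarith), max_eq_right (by linarith)]; ring
    · rw [if_neg (show ¬ βs < X ω from h ▸ lt_irrefl βs),
        if_neg (show ¬ X ω < βs from h ▸ lt_irrefl βs), ← h, sub_self, max_self]
      ring
    · rw [if_neg (show ¬ βs < X ω from lt_asymm h), if_pos h, max_eq_right (by linarith),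
        max_eq_left (by linarith)]
      ring
  clear_value Qf
  have hpairQf : ∫ ω, X ω * Qf ω ∂μ =
      βs + ∫ ω, (γ₁ * max (X ω - βs) 0 - γ₂ * max (βs - X ω) 0) ∂μ := by
    rw [show (fun ω => X ω * Qf ω) = fun ω =>
        βs * Qf ω + (γ₁ * max (X ω - βs) 0 - γ₂ * max (βs - X ω) 0) from funext hpoint]
    rw [integral_add (hQfi.const_mul βs) (stmt7_int μ γ₁ γ₂ βs X), integral_const_mul βs,
      hQfint1, mul_one]
  -- pass to the L2 element
  set Q : L2 μ := hQfmem.toLp Qf with hQ_def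
  have hQae : ⇑Q =ᵐ[μ] Qf := hQfmem.coeFn_toLp
  clear_value Q
  have hQb : ∀ᵐ ω ∂μ, γ₂ ≤ Q ω ∧ Q ω ≤ γ₁ := by
    filter_upwards [hQae] with ω h
    rw [h]; exact hQfb ω
  have hQ1 : ∫ ω, Q ω ∂μ = 1 := by rw [integral_congr_ae hQae, hQfint1]
  have hpairQ : pairing μ X Q =
      βs + ∫ ω, (γ₁ * max (X ω - βs) 0 - γ₂ * max (βs - X ω) 0) ∂μ := by
    have heq : (fun ω => X ω * Q ω) =ᵐ[μ] fun ω => X ω * Qf ω := by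
      filter_upwards [hQae] with ω h
      rw [h]
    rw [pairing, integral_congr_ae heq, hpairQf]
  refine ⟨βs, fun β => ?_, ?_, ?_⟩
  · rw [← hpairQ]
    exact stmt7_le μ γ₁ γ₂ h2 (by linarith) X β Q hQb hQ1
  · rintro e ⟨Q', hQ'b, hQ'1, rfl⟩
    exact stmt7_le μ γ₁ γ₂ h2 (by linarith) X βs Q' hQ'b hQ'1
  · intro bnd hbnd
    rw [← hpairQ]
    exact hbnd ⟨Q, hQb, hQ1, rfl⟩
end
end

section
/- Let 0 ≤ γ₂ < 1 < γ₁, X ∈ L², and let F(ζ) := P₀(X ≤ ζ) be the cumulative distribution function of X. Then the set {ζ ∈ ℝ : F(ζ) ≥ (γ₁−1)/(γ₁−γ₂)} has a minimum β*, and β* minimizes the function g(β) := β + E[γ₁(X−β)₊ − γ₂(β−X)₊] over β ∈ ℝ, i.e. g(β*) = inf_{β ∈ ℝ} g(β). -/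
open MeasureTheory Filter Topology

noncomputable section

variable {Ω : Type*} [MeasurableSpace Ω] (μ : Measure Ω) [IsProbabilityMeasure μ]

lemma aux1 (γ₁ γ₂ b c x : ℝ) (h0 : 0 ≤ γ₂) (hg : γ₂ ≤ γ₁) (hbc : c ≤ b) :
    (if x ≤ c then (1-γ₂)*(b-c) else (1-γ₁)*(b-c)) ≤
      (b - c) + ((γ₁ * max (x - b) 0 - γ₂ * max (b - x) 0)
        - (γ₁ * max (x - c) 0 - γ₂ * max (c - x) 0)) := by
  rcases le_or_gt x c with h | h
  · rw [if_pos h, max_eq_right (by linarith : x - b ≤ 0),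
      max_eq_left (by linarith : 0 ≤ b - x), max_eq_right (by linarith : x - c ≤ 0),
      max_eq_left (by linarith : 0 ≤ c - x)]
    nlinarith
  · rw [if_neg (not_le.2 h), max_eq_left (by linarith : 0 ≤ x - c),
      max_eq_right (by linarith : c - x ≤ 0)]
    rcases le_or_gt x b with h' | h'
    · rw [max_eq_right (by linarith : x - b ≤ 0), max_eq_left (by linarith : 0 ≤ b - x)]
      nlinarith
    · rw [max_eq_left (by linarith : 0 ≤ x - b), max_eq_right (by linarith : b - x ≤ 0)]
      nlinarith

lemma aux2 (γ₁ γ₂ b c x : ℝ) (h0 : 0 ≤ γ₂) (hg : γ₂ ≤ γ₁) (hbc : b ≤ c) :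
    (if x < c then (γ₂-1)*(c-b) else (γ₁-1)*(c-b)) ≤
      (b - c) + ((γ₁ * max (x - b) 0 - γ₂ * max (b - x) 0)
        - (γ₁ * max (x - c) 0 - γ₂ * max (c - x) 0)) := by
  rcases lt_or_ge x c with h | h
  · rw [if_pos h, max_eq_right (by linarith : x - c ≤ 0),
      max_eq_left (by linarith : 0 ≤ c - x)]
    rcases le_or_gt x b with h' | h'
    · rw [max_eq_right (by linarith : x - b ≤ 0), max_eq_left (by linarith : 0 ≤ b - x)]
      nlinarith
    · rw [max_eq_left (by linarith : 0 ≤ x - b), max_eq_right (by linarith : b - x ≤ 0)]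
      nlinarith
  · rw [if_neg (not_lt.2 h), max_eq_left (by linarith : 0 ≤ x - c),
      max_eq_right (by linarith : c - x ≤ 0), max_eq_left (by linarith : 0 ≤ x - b),
      max_eq_right (by linarith : b - x ≤ 0)]
    nlinarith

/-- the set `{ζ : F(ζ) ≥ (γ₁−1)/(γ₁−γ₂)}` (with `F` the cdf of `X`) has a
minimum `β*`, and `β*` minimizes `β ↦ β + E[γ₁(X−β)₊ − γ₂(β−X)₊]` over `ℝ`. -/
theorem stmt_8 (γ₁ γ₂ : ℝ) (h2 : 0 ≤ γ₂) (h21 : γ₂ < 1) (h1 : 1 < γ₁) (X : L2 μ) :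
    ∃ βs : ℝ,
      IsLeast {ζ : ℝ | (γ₁ - 1) / (γ₁ - γ₂) ≤ (μ {ω | X ω ≤ ζ}).toReal} βs ∧
      ∀ β : ℝ,
        βs + ∫ ω, (γ₁ * max (X ω - βs) 0 - γ₂ * max (βs - X ω) 0) ∂μ ≤
        β + ∫ ω, (γ₁ * max (X ω - β) 0 - γ₂ * max (β - X ω) 0) ∂μ := by

  have hXm : Measurable (⇑X) := (Lp.stronglyMeasurable X).measurable
  have hγ : γ₂ < γ₁ := h21.trans h1
  set τ : ℝ := (γ₁ - 1) / (γ₁ - γ₂) with hτdef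
  have hτpos : 0 < τ := div_pos (by linarith) (by linarith)
  have hτlt : τ < 1 := (div_lt_one (by linarith)).2 (by linarith)
  have hτeq : τ * (γ₁ - γ₂) = γ₁ - 1 := div_mul_cancel₀ _ (by linarith)
  set S : Set ℝ := {ζ : ℝ | τ ≤ (μ {ω | X ω ≤ ζ}).toReal} with hSdef
  have hmeas : ∀ t : ℝ, MeasurableSet {ω | X ω ≤ t} := fun t => hXm measurableSet_Iic
  have hFmono : ∀ s t : ℝ, s ≤ t →
      (μ {ω | X ω ≤ s}).toReal ≤ (μ {ω | X ω ≤ t}).toReal := fun s t hst =>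
    ENNReal.toReal_mono (measure_ne_top μ _)
      (measure_mono fun ω hω => le_trans hω hst)
  -- S is upward closed
  have hup : ∀ s t : ℝ, s ≤ t → s ∈ S → t ∈ S := fun s t hst hs =>
    le_trans hs (hFmono s t hst)
  -- S is nonempty
  have hSne : S.Nonempty := by
    have hmono : Monotone (fun n : ℕ => {ω | X ω ≤ (n : ℝ)}) := by
      intro n m hnm ω hω
      simp only [Set.mem_setOf_eq] at hω ⊢
      exact le_trans hω (Nat.cast_le.2 hnm)
    have hU : (⋃ n : ℕ, {ω | X ω ≤ (n : ℝ)}) = Set.univ := by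
      ext ω; simp only [Set.mem_iUnion, Set.mem_univ, iff_true]
      exact (exists_nat_ge (X ω)).imp fun n hn => hn
    have ht := tendsto_measure_iUnion_atTop (μ := μ) hmono
    rw [hU, measure_univ] at ht
    have hlt : ENNReal.ofReal τ < 1 := ENNReal.ofReal_lt_one.2 hτlt
    obtain ⟨n, hn⟩ := (ht.eventually_const_lt hlt).exists
    refine ⟨(n : ℝ), ?_⟩
    exact (ENNReal.ofReal_le_iff_le_toReal (measure_ne_top μ _)).1 hn.le
  -- S is bounded below
  have hSbdd : BddBelow S := by
    have hanti : Antitone (fun n : ℕ => {ω | X ω ≤ -(n : ℝ)}) := by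
      intro n m hnm ω hω
      simp only [Set.mem_setOf_eq] at hω ⊢
      exact le_trans hω (neg_le_neg (Nat.cast_le.2 hnm))
    have hI : (⋂ n : ℕ, {ω | X ω ≤ -(n : ℝ)}) = ∅ := by
      ext ω
      simp only [Set.mem_iInter, Set.mem_setOf_eq, Set.mem_empty_iff_false, iff_false,
        not_forall, not_le]
      obtain ⟨n, hn⟩ := exists_nat_gt (-(X ω))
      exact ⟨n, by linarith⟩
    have ht := tendsto_measure_iInter_atTop (μ := μ)
      (fun n => (hmeas _).nullMeasurableSet) hanti ⟨0, measure_ne_top μ _⟩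
    rw [hI, measure_empty] at ht
    have h0τ : (0 : ENNReal) < ENNReal.ofReal τ := ENNReal.ofReal_pos.2 hτpos
    obtain ⟨n, hn⟩ := (ht.eventually_lt_const h0τ).exists
    refine ⟨-(n : ℝ), fun ζ hζ => ?_⟩
    by_contra hc
    push_neg at hc
    have : (μ {ω | X ω ≤ ζ}).toReal < τ :=
      lt_of_le_of_lt (hFmono ζ (-(n:ℝ)) hc.le) (ENNReal.toReal_lt_of_lt_ofReal hn)
    exact absurd hζ (not_le.2 this)
  set βs : ℝ := sInf S with hβsdef
  -- βs ∈ S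
  have hβsS : βs ∈ S := by
    have hanti : Antitone (fun n : ℕ => {ω | X ω ≤ βs + 1 / ((n : ℝ) + 1)}) := by
      intro n m hnm ω hω
      have : 1 / ((m : ℝ) + 1) ≤ 1 / ((n : ℝ) + 1) :=
        one_div_le_one_div_of_le (by positivity) (by exact_mod_cast by linarith [hnm])
      simp only [Set.mem_setOf_eq] at hω ⊢
      exact le_trans hω (by linarith)
    have hI : (⋂ n : ℕ, {ω | X ω ≤ βs + 1 / ((n : ℝ) + 1)}) = {ω | X ω ≤ βs} := by
      ext ω
      simp only [Set.mem_iInter, Set.mem_setOf_eq]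
      constructor
      · intro h
        by_contra hc
        push_neg at hc
        obtain ⟨n, hn⟩ := exists_nat_one_div_lt (sub_pos.2 hc)
        have := h n
        linarith
      · intro h n
        have : (0:ℝ) < 1 / ((n : ℝ) + 1) := by positivity
        linarith
    have ht := tendsto_measure_iInter_atTop (μ := μ)
      (fun n => (hmeas _).nullMeasurableSet) hanti ⟨0, measure_ne_top μ _⟩
    rw [hI] at ht
    have hmem : ∀ n : ℕ, ENNReal.ofReal τ ≤ μ {ω | X ω ≤ βs + 1 / ((n : ℝ) + 1)} := by
      intro n
      have hpos : (0:ℝ) < 1 / ((n : ℝ) + 1) := by positivity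
      have : βs + 1 / ((n : ℝ) + 1) ∈ S := by
        obtain ⟨ζ, hζS, hζlt⟩ := (csInf_lt_iff hSbdd hSne).1 (by linarith : sInf S < βs + 1 / ((n : ℝ) + 1))
        exact hup ζ _ hζlt.le hζS
      exact (ENNReal.ofReal_le_iff_le_toReal (measure_ne_top μ _)).2 this
    have := le_of_tendsto_of_tendsto' tendsto_const_nhds ht hmem
    exact (ENNReal.ofReal_le_iff_le_toReal (measure_ne_top μ _)).1 this
  have hLeast : IsLeast S βs := ⟨hβsS, fun ζ hζ => csInf_le hSbdd hζ⟩
  -- P(X < βs) ≤ τ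
  have hstrict : (μ {ω | X ω < βs}).toReal ≤ τ := by
    have hmono : Monotone (fun n : ℕ => {ω | X ω ≤ βs - 1 / ((n : ℝ) + 1)}) := by
      intro n m hnm ω hω
      have : 1 / ((m : ℝ) + 1) ≤ 1 / ((n : ℝ) + 1) :=
        one_div_le_one_div_of_le (by positivity) (by exact_mod_cast by linarith [hnm])
      simp only [Set.mem_setOf_eq] at hω ⊢
      exact le_trans hω (by linarith)
    have hU : (⋃ n : ℕ, {ω | X ω ≤ βs - 1 / ((n : ℝ) + 1)}) = {ω | X ω < βs} := by
      ext ω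
      simp only [Set.mem_iUnion, Set.mem_setOf_eq]
      constructor
      · rintro ⟨n, hn⟩
        have : (0:ℝ) < 1 / ((n : ℝ) + 1) := by positivity
        linarith
      · intro h
        obtain ⟨n, hn⟩ := exists_nat_one_div_lt (sub_pos.2 h)
        exact ⟨n, by linarith⟩
    have ht := tendsto_measure_iUnion_atTop (μ := μ) hmono
    rw [hU] at ht
    have hle : ∀ n : ℕ, μ {ω | X ω ≤ βs - 1 / ((n : ℝ) + 1)} ≤ ENNReal.ofReal τ := by
      intro n
      have hpos : (0:ℝ) < 1 / ((n : ℝ) + 1) := by positivity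
      have hnot : βs - 1 / ((n : ℝ) + 1) ∉ S := fun hc =>
        absurd (csInf_le hSbdd hc) (by push_neg; linarith)
      have : (μ {ω | X ω ≤ βs - 1 / ((n : ℝ) + 1)}).toReal < τ := not_le.1 hnot
      exact (ENNReal.le_ofReal_iff_toReal_le (measure_ne_top μ _) hτpos.le).2 this.le
    have := le_of_tendsto_of_tendsto' ht tendsto_const_nhds hle
    exact (ENNReal.le_ofReal_iff_toReal_le (measure_ne_top μ _) hτpos.le).1 this
  -- integrability
  have hXint : Integrable (⇑X) μ := (Lp.memLp X).integrable one_le_two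
  have hGint : ∀ b : ℝ,
      Integrable (fun ω => γ₁ * max (X ω - b) 0 - γ₂ * max (b - X ω) 0) μ := by
    intro b
    exact (((hXint.sub (integrable_const b)).pos_part).const_mul γ₁).sub
      ((((integrable_const b).sub hXint).pos_part).const_mul γ₂)
  refine ⟨βs, hLeast, fun β => ?_⟩
  have hFβs : τ ≤ (μ {ω | X ω ≤ βs}).toReal := hβsS
  rcases le_or_gt βs β with hcase | hcase
  · -- β ≥ βs
    set A : Set Ω := {ω | X ω ≤ βs} with hAdef
    set φ : Ω → ℝ := fun ω =>
      (1-γ₁)*(β-βs) + A.indicator (fun _ => (γ₁-γ₂)*(β-βs)) ω with hφdef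
    have hφint : Integrable φ μ :=
      (integrable_const _).add ((integrable_const _).indicator (hmeas βs))
    have hpt : ∀ ω, φ ω ≤ (β - βs) + ((γ₁ * max (X ω - β) 0 - γ₂ * max (β - X ω) 0)
        - (γ₁ * max (X ω - βs) 0 - γ₂ * max (βs - X ω) 0)) := by
      intro ω
      have := aux1 γ₁ γ₂ β βs (X ω) h2 hγ.le hcase
      simp only [hφdef, Set.indicator_apply, hAdef, Set.mem_setOf_eq]
      split_ifs with h
      · rw [if_pos h] at this; linarith
      · rw [if_neg h] at this; linarith
    have hint2 : Integrable (fun ω => (β - βs) +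
        ((γ₁ * max (X ω - β) 0 - γ₂ * max (β - X ω) 0)
        - (γ₁ * max (X ω - βs) 0 - γ₂ * max (βs - X ω) 0))) μ :=
      (integrable_const _).add ((hGint β).sub (hGint βs))
    have hmono := integral_mono hφint hint2 hpt
    have hφval : ∫ ω, φ ω ∂μ
        = (1-γ₁)*(β-βs) + (μ A).toReal * ((γ₁-γ₂)*(β-βs)) := by
      rw [hφdef, integral_add (integrable_const _)
        ((integrable_const _).indicator (hmeas βs)), integral_const,
        integral_indicator_const _ (hmeas βs)]
      simp [Measure.real, hAdef]
    have hφpos : 0 ≤ ∫ ω, φ ω ∂μ := by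
      rw [hφval]
      have key : 0 ≤ ((μ A).toReal - τ) * ((γ₁ - γ₂) * (β - βs)) :=
        mul_nonneg (sub_nonneg.2 hFβs)
          (mul_nonneg (by linarith) (sub_nonneg.2 hcase))
      have h3 := congrArg (· * (β - βs)) hτeq
      nlinarith [key, h3]
    have hrhs : ∫ ω, ((β - βs) +
        ((γ₁ * max (X ω - β) 0 - γ₂ * max (β - X ω) 0)
        - (γ₁ * max (X ω - βs) 0 - γ₂ * max (βs - X ω) 0))) ∂μ
        = (β - βs) + ((∫ ω, (γ₁ * max (X ω - β) 0 - γ₂ * max (β - X ω) 0) ∂μ)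
          - ∫ ω, (γ₁ * max (X ω - βs) 0 - γ₂ * max (βs - X ω) 0) ∂μ) := by
      have hGsub : Integrable (fun ω => (γ₁ * max (X ω - β) 0 - γ₂ * max (β - X ω) 0)
          - (γ₁ * max (X ω - βs) 0 - γ₂ * max (βs - X ω) 0)) μ :=
        (hGint β).sub (hGint βs)
      rw [integral_add (integrable_const _) hGsub,
        integral_sub (hGint β) (hGint βs), integral_const]
      simp
    rw [hrhs] at hmono
    linarith [le_trans hφpos hmono]
  · -- β < βs
    set B : Set Ω := {ω | X ω < βs} with hBdef
    have hBmeas : MeasurableSet B := hXm measurableSet_Iio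
    set φ : Ω → ℝ := fun ω =>
      (γ₁-1)*(βs-β) + B.indicator (fun _ => (γ₂-γ₁)*(βs-β)) ω with hφdef
    have hφint : Integrable φ μ :=
      (integrable_const _).add ((integrable_const _).indicator hBmeas)
    have hpt : ∀ ω, φ ω ≤ (β - βs) + ((γ₁ * max (X ω - β) 0 - γ₂ * max (β - X ω) 0)
        - (γ₁ * max (X ω - βs) 0 - γ₂ * max (βs - X ω) 0)) := by
      intro ω
      have := aux2 γ₁ γ₂ β βs (X ω) h2 hγ.le hcase.le
      simp only [hφdef, Set.indicator_apply, hBdef, Set.mem_setOf_eq]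
      split_ifs with h
      · rw [if_pos h] at this; linarith
      · rw [if_neg h] at this; linarith
    have hint2 : Integrable (fun ω => (β - βs) +
        ((γ₁ * max (X ω - β) 0 - γ₂ * max (β - X ω) 0)
        - (γ₁ * max (X ω - βs) 0 - γ₂ * max (βs - X ω) 0))) μ :=
      (integrable_const _).add ((hGint β).sub (hGint βs))
    have hmono := integral_mono hφint hint2 hpt
    have hφval : ∫ ω, φ ω ∂μ
        = (γ₁-1)*(βs-β) + (μ B).toReal * ((γ₂-γ₁)*(βs-β)) := by
      rw [hφdef, integral_add (integrable_const _)
        ((integrable_const _).indicator hBmeas), integral_const,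
        integral_indicator_const _ hBmeas]
      simp [Measure.real]
    have hφpos : 0 ≤ ∫ ω, φ ω ∂μ := by
      rw [hφval]
      have key : 0 ≤ (τ - (μ B).toReal) * ((γ₁ - γ₂) * (βs - β)) :=
        mul_nonneg (sub_nonneg.2 hstrict)
          (mul_nonneg (by linarith) (by linarith))
      have h3 := congrArg (· * (βs - β)) hτeq
      nlinarith [key, h3]
    have hrhs : ∫ ω, ((β - βs) +
        ((γ₁ * max (X ω - β) 0 - γ₂ * max (β - X ω) 0)
        - (γ₁ * max (X ω - βs) 0 - γ₂ * max (βs - X ω) 0))) ∂μ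
        = (β - βs) + ((∫ ω, (γ₁ * max (X ω - β) 0 - γ₂ * max (β - X ω) 0) ∂μ)
          - ∫ ω, (γ₁ * max (X ω - βs) 0 - γ₂ * max (βs - X ω) 0) ∂μ) := by
      have hGsub : Integrable (fun ω => (γ₁ * max (X ω - β) 0 - γ₂ * max (β - X ω) 0)
          - (γ₁ * max (X ω - βs) 0 - γ₂ * max (βs - X ω) 0)) μ :=
        (hGint β).sub (hGint βs)
      rw [integral_add (integrable_const _) hGsub,
        integral_sub (hGint β) (hGint βs), integral_const]
      simp
    rw [hrhs] at hmono
    linarith [le_trans hφpos hmono]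
end
end

section
/- Let α ∈ (0,1) and X ∈ L². Then CVaR_α(X) := inf_{β ∈ ℝ} { β + (1−α)⁻¹ E[(X−β)₊] } satisfies CVaR_α(X) = sup{ E[XQ] : Q ∈ L², 0 ≤ Q ≤ (1−α)⁻¹ a.s., E[Q] = 1 }, and the infimum defining CVaR_α(X) is attained. -/
open MeasureTheory Filter Topology

noncomputable section

variable {Ω : Type*} [MeasurableSpace Ω] (μ : Measure Ω) [IsProbabilityMeasure μ]

set_option linter.unusedSectionVars false in
theorem key_ub (c : ℝ) (hc : 0 ≤ c) (g q : Ω → ℝ) (hg : Integrable g μ)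
    (hqm : AEStronglyMeasurable q μ)
    (hq0 : ∀ᵐ ω ∂μ, 0 ≤ q ω ∧ q ω ≤ c) (hqi : ∫ ω, q ω ∂μ = 1) (β : ℝ) :
    ∫ ω, g ω * q ω ∂μ ≤ β + c * ∫ ω, max (g ω - β) 0 ∂μ := by
  have hmax : Integrable (fun ω => max (g ω - β) 0) μ :=
    (hg.sub (integrable_const β)).sup (integrable_const 0)
  have hq : Integrable q μ := by
    refine Integrable.mono' (integrable_const c) hqm ?_
    filter_upwards [hq0] with ω ⟨h1, h2⟩
    rw [Real.norm_eq_abs, abs_of_nonneg h1]; exact h2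
  have hmul : ∀ f : Ω → ℝ, Integrable f μ → Integrable (fun ω => f ω * q ω) μ := by
    intro f hf
    refine Integrable.mono' (hf.abs.const_mul c) (hf.aestronglyMeasurable.mul hqm) ?_
    filter_upwards [hq0] with ω ⟨h1, h2⟩
    rw [Real.norm_eq_abs, abs_mul, mul_comm]
    exact mul_le_mul_of_nonneg_right (by rw [abs_of_nonneg h1]; exact h2) (abs_nonneg _)
  have hgq := hmul g hg
  have hsq := hmul (fun ω => g ω - β) (hg.sub (integrable_const β))
  have key : ∫ ω, (g ω - β) * q ω ∂μ ≤ ∫ ω, c * max (g ω - β) 0 ∂μ := by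
    refine integral_mono_ae hsq (hmax.const_mul c) ?_
    filter_upwards [hq0] with ω ⟨h1, h2⟩
    rcases le_or_gt (g ω) β with h | h
    · have h3 : (g ω - β) * q ω ≤ 0 := mul_nonpos_of_nonpos_of_nonneg (by linarith) h1
      have h4 : 0 ≤ c * max (g ω - β) 0 := mul_nonneg hc (le_max_right _ _)
      linarith
    · rw [max_eq_left (by linarith : (0:ℝ) ≤ g ω - β)]
      nlinarith
  have expand : ∫ ω, g ω * q ω ∂μ = ∫ ω, (g ω - β) * q ω ∂μ + β := by
    have : ∫ ω, (g ω - β) * q ω ∂μ = ∫ ω, g ω * q ω ∂μ - β * ∫ ω, q ω ∂μ := by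
      rw [← integral_const_mul, ← integral_sub hgq (hq.const_mul β)]
      congr 1; ext ω; ring
    rw [this, hqi]; ring
  rw [expand, integral_const_mul] at *
  linarith

set_option linter.unusedSectionVars false in
theorem quantile_ex (α : ℝ) (h0 : 0 < α) (h1 : α < 1) (g : Ω → ℝ) (hgm : Measurable g) :
    ∃ βs : ℝ, ENNReal.ofReal α ≤ μ {ω | g ω ≤ βs} ∧ μ {ω | g ω < βs} ≤ ENNReal.ofReal α := by
  set a := ENNReal.ofReal α with ha
  have ha1 : a < 1 := by
    rw [ha, ← ENNReal.ofReal_one]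
    exact (ENNReal.ofReal_lt_ofReal_iff one_pos).2 h1
  have ha0 : 0 < a := ENNReal.ofReal_pos.2 h0
  have hmbl : ∀ r : ℝ, MeasurableSet {ω | g ω ≤ r} := fun r => hgm measurableSet_Iic
  set S := {β : ℝ | a ≤ μ {ω | g ω ≤ β}} with hS
  -- S nonempty
  have hne : S.Nonempty := by
    have hmono : Monotone (fun n : ℕ => {ω | g ω ≤ (n : ℝ)}) := by
      intro i j hij ω hω
      simp only [Set.mem_setOf_eq] at hω ⊢
      exact le_trans hω (by exact_mod_cast hij)
    have hun : ⋃ n : ℕ, {ω | g ω ≤ (n : ℝ)} = Set.univ := by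
      ext ω; simp only [Set.mem_iUnion, Set.mem_univ, iff_true, Set.mem_setOf_eq]
      obtain ⟨n, hn⟩ := exists_nat_ge (g ω)
      exact ⟨n, hn⟩
    have htend := tendsto_measure_iUnion_atTop (μ := μ) hmono
    rw [hun] at htend
    simp only [measure_univ] at htend
    obtain ⟨n, hn⟩ := (htend.eventually (eventually_gt_nhds ha1)).exists
    exact ⟨n, hn.le⟩
  -- S bounded below
  have hbdd : BddBelow S := by
    have hanti : Antitone (fun n : ℕ => {ω | g ω ≤ -(n : ℝ)}) := by
      intro i j hij ω hω
      simp only [Set.mem_setOf_eq] at hω ⊢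
      refine le_trans hω (neg_le_neg ?_)
      exact_mod_cast hij
    have hint : ⋂ n : ℕ, {ω | g ω ≤ -(n : ℝ)} = ∅ := by
      ext ω; simp only [Set.mem_iInter, Set.mem_empty_iff_false, iff_false, Set.mem_setOf_eq]
      push_neg
      obtain ⟨n, hn⟩ := exists_nat_gt (-(g ω))
      exact ⟨n, by linarith⟩
    have htend := tendsto_measure_iInter_atTop (μ := μ)
      (s := fun n : ℕ => {ω | g ω ≤ -(n : ℝ)})
      (fun n => (hmbl _).nullMeasurableSet) hanti ⟨0, measure_ne_top _ _⟩
    rw [hint] at htend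
    simp only [measure_empty] at htend
    obtain ⟨n, hn⟩ := (htend.eventually (eventually_lt_nhds ha0)).exists
    refine ⟨-(n:ℝ), fun β hβ => ?_⟩
    by_contra hlt
    push_neg at hlt
    have hle : μ {ω | g ω ≤ β} ≤ μ {ω | g ω ≤ -(n:ℝ)} :=
      measure_mono (fun ω hω => le_trans hω hlt.le)
    exact absurd hβ (not_le.2 (lt_of_le_of_lt hle hn))
  refine ⟨sInf S, ?_, ?_⟩
  · -- a ≤ μ {g ≤ βs}
    have hseq : {ω | g ω ≤ sInf S} = ⋂ n : ℕ, {ω | g ω ≤ sInf S + 1/(n+1)} := by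
      ext ω
      simp only [Set.mem_setOf_eq, Set.mem_iInter]
      constructor
      · intro h n; have : (0:ℝ) < 1/(n+1) := by positivity
        linarith
      · intro h
        by_contra hlt
        push_neg at hlt
        obtain ⟨n, hn⟩ := exists_nat_one_div_lt (by linarith : 0 < g ω - sInf S)
        have := h n
        linarith
    rw [hseq]
    have hanti : Antitone (fun n : ℕ => {ω | g ω ≤ sInf S + 1/(n+1)}) := by
      intro i j hij ω hω
      simp only [Set.mem_setOf_eq] at hω ⊢
      refine le_trans hω (add_le_add le_rfl ?_)
      gcongr
    have htend := tendsto_measure_iInter_atTop (μ := μ)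
      (s := fun n : ℕ => {ω | g ω ≤ sInf S + 1/(n+1)})
      (fun n => (hmbl _).nullMeasurableSet) hanti ⟨0, measure_ne_top _ _⟩
    refine ge_of_tendsto htend (Filter.Eventually.of_forall fun n => ?_)
    obtain ⟨β, hβS, hβlt⟩ := Real.lt_sInf_add_pos hne (by positivity : (0:ℝ) < 1/(n+1))
    calc a ≤ μ {ω | g ω ≤ β} := hβS
      _ ≤ μ {ω | g ω ≤ sInf S + 1/(n+1)} := measure_mono (fun ω hω => le_trans hω hβlt.le)
  · -- μ {g < βs} ≤ a
    have hseq : {ω | g ω < sInf S} = ⋃ n : ℕ, {ω | g ω ≤ sInf S - 1/(n+1)} := by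
      ext ω
      simp only [Set.mem_setOf_eq, Set.mem_iUnion]
      constructor
      · intro h
        obtain ⟨n, hn⟩ := exists_nat_one_div_lt (by linarith : 0 < sInf S - g ω)
        exact ⟨n, by linarith⟩
      · rintro ⟨n, hn⟩
        have : (0:ℝ) < 1/(n+1) := by positivity
        linarith
    rw [hseq]
    have hmono : Monotone (fun n : ℕ => {ω | g ω ≤ sInf S - 1/(n+1)}) := by
      intro i j hij ω hω
      simp only [Set.mem_setOf_eq] at hω ⊢
      refine le_trans hω (sub_le_sub_left ?_ _)
      gcongr
    have htend := tendsto_measure_iUnion_atTop (μ := μ) hmono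
    refine le_of_tendsto htend (Filter.Eventually.of_forall fun n => ?_)
    have hnot : sInf S - 1/(n+1) ∉ S := by
      intro hmem
      have hle := csInf_le hbdd hmem
      have hpos : (0:ℝ) < 1/(n+1) := by positivity
      linarith
    rw [hS, Set.mem_setOf_eq, not_le] at hnot
    exact hnot.le

set_option linter.unusedSectionVars false in
theorem attain (α : ℝ) (h0 : 0 < α) (h1 : α < 1) (g : Ω → ℝ) (hgm : Measurable g)
    (hgi : Integrable g μ) (βs : ℝ)
    (hr1 : ENNReal.ofReal α ≤ μ {ω | g ω ≤ βs}) (hr2 : μ {ω | g ω < βs} ≤ ENNReal.ofReal α) :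
    ∃ q : Ω → ℝ, Measurable q ∧ (∀ ω, 0 ≤ q ω ∧ q ω ≤ (1-α)⁻¹) ∧ (∫ ω, q ω ∂μ) = 1 ∧
      ∫ ω, g ω * q ω ∂μ = βs + (1-α)⁻¹ * ∫ ω, max (g ω - βs) 0 ∂μ := by
  set c := (1-α)⁻¹ with hcdef
  have h1α : (0:ℝ) < 1 - α := by linarith
  have hc : 0 < c := inv_pos.2 h1α
  have hc1 : c * (1 - α) = 1 := inv_mul_cancel₀ (ne_of_gt h1α)
  set A := {ω | βs < g ω} with hAdef
  set B := {ω | g ω = βs} with hBdef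
  have hA : MeasurableSet A := hgm measurableSet_Ioi
  have hB : MeasurableSet B := hgm (measurableSet_singleton βs)
  have hL : MeasurableSet {ω | g ω < βs} := hgm measurableSet_Iio
  set p := (μ A).toReal with hpdef
  set m := (μ B).toReal with hmdef
  set qq := (μ {ω | g ω ≤ βs}).toReal with hqdef
  set l := (μ {ω | g ω < βs}).toReal with hldef
  have hαq : α ≤ qq :=
    (ENNReal.ofReal_le_iff_le_toReal (measure_ne_top _ _)).1 hr1
  have hlα : l ≤ α := ENNReal.toReal_le_of_le_ofReal h0.le hr2
  have hpq : p + qq = 1 := by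
    have hcompl : {ω | g ω ≤ βs}ᶜ = A := by
      ext ω; simp [hAdef, not_le]
    have := measure_add_measure_compl (μ := μ) (s := {ω | g ω ≤ βs}) (hgm measurableSet_Iic)
    rw [hcompl, measure_univ] at this
    have := congrArg ENNReal.toReal this
    rw [ENNReal.toReal_add (measure_ne_top _ _) (measure_ne_top _ _)] at this
    simpa [add_comm] using this
  have hlm : l + m = qq := by
    have hdisj : Disjoint {ω | g ω < βs} B := by
      rw [Set.disjoint_left]; intro ω hω hω'
      simp only [hBdef, Set.mem_setOf_eq] at hω hω'
      linarith [hω, hω'.le, hω'.ge]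
    have hun : {ω | g ω < βs} ∪ B = {ω | g ω ≤ βs} := by
      ext ω; simp only [hBdef, Set.mem_union, Set.mem_setOf_eq]
      constructor
      · rintro (h | h) <;> simp [h, le_of_lt, le_of_eq]
      · intro h; rcases lt_or_eq_of_le h with h' | h'
        · exact Or.inl h'
        · exact Or.inr h'
    have := measure_union (μ := μ) hdisj hB
    rw [hun] at this
    have := congrArg ENNReal.toReal this
    rw [ENNReal.toReal_add (measure_ne_top _ _) (measure_ne_top _ _)] at this
    simpa using this.symm
  have hp0 : 0 ≤ p := ENNReal.toReal_nonneg
  have hm0 : 0 ≤ m := ENNReal.toReal_nonneg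
  have hple : p ≤ 1 - α := by linarith
  have hpm : 1 - α ≤ p + m := by linarith
  set t := if m = 0 then 0 else (1 - c * p) / m with htdef
  have hcp1 : c * p ≤ 1 := by
    calc c * p ≤ c * (1 - α) := by nlinarith
      _ = 1 := hc1
  have hcpm : 1 ≤ c * (p + m) := by
    calc (1:ℝ) = c * (1 - α) := hc1.symm
      _ ≤ c * (p + m) := by nlinarith
  have ht0 : 0 ≤ t := by
    rw [htdef]; split_ifs with h
    · exact le_rfl
    · exact div_nonneg (by linarith) (lt_of_le_of_ne hm0 (Ne.symm h)).le
  have htc : t ≤ c := by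
    rw [htdef]; split_ifs with h
    · exact hc.le
    · have hm' : 0 < m := lt_of_le_of_ne hm0 (Ne.symm h)
      rw [div_le_iff₀ hm']
      nlinarith
  have hsum : c * p + t * m = 1 := by
    rw [htdef]; split_ifs with h
    · have : p = 1 - α := by
        rw [h] at hpm; linarith
      rw [this]; simpa using hc1
    · have hm' : 0 < m := lt_of_le_of_ne hm0 (Ne.symm h)
      field_simp
      ring
  refine ⟨fun ω => A.indicator (fun _ => c) ω + B.indicator (fun _ => t) ω,
    (measurable_const.indicator hA).add (measurable_const.indicator hB), ?_, ?_, ?_⟩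
  · intro ω
    simp only []
    have hAB : ω ∈ A → ω ∉ B := by
      intro h h'
      simp only [hAdef, hBdef, Set.mem_setOf_eq] at h h'
      linarith [h'.le, h'.ge]
    by_cases hωA : ω ∈ A
    · simp only [Set.indicator_of_mem hωA, Set.indicator_of_notMem (hAB hωA)]
      exact ⟨by linarith, by linarith⟩
    · by_cases hωB : ω ∈ B
      · simp only [Set.indicator_of_notMem hωA, Set.indicator_of_mem hωB]
        exact ⟨by linarith, by linarith⟩
      · simp only [Set.indicator_of_notMem hωA, Set.indicator_of_notMem hωB]
        exact ⟨by linarith, by linarith⟩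
  · rw [integral_add ((integrable_const c).indicator hA) ((integrable_const t).indicator hB),
      integral_indicator_const c hA, integral_indicator_const t hB]
    simp only [smul_eq_mul, measureReal_def, ← hpdef, ← hmdef]
    linarith [hsum]
  · have e1 : (fun ω => g ω * (A.indicator (fun _ => c) ω + B.indicator (fun _ => t) ω))
        = fun ω => A.indicator (fun ω => g ω * c) ω + B.indicator (fun ω => g ω * t) ω := by
      ext ω
      by_cases h : ω ∈ A <;> by_cases h' : ω ∈ B <;>
        simp [Set.indicator_of_mem, Set.indicator_of_notMem, h, h'] <;> ring
    have e2 : (fun ω => max (g ω - βs) 0) = A.indicator (fun ω => g ω - βs) := by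
      ext ω
      by_cases h : ω ∈ A
      · rw [Set.indicator_of_mem h]
        simp only [hAdef, Set.mem_setOf_eq] at h
        exact max_eq_left (by linarith)
      · rw [Set.indicator_of_notMem h]
        simp only [hAdef, Set.mem_setOf_eq, not_lt] at h
        exact max_eq_right (by linarith)
    have hIA : IntegrableOn g A μ := hgi.integrableOn
    have hIcA : IntegrableOn (fun _ : Ω => βs) A μ :=
      integrableOn_const (measure_ne_top μ A)
    have hrhs : ∫ ω, max (g ω - βs) 0 ∂μ = (∫ ω in A, g ω ∂μ) - βs * p := by
      rw [e2, integral_indicator hA, integral_sub hIA hIcA, setIntegral_const]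
      simp only [smul_eq_mul, measureReal_def, ← hpdef]
      ring
    have hBint : ∫ ω in B, g ω * t ∂μ = m * (βs * t) := by
      rw [setIntegral_congr_fun hB (fun ω hω => by
        simp only [hBdef, Set.mem_setOf_eq] at hω
        rw [hω]), setIntegral_const]
      simp only [smul_eq_mul, measureReal_def, ← hmdef]
    have hlhs : ∫ ω, g ω * (A.indicator (fun _ => c) ω + B.indicator (fun _ => t) ω) ∂μ
        = (∫ ω in A, g ω ∂μ) * c + m * (βs * t) := by
      rw [e1, integral_add ((hgi.mul_const c).indicator hA) ((hgi.mul_const t).indicator hB),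
        integral_indicator hA, integral_indicator hB, integral_mul_const, hBint]
    rw [hlhs, hrhs]
    linear_combination βs * hsum

/-- dual representation of CVaR:
`CVaR_α(X) = inf_β {β + (1−α)⁻¹ E[(X−β)₊]}` is attained at some `β*`, and equals
`sup{E[XQ] : Q ∈ L², 0 ≤ Q ≤ (1−α)⁻¹ a.s., E[Q] = 1}`. -/
theorem stmt_9 (α : ℝ) (h0 : 0 < α) (h1 : α < 1) (X : L2 μ) :
    ∃ βs : ℝ,
      (∀ β : ℝ,
        βs + (1 - α)⁻¹ * ∫ ω, max (X ω - βs) 0 ∂μ ≤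
        β + (1 - α)⁻¹ * ∫ ω, max (X ω - β) 0 ∂μ) ∧
      IsLUB {e : ℝ | ∃ Q : L2 μ, (∀ᵐ ω ∂μ, 0 ≤ Q ω ∧ Q ω ≤ (1 - α)⁻¹) ∧
          (∫ ω, Q ω ∂μ) = 1 ∧ e = pairing μ X Q}
        (βs + (1 - α)⁻¹ * ∫ ω, max (X ω - βs) 0 ∂μ) := by
  have h1α : (0:ℝ) < 1 - α := by linarith
  have hc : (0:ℝ) < (1 - α)⁻¹ := inv_pos.2 h1α
  have hsm := Lp.aestronglyMeasurable X
  set g := hsm.mk (⇑X) with hgdef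
  have hXg : ⇑X =ᵐ[μ] g := hsm.ae_eq_mk
  have hgm : Measurable g := hsm.stronglyMeasurable_mk.measurable
  have hXi : Integrable (⇑X) μ := (Lp.memLp X).integrable (by norm_num)
  have hgi : Integrable g μ := hXi.congr hXg
  obtain ⟨βs, hr1, hr2⟩ := quantile_ex μ α h0 h1 g hgm
  obtain ⟨q, hqm, hqb, hqi, hqval⟩ := attain μ α h0 h1 g hgm hgi βs hr1 hr2
  have hIcong : ∀ β : ℝ, ∫ ω, max (X ω - β) 0 ∂μ = ∫ ω, max (g ω - β) 0 ∂μ := fun β =>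
    integral_congr_ae (hXg.mono fun ω h => by simp only [h])
  have hq2 : MemLp q 2 μ := by
    refine MemLp.of_bound hqm.aestronglyMeasurable ((1-α)⁻¹) (ae_of_all _ fun ω => ?_)
    rw [Real.norm_eq_abs, abs_of_nonneg (hqb ω).1]
    exact (hqb ω).2
  set Q : L2 μ := hq2.toLp q with hQdef
  have hQq : ⇑Q =ᵐ[μ] q := hq2.coeFn_toLp
  have hpair : pairing μ X Q = ∫ ω, g ω * q ω ∂μ := by
    refine integral_congr_ae ?_
    filter_upwards [hXg, hQq] with ω h1 h2
    rw [h1, h2]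
  have hVal : βs + (1 - α)⁻¹ * ∫ ω, max (X ω - βs) 0 ∂μ = ∫ ω, g ω * q ω ∂μ := by
    rw [hIcong βs, hqval]
  refine ⟨βs, ?_, ?_, ?_⟩
  · intro β
    rw [hVal, hIcong β]
    exact key_ub μ _ hc.le g q hgi hqm.aestronglyMeasurable (ae_of_all _ hqb) hqi β
  · rintro e ⟨Q', hb, hi, rfl⟩
    have hpair' : pairing μ X Q' = ∫ ω, g ω * Q' ω ∂μ := by
      refine integral_congr_ae ?_
      filter_upwards [hXg] with ω h1
      rw [h1]
    rw [hpair', hIcong βs]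
    exact key_ub μ _ hc.le g (⇑Q') hgi (Lp.aestronglyMeasurable Q') hb hi βs
  · intro b hb
    rw [hVal, ← hpair]
    refine hb ⟨Q, ?_, ?_, rfl⟩
    · filter_upwards [hQq] with ω h
      rw [h]; exact hqb ω
    · rw [integral_congr_ae hQq]; exact hqi
end
end

section
/- Fix 0 ≤ λ ≤ 1 and define ℛ(X) := E[X] + λ‖(X − E[X])₊‖₂ for X ∈ L². Then ℛ is a coherent risk measure on L², i.e. it satisfies (A1)–(A5); in particular, if X ≤ Y a.s. then E[X] + λ‖(X − E[X])₊‖₂ ≤ E[Y] + λ‖(Y − E[Y])₊‖₂. -/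
open MeasureTheory Filter Topology

noncomputable section

variable {Ω : Type*} [MeasurableSpace Ω] (μ : Measure Ω) [IsProbabilityMeasure μ]

/-- The mean-deviation risk measure `ℛ(X) = E[X] + λ‖(X − E[X])₊‖₂`. -/
def meanDev (l : ℝ) (X : L2 μ) : ℝ :=
  (∫ ω, X ω ∂μ) + l * Real.sqrt (∫ ω, (max (X ω - ∫ ω', X ω' ∂μ) 0) ^ 2 ∂μ)

set_option linter.unusedSectionVars false

namespace Stmt10Aux

variable {Ω : Type*} [MeasurableSpace Ω] (μ : Measure Ω) [IsProbabilityMeasure μ]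

lemma intL2 (f : L2 μ) : Integrable (⇑f) μ := (Lp.memLp f).integrable one_le_two

lemma inner_eq (f g : L2 μ) : (inner ℝ f g : ℝ) = ∫ ω, f ω * g ω ∂μ := by
  rw [MeasureTheory.L2.inner_def]; simp [RCLike.inner_apply, mul_comm]

lemma mul_int (f g : L2 μ) : Integrable (fun ω => f ω * g ω) μ := by
  simpa [RCLike.inner_apply, mul_comm] using MeasureTheory.L2.integrable_inner (𝕜 := ℝ) f g

lemma norm_eq (f : L2 μ) : ‖f‖ = Real.sqrt (∫ ω, f ω ^ 2 ∂μ) := by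
  rw [show (∫ ω, f ω ^ 2 ∂μ) = (inner ℝ f f : ℝ) by
      rw [MeasureTheory.L2.inner_def]; simp [RCLike.inner_apply, sq],
    real_inner_self_eq_norm_sq]
  simp [Real.sqrt_sq (norm_nonneg f)]

lemma coe_const (c : ℝ) : ⇑(constL2 μ c) =ᵐ[μ] fun _ => c := (memLp_const c).coeFn_toLp

lemma norm_mono (f g : L2 μ) (h : ∀ᵐ ω ∂μ, |f ω| ≤ |g ω|) : ‖f‖ ≤ ‖g‖ := by
  rw [Lp.norm_def, Lp.norm_def]
  exact ENNReal.toReal_mono (Lp.eLpNorm_ne_top g)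
    (eLpNorm_mono_ae (by simpa [Real.norm_eq_abs] using h))

lemma norm_one : ‖constL2 μ 1‖ = 1 := by
  rw [norm_eq]
  rw [integral_congr_ae ((coe_const μ 1).mono fun ω h => by rw [h])]
  simp

lemma expect_eq_inner (X : L2 μ) : expect μ X = (inner ℝ X (constL2 μ 1) : ℝ) := by
  rw [inner_eq]
  exact (integral_congr_ae ((coe_const μ 1).mono fun ω h => by rw [h, mul_one])).symm

lemma const_eq_smul (c : ℝ) : constL2 μ c = c • constL2 μ 1 := by
  apply Lp.ext
  filter_upwards [coe_const μ c, coe_const μ 1,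
    Lp.coeFn_smul c (constL2 μ 1)] with ω h1 h2 h3
  rw [h1, h3]; simp [h2]

lemma norm_const (c : ℝ) : ‖constL2 μ c‖ = |c| := by
  rw [const_eq_smul, norm_smul, norm_one]; simp [Real.norm_eq_abs]

lemma expect_const (c : ℝ) : expect μ (constL2 μ c) = c := by
  unfold expect
  rw [integral_congr_ae ((coe_const μ c).mono fun ω h => by rw [h])]
  simp

lemma expect_add (X Y : L2 μ) : expect μ (X + Y) = expect μ X + expect μ Y := by
  unfold expect
  rw [integral_congr_ae ((Lp.coeFn_add X Y).mono fun ω h => by rw [h, Pi.add_apply])]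
  exact integral_add (intL2 μ X) (intL2 μ Y)

lemma expect_sub (X Y : L2 μ) : expect μ (X - Y) = expect μ X - expect μ Y := by
  unfold expect
  rw [integral_congr_ae ((Lp.coeFn_sub X Y).mono fun ω h => by rw [h, Pi.sub_apply])]
  exact integral_sub (intL2 μ X) (intL2 μ Y)

lemma expect_smul (c : ℝ) (X : L2 μ) : expect μ (c • X) = c * expect μ X := by
  unfold expect
  rw [integral_congr_ae ((Lp.coeFn_smul c X).mono fun ω h => by
    rw [h, Pi.smul_apply, smul_eq_mul])]
  exact integral_const_mul c _

lemma expect_mono {X Y : L2 μ} (h : ⇑X ≤ᵐ[μ] ⇑Y) : expect μ X ≤ expect μ Y :=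
  integral_mono_ae (intL2 μ X) (intL2 μ Y) h

/-- `(X - E X)₊` as an element of `L²`. -/
def dev (X : L2 μ) : L2 μ := Lp.posPart (X - constL2 μ (expect μ X))

lemma coe_dev (X : L2 μ) : ⇑(dev μ X) =ᵐ[μ] fun ω => max (X ω - expect μ X) 0 := by
  filter_upwards [Lp.coeFn_posPart (X - constL2 μ (expect μ X)),
    Lp.coeFn_sub X (constL2 μ (expect μ X)), coe_const μ (expect μ X)] with ω h1 h2 h3
  rw [dev, h1, h2, Pi.sub_apply, h3]

lemma dev_nonneg (X : L2 μ) : (0 : Ω → ℝ) ≤ᵐ[μ] ⇑(dev μ X) := by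
  filter_upwards [coe_dev μ X] with ω h
  rw [h]; exact le_max_right _ _

lemma meanDev_eq (l : ℝ) (X : L2 μ) :
    meanDev μ l X = expect μ X + l * ‖dev μ X‖ := by
  rw [meanDev, norm_eq]
  have hint : (∫ ω, (max (X ω - ∫ ω', X ω' ∂μ) 0) ^ 2 ∂μ)
      = ∫ ω, (dev μ X) ω ^ 2 ∂μ := by
    refine integral_congr_ae ?_
    filter_upwards [coe_dev μ X] with ω h
    simp only [h, expect]
  rw [hint]
  rfl

lemma inner_dev_self (X : L2 μ) :
    (inner ℝ (X - constL2 μ (expect μ X)) (dev μ X) : ℝ) = ‖dev μ X‖ ^ 2 := by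
  rw [← real_inner_self_eq_norm_sq, inner_eq, inner_eq]
  apply integral_congr_ae
  filter_upwards [Lp.coeFn_sub X (constL2 μ (expect μ X)), coe_const μ (expect μ X),
    coe_dev μ X] with ω h1 h2 h3
  rw [h1, Pi.sub_apply, h2, h3]
  rcases le_or_gt (X ω - expect μ X) 0 with h | h
  · simp [max_eq_right h]
  · rw [max_eq_left h.le]

lemma dev_add_le (X Y : L2 μ) : ‖dev μ (X + Y)‖ ≤ ‖dev μ X‖ + ‖dev μ Y‖ := by
  calc ‖dev μ (X + Y)‖ ≤ ‖dev μ X + dev μ Y‖ := by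
        apply norm_mono
        filter_upwards [coe_dev μ (X + Y), coe_dev μ X, coe_dev μ Y,
          Lp.coeFn_add (dev μ X) (dev μ Y), Lp.coeFn_add X Y] with ω h1 h2 h3 h4 h5
        rw [h1, h4, Pi.add_apply, h2, h3, h5, Pi.add_apply, expect_add]
        have hle : max (X ω + Y ω - (expect μ X + expect μ Y)) 0 ≤
            max (X ω - expect μ X) 0 + max (Y ω - expect μ Y) 0 := by
          apply max_le
          · have := add_le_add (le_max_left (X ω - expect μ X) 0)
              (le_max_left (Y ω - expect μ Y) 0)
            linarith
          · positivity
        rw [abs_of_nonneg (le_max_right _ _), abs_of_nonneg (by positivity)]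
        exact hle
    _ ≤ ‖dev μ X‖ + ‖dev μ Y‖ := norm_add_le _ _

lemma dev_smul (c : ℝ) (hc : 0 ≤ c) (X : L2 μ) : dev μ (c • X) = c • dev μ X := by
  apply Lp.ext
  filter_upwards [coe_dev μ (c • X), coe_dev μ X, Lp.coeFn_smul c X,
    Lp.coeFn_smul c (dev μ X)] with ω h1 h2 h3 h4
  rw [h1, h4, Pi.smul_apply, h2, smul_eq_mul, h3, Pi.smul_apply, smul_eq_mul,
    expect_smul]
  rw [show c * X ω - c * expect μ X = c * (X ω - expect μ X) by ring,
    mul_max_of_nonneg _ _ hc, mul_zero]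

lemma meanDev_smul (l c : ℝ) (hc : 0 ≤ c) (X : L2 μ) :
    meanDev μ l (c • X) = c * meanDev μ l X := by
  rw [meanDev_eq, meanDev_eq, expect_smul, dev_smul μ c hc, norm_smul,
    Real.norm_eq_abs, abs_of_nonneg hc]
  ring

lemma meanDev_add_le (l : ℝ) (hl : 0 ≤ l) (X Y : L2 μ) :
    meanDev μ l (X + Y) ≤ meanDev μ l X + meanDev μ l Y := by
  rw [meanDev_eq, meanDev_eq, meanDev_eq, expect_add]
  have := mul_le_mul_of_nonneg_left (dev_add_le μ X Y) hl
  linarith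

lemma abs_expect_le (X : L2 μ) : |expect μ X| ≤ ‖X‖ := by
  rw [expect_eq_inner]
  calc |(inner ℝ X (constL2 μ 1) : ℝ)| ≤ ‖X‖ * ‖constL2 μ 1‖ := abs_real_inner_le_norm _ _
    _ = ‖X‖ := by rw [norm_one, mul_one]

lemma dev_lip (X Y : L2 μ) : ‖dev μ X‖ ≤ ‖dev μ Y‖ + 2 * ‖X - Y‖ := by
  have h1 : ‖dev μ X‖ ≤ ‖dev μ Y‖ + ‖dev μ X - dev μ Y‖ := by
    have := norm_add_le (dev μ Y) (dev μ X - dev μ Y)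
    simpa using this
  have h2 : ‖dev μ X - dev μ Y‖ ≤ ‖X - Y - constL2 μ (expect μ X - expect μ Y)‖ := by
    apply norm_mono
    filter_upwards [coe_dev μ X, coe_dev μ Y, Lp.coeFn_sub (dev μ X) (dev μ Y),
      Lp.coeFn_sub (X - Y) (constL2 μ (expect μ X - expect μ Y)),
      Lp.coeFn_sub X Y, coe_const μ (expect μ X - expect μ Y)] with ω h1 h2 h3 h4 h5 h6
    rw [h3, Pi.sub_apply, h1, h2, h4, Pi.sub_apply, h5, Pi.sub_apply, h6]
    have := abs_max_sub_max_le_abs (X ω - expect μ X) (Y ω - expect μ Y) 0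
    calc |max (X ω - expect μ X) 0 - max (Y ω - expect μ Y) 0|
        ≤ |X ω - expect μ X - (Y ω - expect μ Y)| := this
      _ = |X ω - Y ω - (expect μ X - expect μ Y)| := by ring_nf
      _ ≤ |X ω - Y ω - (expect μ X - expect μ Y)| := le_rfl
  have h3 : ‖X - Y - constL2 μ (expect μ X - expect μ Y)‖ ≤ 2 * ‖X - Y‖ := by
    calc ‖X - Y - constL2 μ (expect μ X - expect μ Y)‖
        ≤ ‖X - Y‖ + ‖constL2 μ (expect μ X - expect μ Y)‖ := norm_sub_le _ _
      _ = ‖X - Y‖ + |expect μ X - expect μ Y| := by rw [norm_const]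
      _ = ‖X - Y‖ + |expect μ (X - Y)| := by rw [expect_sub]
      _ ≤ ‖X - Y‖ + ‖X - Y‖ := by linarith [abs_expect_le μ (X - Y)]
      _ = 2 * ‖X - Y‖ := by ring
  linarith

lemma meanDev_lip (l : ℝ) (hl0 : 0 ≤ l) (hl1 : l ≤ 1) (X Y : L2 μ) :
    meanDev μ l X ≤ meanDev μ l Y + 3 * ‖X - Y‖ := by
  rw [meanDev_eq, meanDev_eq]
  have h1 : expect μ X - expect μ Y ≤ ‖X - Y‖ := by
    have := abs_expect_le μ (X - Y)
    rw [expect_sub] at this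
    exact le_trans (le_abs_self _) this
  have h2 := dev_lip μ X Y
  have h3 : l * ‖dev μ X‖ ≤ l * ‖dev μ Y‖ + 2 * ‖X - Y‖ := by
    have := mul_le_mul_of_nonneg_left h2 hl0
    nlinarith [norm_nonneg (X - Y)]
  linarith

lemma meanDev_mono (l : ℝ) (hl0 : 0 ≤ l) (hl1 : l ≤ 1) (X Y : L2 μ)
    (h : ⇑X ≤ᵐ[μ] ⇑Y) : meanDev μ l X ≤ meanDev μ l Y := by
  rw [meanDev_eq, meanDev_eq]
  set m := expect μ X with hm
  set n := expect μ Y with hn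
  set a := ‖dev μ X‖ with ha
  have hmn : m ≤ n := expect_mono μ h
  have hbnn : 0 ≤ ‖dev μ Y‖ := norm_nonneg _
  rcases eq_or_lt_of_le (norm_nonneg (dev μ X)) with haz | hap
  · have haz' : a = 0 := by rw [ha, ← haz]
    rw [haz']; nlinarith
  -- main case : a > 0
  have hap' : 0 < a := by rw [ha]; exact hap
  have ha0 : a ≠ 0 := ne_of_gt hap'
  set V : L2 μ := a⁻¹ • dev μ X with hV
  have hVnn : (0 : Ω → ℝ) ≤ᵐ[μ] ⇑V := by
    filter_upwards [dev_nonneg μ X, Lp.coeFn_smul a⁻¹ (dev μ X)] with ω h1 h2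
    rw [hV, h2, Pi.smul_apply, smul_eq_mul]
    exact mul_nonneg (inv_nonneg.mpr hap'.le) h1
  have hVnorm : ‖V‖ = 1 := by
    rw [hV, norm_smul, Real.norm_eq_abs, abs_of_nonneg (inv_nonneg.mpr hap'.le), ← ha]
    field_simp
  set e := expect μ V with he
  have he0 : 0 ≤ e := by
    rw [he, expect]
    exact integral_nonneg_of_ae hVnn
  have he1 : e ≤ 1 := by
    rw [he, expect_eq_inner]
    calc (inner ℝ V (constL2 μ 1) : ℝ) ≤ ‖V‖ * ‖constL2 μ 1‖ := real_inner_le_norm _ _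
      _ = 1 := by rw [hVnorm, norm_one, mul_one]
  have hle1 : l * e ≤ 1 := by nlinarith
  set Q : L2 μ := constL2 μ (1 - l * e) + l • V with hQ
  have hQnn : (0 : Ω → ℝ) ≤ᵐ[μ] ⇑Q := by
    filter_upwards [Lp.coeFn_add (constL2 μ (1 - l * e)) (l • V),
      coe_const μ (1 - l * e), Lp.coeFn_smul l V, hVnn] with ω h1 h2 h3 h4
    rw [hQ, h1, Pi.add_apply, h2, h3, Pi.smul_apply, smul_eq_mul]
    have : 0 ≤ l * V ω := mul_nonneg hl0 h4
    simp only [Pi.zero_apply]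
    linarith
  -- inner products with Q
  have key : ∀ Z : L2 μ, (inner ℝ Z Q : ℝ) =
      expect μ Z * (1 - l * e) + l * (inner ℝ Z V : ℝ) := by
    intro Z
    rw [hQ, inner_add_right, real_inner_smul_right, const_eq_smul,
      real_inner_smul_right, ← expect_eq_inner]
    ring
  have hinnerXV : (inner ℝ X V : ℝ) = a + m * e := by
    have h1 : (inner ℝ (X - constL2 μ m) V : ℝ) = a := by
      rw [hV, real_inner_smul_right, hm, inner_dev_self, ← ha]
      field_simp
    have h2 : (inner ℝ (constL2 μ m) V : ℝ) = m * e := by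
      rw [const_eq_smul, real_inner_smul_left, real_inner_comm, ← expect_eq_inner, ← he]
    have h3 : (inner ℝ (X - constL2 μ m) V : ℝ)
        = (inner ℝ X V : ℝ) - (inner ℝ (constL2 μ m) V : ℝ) := inner_sub_left _ _ _
    rw [h1, h2] at h3
    linarith
  have hXQ : (inner ℝ X Q : ℝ) = m + l * a := by
    rw [key, hinnerXV, ← hm]; ring
  have hXYQ : (inner ℝ X Q : ℝ) ≤ (inner ℝ Y Q : ℝ) := by
    have hsub : (0:ℝ) ≤ inner ℝ (Y - X) Q := by
      rw [inner_eq]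
      apply integral_nonneg_of_ae
      filter_upwards [Lp.coeFn_sub Y X, h, hQnn] with ω h1 h2 h3
      rw [h1, Pi.sub_apply]
      exact mul_nonneg (by linarith) h3
    have h3 : (inner ℝ (Y - X) Q : ℝ)
        = (inner ℝ Y Q : ℝ) - (inner ℝ X Q : ℝ) := inner_sub_left _ _ _
    linarith
  have hYQ : (inner ℝ Y Q : ℝ) ≤ n + l * ‖dev μ Y‖ := by
    have h1 : (inner ℝ (Y - constL2 μ n) V : ℝ) ≤ (inner ℝ (dev μ Y) V : ℝ) := by
      rw [inner_eq, inner_eq]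
      apply integral_mono_ae (mul_int μ _ _) (mul_int μ _ _)
      filter_upwards [Lp.coeFn_sub Y (constL2 μ n), coe_const μ n, coe_dev μ Y,
        hVnn] with ω ha1 ha2 ha3 ha4
      rw [ha1, Pi.sub_apply, ha2, ha3]
      exact mul_le_mul_of_nonneg_right (le_max_left _ _) ha4
    have h2 : (inner ℝ (dev μ Y) V : ℝ) ≤ ‖dev μ Y‖ := by
      calc (inner ℝ (dev μ Y) V : ℝ) ≤ ‖dev μ Y‖ * ‖V‖ := real_inner_le_norm _ _
        _ = ‖dev μ Y‖ := by rw [hVnorm, mul_one]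
    have h4 : (inner ℝ (constL2 μ n) V : ℝ) = n * e := by
      rw [const_eq_smul, real_inner_smul_left, real_inner_comm, ← expect_eq_inner, ← he]
    have h5 : (inner ℝ (Y - constL2 μ n) V : ℝ)
        = (inner ℝ Y V : ℝ) - (inner ℝ (constL2 μ n) V : ℝ) := inner_sub_left _ _ _
    rw [h4] at h5
    have hYV : (inner ℝ Y V : ℝ) ≤ ‖dev μ Y‖ + n * e := by linarith
    rw [key, ← hn]
    nlinarith
  linarith [hXQ ▸ hXYQ, hYQ]

end Stmt10Aux

/-- for `0 ≤ λ ≤ 1`, the mean-deviation functional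
`X ↦ E[X] + λ‖(X − E[X])₊‖₂` is a coherent risk measure on `L²`; in particular it is
monotone with respect to the a.s. order. -/
theorem stmt_10 (l : ℝ) (h0 : 0 ≤ l) (h1 : l ≤ 1) :
    IsCoherent μ (fun X => ((meanDev μ l X : ℝ) : EReal)) ∧
    ∀ X Y : L2 μ, (⇑X ≤ᵐ[μ] ⇑Y) → meanDev μ l X ≤ meanDev μ l Y := by
  have mono : ∀ X Y : L2 μ, (⇑X ≤ᵐ[μ] ⇑Y) → meanDev μ l X ≤ meanDev μ l Y :=
    fun X Y h => Stmt10Aux.meanDev_mono μ l h0 h1 X Y h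
  refine ⟨⟨?_, ?_, ?_, ?_, ?_, ?_⟩, mono⟩
  · intro X; exact EReal.coe_ne_bot _
  · intro C
    have hdev : ‖Stmt10Aux.dev μ (constL2 μ C)‖ = 0 := by
      have hle : ‖Stmt10Aux.dev μ (constL2 μ C)‖ ≤ ‖(0 : L2 μ)‖ := by
        apply Stmt10Aux.norm_mono
        filter_upwards [Stmt10Aux.coe_dev μ (constL2 μ C), Stmt10Aux.coe_const μ C,
          Lp.coeFn_zero ℝ 2 μ] with ω ha hb hc
        rw [ha, hb, Stmt10Aux.expect_const, hc]
        simp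
      exact le_antisymm (by simpa using hle) (norm_nonneg _)
    have : meanDev μ l (constL2 μ C) = C := by
      rw [Stmt10Aux.meanDev_eq, hdev, Stmt10Aux.expect_const]; ring
    exact_mod_cast this
  · intro X X' t ht0 ht1
    have hreal : meanDev μ l ((1 - t) • X + t • X') ≤
        (1 - t) * meanDev μ l X + t * meanDev μ l X' := by
      calc meanDev μ l ((1 - t) • X + t • X')
          ≤ meanDev μ l ((1 - t) • X) + meanDev μ l (t • X') :=
            Stmt10Aux.meanDev_add_le μ l h0 _ _
        _ = (1 - t) * meanDev μ l X + t * meanDev μ l X' := by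
            rw [Stmt10Aux.meanDev_smul μ l (1 - t) (by linarith) X,
              Stmt10Aux.meanDev_smul μ l t ht0 X']
    exact_mod_cast hreal
  · intro X X' h; exact_mod_cast mono X X' h
  · intro Xk X htend hk
    have hreal : ∀ k, meanDev μ l (Xk k) ≤ 0 := fun k => by exact_mod_cast hk k
    have hb : ∀ k, meanDev μ l X ≤ 3 * ‖Xk k - X‖ := fun k => by
      have hlip := Stmt10Aux.meanDev_lip μ l h0 h1 X (Xk k)
      have h2 : ‖X - Xk k‖ = ‖Xk k - X‖ := norm_sub_rev _ _
      rw [h2] at hlip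
      linarith [hreal k]
    have ht : Tendsto (fun k => 3 * ‖Xk k - X‖) atTop (𝓝 0) := by
      simpa using htend.const_mul 3
    have : meanDev μ l X ≤ 0 := ge_of_tendsto ht (Eventually.of_forall hb)
    exact_mod_cast this
  · intro X c hc
    have := Stmt10Aux.meanDev_smul μ l c hc.le X
    rw [this]
    exact_mod_cast rfl
end
end

section
/- Fix 0 ≤ λ ≤ 1. For every X ∈ L², sup{ E[XQ] : Q ∈ L², Q ≥ 0 a.s., E[Q] = 1, ‖Q − ess inf Q‖₂ ≤ λ } = E[X] + λ‖(X − E[X])₊‖₂; moreover the set 𝒬 := {Q ∈ 𝒫 : ‖Q − ess inf Q‖₂ ≤ λ} is nonempty, convex and closed in L², so 𝒬 is the risk envelope of the mean-deviation risk measure ℛ(X) = E[X] + λ‖(X − E[X])₊‖₂. -/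
open MeasureTheory Filter Topology

noncomputable section

variable {Ω : Type*} [MeasurableSpace Ω] (μ : Measure Ω) [IsProbabilityMeasure μ]

/-- The essential infimum `sup{a ∈ ℝ : a ≤ Q a.s.}`. -/
def essInfR (Q : L2 μ) : ℝ := sSup {a : ℝ | ∀ᵐ ω ∂μ, a ≤ Q ω}

/-- The candidate risk envelope `{Q ∈ 𝒫 : ‖Q − ess inf Q‖₂ ≤ λ}` for the mean-deviation
risk measure. -/
def meanDevEnvelope (l : ℝ) : Set (L2 μ) :=
  {Q ∈ densities μ | Real.sqrt (∫ ω, (Q ω - essInfR μ Q) ^ 2 ∂μ) ≤ l}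

namespace Stmt11Aux

variable {Ω : Type*} [MeasurableSpace Ω] {μ : Measure Ω} [IsProbabilityMeasure μ]

lemma integrable_L2 (X : L2 μ) : Integrable (⇑X) μ :=
  (Lp.memLp X).integrable (by norm_num)

lemma integrable_mul₂ {f g : Ω → ℝ} (hf : MemLp f 2 μ) (hg : MemLp g 2 μ) :
    Integrable (fun ω => f ω * g ω) μ := by
  rw [← memLp_one_iff_integrable]
  have := hg.smul (φ := f) hf (p := 2) (r := 1)
    (hpqr := ⟨by rw [ENNReal.inv_two_add_inv_two, inv_one]⟩)
  exact this

lemma integrable_sq {f : Ω → ℝ} (hf : MemLp f 2 μ) :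
    Integrable (fun ω => f ω ^ 2) μ := by
  simpa [pow_two] using integrable_mul₂ hf hf

lemma norm_eq_sqrt_integral (R : L2 μ) : ‖R‖ = Real.sqrt (∫ ω, R ω ^ 2 ∂μ) := by
  have h : ‖R‖ ^ 2 = ∫ ω, R ω * R ω ∂μ := by
    rw [← real_inner_self_eq_norm_sq, L2.inner_def]
    simp [RCLike.inner_apply, pow_two]
  rw [← Real.sqrt_sq (norm_nonneg R), h]
  simp_rw [sq]

lemma cauchy_schwarz {f g : Ω → ℝ} (hf : MemLp f 2 μ) (hg : MemLp g 2 μ)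
    (hf0 : 0 ≤ᵐ[μ] f) (hg0 : 0 ≤ᵐ[μ] g) :
    ∫ ω, f ω * g ω ∂μ ≤ Real.sqrt (∫ ω, f ω ^ 2 ∂μ) * Real.sqrt (∫ ω, g ω ^ 2 ∂μ) := by
  have hpq : Real.HolderConjugate 2 2 := by constructor <;> norm_num
  have h2 : ENNReal.ofReal (2 : ℝ) = 2 := by norm_num
  have H := integral_mul_le_Lp_mul_Lq_of_nonneg hpq hf0 hg0 (h2 ▸ hf) (h2 ▸ hg)
  have e1 : ∫ ω, f ω ^ (2 : ℝ) ∂μ = ∫ ω, f ω ^ 2 ∂μ := by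
    simp_rw [show (2 : ℝ) = ((2 : ℕ) : ℝ) by norm_num, Real.rpow_natCast]
  have e2 : ∫ ω, g ω ^ (2 : ℝ) ∂μ = ∫ ω, g ω ^ 2 ∂μ := by
    simp_rw [show (2 : ℝ) = ((2 : ℕ) : ℝ) by norm_num, Real.rpow_natCast]
  rw [e1, e2] at H
  rw [Real.sqrt_eq_rpow, Real.sqrt_eq_rpow]
  exact H

lemma coeFn_constL2 (c : ℝ) : ⇑(constL2 μ c) =ᵐ[μ] fun _ => c :=
  MemLp.coeFn_toLp _

lemma constL2_sub (a b : ℝ) : constL2 μ a - constL2 μ b = constL2 μ (a - b) := by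
  apply Lp.ext
  filter_upwards [Lp.coeFn_sub (constL2 μ a) (constL2 μ b), coeFn_constL2 (μ := μ) a,
    coeFn_constL2 (μ := μ) b, coeFn_constL2 (μ := μ) (a - b)] with ω h1 h2 h3 h4
  rw [h1, h4]; simp [h2, h3]

lemma norm_constL2 (a : ℝ) : ‖(constL2 μ a : L2 μ)‖ = |a| := by
  rw [norm_eq_sqrt_integral]
  have : ∫ ω, (constL2 μ a) ω ^ 2 ∂μ = a ^ 2 := by
    rw [integral_congr_ae ((coeFn_constL2 (μ := μ) a).mono fun ω h => by rw [h])]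
    simp
  rw [this, Real.sqrt_sq_eq_abs]

lemma dev_eq_norm (Q : L2 μ) (c : ℝ) :
    Real.sqrt (∫ ω, (Q ω - c) ^ 2 ∂μ) = ‖Q - constL2 μ c‖ := by
  rw [norm_eq_sqrt_integral]
  congr 1
  apply integral_congr_ae
  filter_upwards [Lp.coeFn_sub Q (constL2 μ c), coeFn_constL2 (μ := μ) c] with ω h1 h2
  rw [h1]; simp [h2]

/-! `essInfR` facts for densities -/

lemma bddAbove_aeSet (Q : L2 μ) : BddAbove {a : ℝ | ∀ᵐ ω ∂μ, a ≤ Q ω} := by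
  refine ⟨∫ ω, Q ω ∂μ, fun a ha => ?_⟩
  have := integral_mono_ae (integrable_const a) (integrable_L2 Q) ha
  simpa using this

lemma essInfR_nonneg {Q : L2 μ} (hQ : Q ∈ densities μ) : 0 ≤ essInfR μ Q :=
  le_csSup (bddAbove_aeSet Q) hQ.1

lemma essInfR_le_one {Q : L2 μ} (hQ : Q ∈ densities μ) : essInfR μ Q ≤ 1 := by
  refine csSup_le ⟨0, hQ.1⟩ fun a ha => ?_
  have := integral_mono_ae (integrable_const a) (integrable_L2 Q) ha
  simpa [hQ.2] using this

lemma le_essInfR {Q : L2 μ} {d : ℝ} (hd : ∀ᵐ ω ∂μ, d ≤ Q ω) : d ≤ essInfR μ Q :=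
  le_csSup (bddAbove_aeSet Q) hd

lemma essInfR_ae_le {Q : L2 μ} (hQ : Q ∈ densities μ) : ∀ᵐ ω ∂μ, essInfR μ Q ≤ Q ω := by
  obtain ⟨u, hu_mono, hu_tendsto, hu_mem⟩ :=
    exists_seq_tendsto_sSup (α := ℝ) ⟨0, hQ.1⟩ (bddAbove_aeSet Q)
  have hall : ∀ᵐ ω ∂μ, ∀ n, u n ≤ Q ω := ae_all_iff.mpr hu_mem
  filter_upwards [hall] with ω hω
  exact le_of_tendsto hu_tendsto (Eventually.of_forall hω)

lemma dev_essInfR_le {Q : L2 μ} (hQ : Q ∈ densities μ) {d : ℝ} (hd : ∀ᵐ ω ∂μ, d ≤ Q ω) :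
    Real.sqrt (∫ ω, (Q ω - essInfR μ Q) ^ 2 ∂μ) ≤ Real.sqrt (∫ ω, (Q ω - d) ^ 2 ∂μ) := by
  have hdc : d ≤ essInfR μ Q := le_essInfR hd
  apply Real.sqrt_le_sqrt
  apply integral_mono_ae (integrable_sq ((Lp.memLp Q).sub (memLp_const _)))
    (integrable_sq ((Lp.memLp Q).sub (memLp_const _)))
  filter_upwards [essInfR_ae_le hQ] with ω hω
  have h1 : 0 ≤ Q ω - essInfR μ Q := by linarith
  have h2 : Q ω - essInfR μ Q ≤ Q ω - d := by linarith
  exact pow_le_pow_left₀ h1 h2 2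

lemma ae_neBot' : (ae μ).NeBot := ae_neBot.mpr (IsProbabilityMeasure.ne_zero μ)

lemma pairing_le_meanDev {l : ℝ} (h0 : 0 ≤ l) (X Q : L2 μ)
    (hQ : Q ∈ meanDevEnvelope μ l) : pairing μ X Q ≤ meanDev μ l X := by
  obtain ⟨hQd, hQdev⟩ := hQ
  set m := ∫ ω, X ω ∂μ with hm
  set c := essInfR μ Q with hc
  have hcle : ∀ᵐ ω ∂μ, c ≤ Q ω := essInfR_ae_le hQd
  have hX2 := Lp.memLp X
  have hQ2 := Lp.memLp Q
  have hXm2 : MemLp (fun ω => X ω - m) 2 μ := hX2.sub (memLp_const m)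
  have hY2 : MemLp (fun ω => max (X ω - m) 0) 2 μ := hXm2.pos_part
  have hQc2 : MemLp (fun ω => Q ω - c) 2 μ := hQ2.sub (memLp_const c)
  -- step A : ∫ (X-m)(Q-c) = pairing - m
  have hA : ∫ ω, (X ω - m) * (Q ω - c) ∂μ = pairing μ X Q - m := by
    have hre : (fun ω => (X ω - m) * (Q ω - c))
        = fun ω => X ω * Q ω - (c * X ω + (m * Q ω - m * c)) := by
      funext ω; ring
    have hi1 : Integrable (fun ω => c * X ω) μ := (integrable_L2 X).const_mul c
    have hi2 : Integrable (fun ω => m * Q ω - m * c) μ :=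
      ((integrable_L2 Q).const_mul m).sub (integrable_const _)
    have hi3 : Integrable (fun ω => c * X ω + (m * Q ω - m * c)) μ := hi1.add hi2
    rw [hre, integral_sub (integrable_mul₂ hX2 hQ2) hi3, integral_add hi1 hi2,
      integral_sub ((integrable_L2 Q).const_mul m) (integrable_const _),
      integral_const_mul, integral_const_mul, integral_const]
    simp only [probReal_univ, smul_eq_mul, one_mul]
    rw [hQd.2]
    simp only [pairing, ← hm]
    ring
  -- step B
  have hB : ∫ ω, (X ω - m) * (Q ω - c) ∂μ
      ≤ ∫ ω, max (X ω - m) 0 * (Q ω - c) ∂μ := by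
    apply integral_mono_ae (integrable_mul₂ hXm2 hQc2) (integrable_mul₂ hY2 hQc2)
    filter_upwards [hcle] with ω hω
    exact mul_le_mul_of_nonneg_right (le_max_left _ _) (by linarith)
  -- step C
  have hC : ∫ ω, max (X ω - m) 0 * (Q ω - c) ∂μ
      ≤ Real.sqrt (∫ ω, max (X ω - m) 0 ^ 2 ∂μ) * Real.sqrt (∫ ω, (Q ω - c) ^ 2 ∂μ) :=
    cauchy_schwarz hY2 hQc2 (Eventually.of_forall fun ω => le_max_right _ _)
      (hcle.mono fun ω hω => by simp only [Pi.zero_apply]; linarith)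
  have hs0 : 0 ≤ Real.sqrt (∫ ω, max (X ω - m) 0 ^ 2 ∂μ) := Real.sqrt_nonneg _
  have hD : Real.sqrt (∫ ω, max (X ω - m) 0 ^ 2 ∂μ) * Real.sqrt (∫ ω, (Q ω - c) ^ 2 ∂μ)
      ≤ Real.sqrt (∫ ω, max (X ω - m) 0 ^ 2 ∂μ) * l :=
    mul_le_mul_of_nonneg_left hQdev hs0
  have hmd : meanDev μ l X = m + l * Real.sqrt (∫ ω, max (X ω - m) 0 ^ 2 ∂μ) := rfl
  rw [hmd]
  linarith

lemma constL2_one_mem_densities : (constL2 μ 1 : L2 μ) ∈ densities μ := by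
  constructor
  · filter_upwards [coeFn_constL2 (μ := μ) 1] with ω h
    rw [Pi.zero_apply, h]; norm_num
  · rw [integral_congr_ae ((coeFn_constL2 (μ := μ) 1).mono fun ω h => by rw [h])]
    simp

lemma essInfR_constL2_one : essInfR μ (constL2 μ 1) = 1 := by
  haveI := ae_neBot' (μ := μ)
  apply IsGreatest.csSup_eq
  constructor
  · show ∀ᵐ ω ∂μ, (1 : ℝ) ≤ (constL2 μ 1) ω
    filter_upwards [coeFn_constL2 (μ := μ) 1] with ω h
    rw [h]
  · intro a ha
    have ha' : ∀ᵐ ω ∂μ, a ≤ (constL2 μ 1) ω := ha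
    obtain ⟨ω, h1, h2⟩ := (ha'.and (coeFn_constL2 (μ := μ) 1)).exists
    rw [h2] at h1
    exact h1

lemma constL2_one_mem {l : ℝ} (h0 : 0 ≤ l) : (constL2 μ 1 : L2 μ) ∈ meanDevEnvelope μ l := by
  refine ⟨constL2_one_mem_densities, ?_⟩
  rw [essInfR_constL2_one]
  have hz : ∫ ω, ((constL2 μ 1 : L2 μ) ω - 1) ^ 2 ∂μ = 0 := by
    have : (fun ω => ((constL2 μ 1 : L2 μ) ω - 1) ^ 2) =ᵐ[μ] fun _ => (0:ℝ) := by
      filter_upwards [coeFn_constL2 (μ := μ) 1] with ω h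
      rw [h]; ring
    rw [integral_congr_ae this]
    simp
  rw [hz, Real.sqrt_zero]
  exact h0
lemma pairing_constL2_one (X : L2 μ) : pairing μ X (constL2 μ 1) = ∫ ω, X ω ∂μ := by
  unfold pairing
  apply integral_congr_ae
  filter_upwards [coeFn_constL2 (μ := μ) 1] with ω h
  rw [h]; simp

lemma exists_maximizer {l : ℝ} (h0 : 0 ≤ l) (h1 : l ≤ 1) (X : L2 μ) :
    ∃ Q ∈ meanDevEnvelope μ l, pairing μ X Q = meanDev μ l X := by
  set m := ∫ ω, X ω ∂μ with hm
  set Y : Ω → ℝ := fun ω => max (X ω - m) 0 with hY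
  have hY2 : MemLp Y 2 μ := ((Lp.memLp X).sub (memLp_const m)).pos_part
  have hYnn : ∀ ω, 0 ≤ Y ω := fun ω => le_max_right _ _
  have hmd : meanDev μ l X = m + l * Real.sqrt (∫ ω, Y ω ^ 2 ∂μ) := rfl
  set s := Real.sqrt (∫ ω, Y ω ^ 2 ∂μ) with hs
  by_cases hls : l = 0 ∨ ∫ ω, Y ω ^ 2 ∂μ = 0
  · refine ⟨constL2 μ 1, constL2_one_mem h0, ?_⟩
    have hzero : l * s = 0 := by
      rcases hls with h | h
      · rw [h, zero_mul]
      · rw [hs, h, Real.sqrt_zero, mul_zero]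
    rw [pairing_constL2_one, hmd, hzero, add_zero, hm]
  · push_neg at hls
    obtain ⟨hl0, hsql⟩ := hls
    have hlpos : 0 < l := lt_of_le_of_ne h0 (Ne.symm hl0)
    have hIsq : 0 < ∫ ω, Y ω ^ 2 ∂μ :=
      (integral_nonneg fun ω => sq_nonneg _).lt_of_ne (Ne.symm hsql)
    have hspos : 0 < s := Real.sqrt_pos.mpr hIsq
    have hs2 : s ^ 2 = ∫ ω, Y ω ^ 2 ∂μ := Real.sq_sqrt hIsq.le
    set I := ∫ ω, Y ω ∂μ with hI
    have hInn : 0 ≤ I := integral_nonneg hYnn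
    have hIY : Integrable Y μ := hY2.integrable (by norm_num)
    have hIle : I ≤ s := by
      have h1m : MemLp (fun _ : Ω => (1 : ℝ)) 2 μ := memLp_const 1
      have hcs := cauchy_schwarz hY2 h1m
        (Eventually.of_forall fun ω => by simpa using hYnn ω)
        (Eventually.of_forall fun ω => by norm_num)
      simpa [hs] using hcs
    set r := l / s with hr
    have hrpos : 0 < r := div_pos hlpos hspos
    set c₀ := 1 - r * I with hc₀
    have hc₀nn : 0 ≤ c₀ := by
      have hrI : r * I ≤ 1 := by
        rw [hr, div_mul_eq_mul_div, div_le_one hspos]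
        nlinarith
      rw [hc₀]; linarith
    have hg2 : MemLp (fun ω => c₀ + r * Y ω) 2 μ := (memLp_const c₀).add (hY2.const_mul r)
    set Qs : L2 μ := hg2.toLp _ with hQsdef
    have hQg : ⇑Qs =ᵐ[μ] fun ω => c₀ + r * Y ω := hg2.coeFn_toLp
    have hQd : Qs ∈ densities μ := by
      constructor
      · filter_upwards [hQg] with ω h
        rw [Pi.zero_apply, h]
        have := mul_nonneg hrpos.le (hYnn ω)
        linarith
      · rw [integral_congr_ae hQg,
          integral_add (integrable_const c₀) (hIY.const_mul r), integral_const,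
          integral_const_mul]
        simp only [probReal_univ, smul_eq_mul, one_mul, ← hI, hc₀]
        ring
    have hQc₀ : ∀ᵐ ω ∂μ, c₀ ≤ Qs ω := by
      filter_upwards [hQg] with ω h
      rw [h]
      have := mul_nonneg hrpos.le (hYnn ω)
      linarith
    have hess : essInfR μ Qs = c₀ := by
      haveI := ae_neBot' (μ := μ)
      apply IsGreatest.csSup_eq
      refine ⟨hQc₀, fun a ha => ?_⟩
      by_contra hac
      push_neg at hac
      have ha' : ∀ᵐ ω ∂μ, a ≤ Qs ω := ha
      set ε := (a - c₀) / r with hε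
      have hεpos : 0 < ε := div_pos (by linarith) hrpos
      have hXge : ∀ᵐ ω ∂μ, ε ≤ X ω - m := by
        filter_upwards [ha', hQg] with ω hω1 hω2
        rw [hω2] at hω1
        have hYω : ε ≤ Y ω := by
          rw [hε, div_le_iff₀ hrpos]
          nlinarith
        rcases le_max_iff.mp hYω with h' | h'
        · exact h'
        · linarith
      have hXm1 : Integrable (fun ω => X ω - m) μ :=
        (integrable_L2 X).sub (integrable_const m)
      have hint := integral_mono_ae (integrable_const ε) hXm1 hXge
      rw [integral_sub (integrable_L2 X) (integrable_const m)] at hint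
      simp only [integral_const, probReal_univ, smul_eq_mul, one_mul,
        ← hm, sub_self] at hint
      linarith
    have hdev : Real.sqrt (∫ ω, (Qs ω - essInfR μ Qs) ^ 2 ∂μ) ≤ l := by
      rw [hess]
      have hcae : (fun ω => (Qs ω - c₀) ^ 2) =ᵐ[μ] fun ω => r ^ 2 * Y ω ^ 2 := by
        filter_upwards [hQg] with ω h
        rw [h]; ring
      rw [integral_congr_ae hcae, integral_const_mul]
      have hval : r ^ 2 * ∫ ω, Y ω ^ 2 ∂μ = l ^ 2 := by
        rw [← hs2, hr]
        field_simp
      rw [hval, Real.sqrt_sq h0]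
    have hXY : Integrable (fun ω => X ω * Y ω) μ := integrable_mul₂ (Lp.memLp X) hY2
    have hXYval : ∫ ω, X ω * Y ω ∂μ = (∫ ω, Y ω ^ 2 ∂μ) + m * I := by
      have hpt : (fun ω => X ω * Y ω) = fun ω => Y ω ^ 2 + m * Y ω := by
        funext ω
        rcases le_or_gt (X ω - m) 0 with h | h
        · have hz : Y ω = 0 := max_eq_right h
          rw [hz]; ring
        · have hz : Y ω = X ω - m := max_eq_left h.le
          rw [hz]; ring
      rw [hpt, integral_add (integrable_sq hY2) (hIY.const_mul m), integral_const_mul]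
    refine ⟨Qs, ⟨hQd, hdev⟩, ?_⟩
    have hpae : (fun ω => X ω * Qs ω) =ᵐ[μ] fun ω => c₀ * X ω + r * (X ω * Y ω) := by
      filter_upwards [hQg] with ω h
      rw [h]; ring
    have hrs : r * (∫ ω, Y ω ^ 2 ∂μ) = l * s := by
      rw [← hs2, hr]
      field_simp
    show (∫ ω, X ω * Qs ω ∂μ) = meanDev μ l X
    rw [integral_congr_ae hpae,
      integral_add ((integrable_L2 X).const_mul c₀) (hXY.const_mul r),
      integral_const_mul, integral_const_mul, hXYval, hmd, ← hm]
    rw [hc₀]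
    nlinarith [hrs]
lemma envelope_convex {l : ℝ} : Convex ℝ (meanDevEnvelope μ l) := by
  intro Q₁ hQ₁ Q₂ hQ₂ a b ha hb hab
  obtain ⟨h₁d, h₁dev⟩ := hQ₁
  obtain ⟨h₂d, h₂dev⟩ := hQ₂
  set c₁ := essInfR μ Q₁ with hc₁
  set c₂ := essInfR μ Q₂ with hc₂
  have hcoe : ⇑(a • Q₁ + b • Q₂) =ᵐ[μ] fun ω => a * Q₁ ω + b * Q₂ ω := by
    filter_upwards [Lp.coeFn_add (a • Q₁) (b • Q₂), Lp.coeFn_smul a Q₁, Lp.coeFn_smul b Q₂]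
      with ω h1 h2 h3
    rw [h1, Pi.add_apply, h2, h3, Pi.smul_apply, Pi.smul_apply, smul_eq_mul, smul_eq_mul]
  have hQd : (a • Q₁ + b • Q₂) ∈ densities μ := by
    constructor
    · filter_upwards [hcoe, h₁d.1, h₂d.1] with ω h h1 h2
      rw [Pi.zero_apply] at h1 h2 ⊢
      rw [h]
      exact add_nonneg (mul_nonneg ha h1) (mul_nonneg hb h2)
    · rw [integral_congr_ae hcoe,
        integral_add ((integrable_L2 Q₁).const_mul a) ((integrable_L2 Q₂).const_mul b),
        integral_const_mul, integral_const_mul, h₁d.2, h₂d.2]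
      simpa using hab
  refine ⟨hQd, ?_⟩
  have hcle : ∀ᵐ ω ∂μ, a * c₁ + b * c₂ ≤ (a • Q₁ + b • Q₂) ω := by
    filter_upwards [hcoe, essInfR_ae_le h₁d, essInfR_ae_le h₂d] with ω h h1 h2
    rw [h]
    have e1 := mul_le_mul_of_nonneg_left h1 ha
    have e2 := mul_le_mul_of_nonneg_left h2 hb
    linarith
  refine le_trans (dev_essInfR_le hQd hcle) ?_
  rw [dev_eq_norm]
  have hconst : constL2 μ (a * c₁ + b * c₂) = a • constL2 μ c₁ + b • constL2 μ c₂ := by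
    apply Lp.ext
    filter_upwards [coeFn_constL2 (μ := μ) (a * c₁ + b * c₂),
      Lp.coeFn_add (a • constL2 μ c₁) (b • constL2 μ c₂),
      Lp.coeFn_smul a (constL2 μ c₁ : L2 μ), Lp.coeFn_smul b (constL2 μ c₂ : L2 μ),
      coeFn_constL2 (μ := μ) c₁, coeFn_constL2 (μ := μ) c₂] with ω g1 g2 g3 g4 g5 g6
    rw [g1, g2, Pi.add_apply, g3, g4, Pi.smul_apply, Pi.smul_apply, g5, g6,
      smul_eq_mul, smul_eq_mul]
  have hid : (a • Q₁ + b • Q₂) - constL2 μ (a * c₁ + b * c₂)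
      = a • (Q₁ - constL2 μ c₁) + b • (Q₂ - constL2 μ c₂) := by
    rw [hconst, smul_sub, smul_sub]
    abel
  rw [hid]
  have hn1 : ‖Q₁ - constL2 μ c₁‖ ≤ l := by rw [← dev_eq_norm]; exact h₁dev
  have hn2 : ‖Q₂ - constL2 μ c₂‖ ≤ l := by rw [← dev_eq_norm]; exact h₂dev
  calc ‖a • (Q₁ - constL2 μ c₁) + b • (Q₂ - constL2 μ c₂)‖
      ≤ a * ‖Q₁ - constL2 μ c₁‖ + b * ‖Q₂ - constL2 μ c₂‖ := by
        refine le_trans (norm_add_le _ _) ?_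
        rw [norm_smul, norm_smul, Real.norm_of_nonneg ha, Real.norm_of_nonneg hb]
    _ ≤ a * l + b * l := by
        exact add_le_add (mul_le_mul_of_nonneg_left hn1 ha) (mul_le_mul_of_nonneg_left hn2 hb)
    _ = l := by rw [← add_mul, hab, one_mul]

set_option synthInstance.maxHeartbeats 1000000 in
lemma envelope_closed {l : ℝ} : IsClosed (meanDevEnvelope μ l) := by
  apply IsSeqClosed.isClosed
  intro Qn Q hmem htend
  have hIcont : Continuous fun R : L2 μ => ∫ ω, R ω ∂μ := by
    have heq : (fun R : L2 μ => ∫ ω, R ω ∂μ)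
        = fun R : L2 μ => (inner ℝ (constL2 μ 1 : L2 μ) R : ℝ) := by
      funext R
      rw [L2.inner_def]
      apply integral_congr_ae
      filter_upwards [coeFn_constL2 (μ := μ) 1] with ω h
      rw [RCLike.inner_apply, h]
      simp
    rw [heq]
    exact Continuous.inner continuous_const continuous_id
  have h1int : ∫ ω, Q ω ∂μ = 1 := by
    have ht : Tendsto (fun n => ∫ ω, (Qn n) ω ∂μ) atTop (𝓝 (∫ ω, Q ω ∂μ)) :=
      (hIcont.tendsto Q).comp htend
    have hconst : ∀ n, ∫ ω, (Qn n) ω ∂μ = 1 := fun n => (hmem n).1.2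
    simp_rw [hconst] at ht
    exact tendsto_nhds_unique ht tendsto_const_nhds
  have h0Q : (0 : L2 μ) ≤ Q :=
    ge_of_tendsto' htend fun n => (Lp.coeFn_nonneg _).mp (hmem n).1.1
  have hQd : Q ∈ densities μ := ⟨(Lp.coeFn_nonneg Q).mpr h0Q, h1int⟩
  set cn : ℕ → ℝ := fun n => essInfR μ (Qn n) with hcn_def
  have hcn : ∀ n, cn n ∈ Set.Icc (0 : ℝ) 1 :=
    fun n => ⟨essInfR_nonneg (hmem n).1, essInfR_le_one (hmem n).1⟩
  obtain ⟨c, hc01, φ, hφ, hcconv⟩ := (isCompact_Icc (a := (0:ℝ)) (b := 1)).tendsto_subseq hcn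
  have hQφ : Tendsto (fun n => Qn (φ n)) atTop (𝓝 Q) := htend.comp hφ.tendsto_atTop
  have hkconv : Tendsto (fun n => (constL2 μ (cn (φ n)) : L2 μ)) atTop
      (𝓝 (constL2 μ c)) := by
    rw [tendsto_iff_norm_sub_tendsto_zero]
    have he : (fun n => ‖(constL2 μ (cn (φ n)) : L2 μ) - constL2 μ c‖)
        = fun n => |cn (φ n) - c| := by
      funext n; rw [constL2_sub, norm_constL2]
    rw [he]
    have : Tendsto (fun n => cn (φ n) - c) atTop (𝓝 (c - c)) :=
      (hcconv.sub_const c)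
    rw [sub_self] at this
    simpa using this.abs
  have hcQ : (constL2 μ c : L2 μ) ≤ Q := by
    refine le_of_tendsto_of_tendsto' hkconv hQφ fun n => ?_
    rw [← Lp.coeFn_le]
    filter_upwards [coeFn_constL2 (μ := μ) (cn (φ n)), essInfR_ae_le (hmem (φ n)).1]
      with ω h1 h2
    rw [h1]; exact h2
  have hcae : ∀ᵐ ω ∂μ, c ≤ Q ω := by
    have hl := (Lp.coeFn_le _ _).mpr hcQ
    filter_upwards [hl, coeFn_constL2 (μ := μ) c] with ω h1 h2
    rw [← h2]; exact h1
  refine ⟨hQd, ?_⟩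
  have hnorm : Tendsto (fun n => ‖Qn (φ n) - constL2 μ (cn (φ n))‖) atTop
      (𝓝 ‖Q - constL2 μ c‖) := (hQφ.sub hkconv).norm
  have hle : ‖Q - constL2 μ c‖ ≤ l := by
    refine le_of_tendsto hnorm (Eventually.of_forall fun n => ?_)
    rw [← dev_eq_norm]
    exact (hmem (φ n)).2
  refine le_trans (dev_essInfR_le hQd hcae) ?_
  rw [dev_eq_norm]
  exact hle
end Stmt11Aux
/-- for `0 ≤ λ ≤ 1` and every `X ∈ L²`,
`sup{E[XQ] : Q ≥ 0 a.s., E[Q] = 1, ‖Q − ess inf Q‖₂ ≤ λ} = E[X] + λ‖(X − E[X])₊‖₂`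
(the supremum is attained in the sense of `IsLUB`), and the set
`𝒬 = {Q ∈ 𝒫 : ‖Q − ess inf Q‖₂ ≤ λ}` is nonempty, convex and closed in `L²`, so that `𝒬`
is the risk envelope of the mean-deviation risk measure. -/
theorem stmt_11 (l : ℝ) (h0 : 0 ≤ l) (h1 : l ≤ 1) :
    (∀ X : L2 μ,
      IsLUB {e : ℝ | ∃ Q ∈ meanDevEnvelope μ l, e = pairing μ X Q} (meanDev μ l X)) ∧
    (meanDevEnvelope μ l).Nonempty ∧ Convex ℝ (meanDevEnvelope μ l) ∧
    IsClosed (meanDevEnvelope μ l) := by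
  refine ⟨fun X => ?_, ⟨constL2 μ 1, Stmt11Aux.constL2_one_mem h0⟩,
    Stmt11Aux.envelope_convex, Stmt11Aux.envelope_closed⟩
  constructor
  · rintro e ⟨Q, hQ, rfl⟩
    exact Stmt11Aux.pairing_le_meanDev h0 X Q hQ
  · intro b hb
    obtain ⟨Q, hQm, hpe⟩ := Stmt11Aux.exists_maximizer h0 h1 X
    rw [← hpe]
    exact hb ⟨Q, hQm, rfl⟩
end
end

section
/- Suppose ℛ is a coherent risk measure on L² with risk envelope 𝒬, and suppose 1 is a relative interior point of 𝒬 relative to 𝒫, i.e. there exists δ > 0 such that every Q ∈ 𝒫 with ‖Q − 1‖₂ < δ belongs to 𝒬. Then ℛ is averse; in particular ℛ(X) > E[X] for every X ∈ L² that is not a.s. equal to a constant. -/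
open MeasureTheory Filter Topology

noncomputable section

variable {Ω : Type*} [MeasurableSpace Ω] (μ : Measure Ω) [IsProbabilityMeasure μ]

/-- if `1` is a relative interior point of the risk envelope `𝒬` relative to
`𝒫` (i.e. some `δ`-ball of `𝒫` around `1` lies in `𝒬`), then the coherent risk measure
`ℛ` with envelope `𝒬` is averse: `ℛ(X) > E[X]` for every nonconstant `X`. -/
theorem stmt_13 (ℛ : L2 μ → EReal) (𝒬 : Set (L2 μ))
    (hcoh : IsCoherent μ ℛ) (hRE : IsRiskEnvelope μ 𝒬) (henv : HasEnvelope μ ℛ 𝒬)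
    (hint : ∃ δ : ℝ, 0 < δ ∧ ∀ Q ∈ densities μ, ‖Q - constL2 μ 1‖ < δ → Q ∈ 𝒬) :
    ∀ X : L2 μ, (¬ ∃ c : ℝ, ⇑X =ᵐ[μ] fun _ => c) →
      ((∫ ω, X ω ∂μ : ℝ) : EReal) < ℛ X := by
  obtain ⟨δ, hδ, hball⟩ := hint
  intro X hXc
  set m : ℝ := ∫ ω, X ω ∂μ with hm
  have hXint : Integrable (⇑X) μ := (Lp.memLp X).integrable (by norm_num)
  obtain ⟨X', hX'sm, hX'ae⟩ := Lp.aestronglyMeasurable X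
  have hX'int : Integrable X' μ := hXint.congr hX'ae
  have hX'mean : ∫ ω, X' ω ∂μ = m := (integral_congr_ae hX'ae).symm
  set A : Set Ω := {ω | m < X' ω} with hAdef
  have hAmeas : MeasurableSet A := measurableSet_lt measurable_const hX'sm.measurable
  set p : ℝ := (μ A).toReal with hpdef
  have hp0 : 0 ≤ p := ENNReal.toReal_nonneg
  have hp1 : p ≤ 1 := by
    rw [hpdef]
    have := prob_le_one (μ := μ) (s := A)
    calc (μ A).toReal ≤ (1 : ENNReal).toReal := ENNReal.toReal_mono ENNReal.one_ne_top this
    _ = 1 := by simp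
  set f : Ω → ℝ := A.indicator (fun _ => 1) with hfdef
  have hfint : Integrable f μ := (integrable_const (1:ℝ)).indicator hAmeas
  have hfmean : ∫ ω, f ω ∂μ = p := by
    rw [hfdef]
    simpa [hpdef, measureReal_def] using integral_indicator_const (1:ℝ) hAmeas
  set g : Ω → ℝ := fun ω => f ω - p with hgdef
  have hgmem : MemLp g 2 μ :=
    (memLp_indicator_const 2 hAmeas (1:ℝ) (Or.inr (measure_ne_top μ A))).sub (memLp_const p)
  have hgint : Integrable g μ := hfint.sub (integrable_const p)
  have hgmean : ∫ ω, g ω ∂μ = 0 := by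
    rw [hgdef]
    rw [integral_sub hfint (integrable_const p), hfmean, integral_const]
    simp
  have hgbd : ∀ ω, |g ω| ≤ 1 := by
    intro ω
    rw [hgdef, hfdef]
    simp only [Set.indicator_apply]
    split_ifs <;> rw [abs_le] <;> constructor <;> linarith
  set G : L2 μ := hgmem.toLp g with hGdef
  set t : ℝ := min (1/2) (δ/2) with htdef
  have ht0 : 0 < t := lt_min (by norm_num) (by linarith)
  have ht1 : t ≤ 1/2 := min_le_left _ _
  have htδ : t ≤ δ/2 := min_le_right _ _
  set Q : L2 μ := constL2 μ 1 + t • G with hQdef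
  have hQcoe : ⇑Q =ᵐ[μ] fun ω => 1 + t * g ω := by
    filter_upwards [Lp.coeFn_add (constL2 μ 1) (t • G), Lp.coeFn_smul t G,
      hgmem.coeFn_toLp, (memLp_const (μ := μ) (1:ℝ)).coeFn_toLp] with ω h1 h2 h3 h4
    rw [hQdef]
    simp only [h1, Pi.add_apply, h2, Pi.smul_apply, h3, smul_eq_mul]
    rw [show ⇑(constL2 μ 1) ω = (1:ℝ) from by rw [constL2] ; exact h4]
    rw [hGdef, h3]
  -- Q is a density
  have hQnn : (0 : Ω → ℝ) ≤ᵐ[μ] ⇑Q := by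
    filter_upwards [hQcoe] with ω h
    rw [Pi.zero_apply, h]
    have := abs_le.mp (hgbd ω)
    nlinarith
  have hQmean : ∫ ω, Q ω ∂μ = 1 := by
    rw [integral_congr_ae hQcoe]
    rw [integral_add (integrable_const 1) (hgint.const_mul t), integral_const,
      integral_const_mul, hgmean]
    simp
  have hQdens : Q ∈ densities μ := ⟨hQnn, hQmean⟩
  -- Q is close to 1
  have hGnorm : ‖G‖ ≤ 1 := by
    rw [hGdef, Lp.norm_toLp]
    have h1 : eLpNorm g 2 μ ≤ 1 := by
      have := eLpNorm_le_of_ae_bound (μ := μ) (p := 2) (f := g) (C := 1)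
        (Filter.Eventually.of_forall (fun ω => by rw [Real.norm_eq_abs]; exact hgbd ω))
      simpa using this
    calc (eLpNorm g 2 μ).toReal ≤ (1 : ENNReal).toReal := ENNReal.toReal_mono ENNReal.one_ne_top h1
    _ = 1 := by simp
  have hQnorm : ‖Q - constL2 μ 1‖ < δ := by
    have : Q - constL2 μ 1 = t • G := by rw [hQdef]; abel
    rw [this, norm_smul, Real.norm_eq_abs, abs_of_pos ht0]
    calc t * ‖G‖ ≤ t * 1 := by nlinarith
    _ = t := mul_one t
    _ ≤ δ/2 := htδ
    _ < δ := by linarith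
  have hQ𝒬 : Q ∈ 𝒬 := hball Q hQdens hQnorm
  -- positivity of the covariance term
  have hXg_int : Integrable (fun ω => X' ω * g ω) μ := by
    have : Integrable (fun ω => g ω * X' ω) μ :=
      hX'int.bdd_mul (hgmem.aestronglyMeasurable)
        (c := 1) (Filter.Eventually.of_forall fun ω => by rw [Real.norm_eq_abs]; exact hgbd ω)
    exact this.congr (Filter.Eventually.of_forall fun ω => mul_comm _ _)
  have hXf_int : Integrable (fun ω => X' ω * f ω) μ := by
    have : Integrable (fun ω => f ω * X' ω) μ :=
      hX'int.bdd_mul (hfint.aestronglyMeasurable)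
        (c := 1) (Filter.Eventually.of_forall fun ω => by
          rw [Real.norm_eq_abs, hfdef]
          simp only [Set.indicator_apply]
          split_ifs <;> norm_num)
    exact this.congr (Filter.Eventually.of_forall fun ω => mul_comm _ _)
  set h : Ω → ℝ := fun ω => X' ω - m with hhdef
  have hhint : Integrable h μ := hX'int.sub (integrable_const m)
  have hhmean : ∫ ω, h ω ∂μ = 0 := by
    rw [hhdef, integral_sub hX'int (integrable_const m), hX'mean, integral_const]
    simp
  have hposeq : ∀ ω, A.indicator h ω = max (h ω) 0 := by
    intro ω
    by_cases hω : ω ∈ A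
    · rw [Set.indicator_of_mem hω]
      have : 0 < h ω := by
        show (0:ℝ) < X' ω - m
        have : m < X' ω := hω
        linarith
      exact (max_eq_left this.le).symm
    · rw [Set.indicator_of_notMem hω]
      have : h ω ≤ 0 := by
        show X' ω - m ≤ (0:ℝ)
        simp only [hAdef, Set.mem_setOf_eq, not_lt] at hω
        linarith
      exact (max_eq_right this).symm
  have hppint : Integrable (fun ω => max (h ω) 0) μ := hhint.pos_part
  have hppnn : (0 : Ω → ℝ) ≤ᵐ[μ] fun ω => max (h ω) 0 :=
    Filter.Eventually.of_forall fun ω => le_max_right _ _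
  have hpppos : 0 < ∫ ω, max (h ω) 0 ∂μ := by
    rcases lt_or_eq_of_le (integral_nonneg (f := fun ω => max (h ω) 0) (fun ω => le_max_right _ _)) with hlt | heq
    · exact hlt
    · exfalso
      have hz : (fun ω => max (h ω) 0) =ᵐ[μ] 0 :=
        (integral_eq_zero_iff_of_nonneg_ae hppnn hppint).mp heq.symm
      have hle : h ≤ᵐ[μ] 0 := by
        filter_upwards [hz] with ω hω
        rw [Pi.zero_apply]
        by_contra hc
        push_neg at hc
        rw [Pi.zero_apply] at hω
        rw [max_eq_left hc.le] at hω
        linarith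
      have hnegnn : (0 : Ω → ℝ) ≤ᵐ[μ] fun ω => -h ω := by
        filter_upwards [hle] with ω hω; simpa using hω
      have hnegmean : ∫ ω, -h ω ∂μ = 0 := by rw [integral_neg, hhmean, neg_zero]
      have hzero : (fun ω => -h ω) =ᵐ[μ] 0 :=
        (integral_eq_zero_iff_of_nonneg_ae hnegnn hhint.neg).mp hnegmean
      apply hXc
      refine ⟨m, ?_⟩
      filter_upwards [hX'ae, hzero] with ω h1 h2
      rw [Pi.zero_apply] at h2
      rw [hhdef] at h2
      simp only at h2 ⊢
      rw [h1]; linarith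
  have hcov : 0 < ∫ ω, X' ω * g ω ∂μ := by
    have e1 : ∫ ω, X' ω * g ω ∂μ = ∫ ω, X' ω * f ω ∂μ - p * m := by
      have : ∀ ω, X' ω * g ω = X' ω * f ω - p * X' ω := by
        intro ω; rw [hgdef]; ring
      rw [integral_congr_ae (Filter.Eventually.of_forall this),
        integral_sub hXf_int (hX'int.const_mul p), integral_const_mul, hX'mean]
    have e2 : ∫ ω, X' ω * f ω ∂μ - p * m = ∫ ω, h ω * f ω ∂μ := by
      have : ∀ ω, h ω * f ω = X' ω * f ω - m * f ω := by
        intro ω; rw [hhdef]; ring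
      rw [integral_congr_ae (Filter.Eventually.of_forall this),
        integral_sub hXf_int (hfint.const_mul m), integral_const_mul, hfmean]
      ring
    have e3 : ∫ ω, h ω * f ω ∂μ = ∫ ω, max (h ω) 0 ∂μ := by
      apply integral_congr_ae
      apply Filter.Eventually.of_forall
      intro ω
      show h ω * f ω = max (h ω) 0
      rw [← hposeq ω, hfdef]
      simp [Set.indicator_apply]
    rw [e1, e2, e3]
    exact hpppos
  -- compute the pairing
  have hpair : pairing μ X Q = m + t * ∫ ω, X' ω * g ω ∂μ := by
    rw [pairing]
    have step1 : ∫ ω, X ω * Q ω ∂μ = ∫ ω, X' ω * (1 + t * g ω) ∂μ := by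
      apply integral_congr_ae
      filter_upwards [hQcoe, hX'ae] with ω h1 h2
      rw [h1, h2]
    have step2 : ∀ ω, X' ω * (1 + t * g ω) = X' ω + t * (X' ω * g ω) := by
      intro ω; ring
    rw [step1, integral_congr_ae (Filter.Eventually.of_forall step2),
      integral_add hX'int (hXg_int.const_mul t), integral_const_mul, hX'mean]
  have hmain : m < pairing μ X Q := by
    rw [hpair]
    nlinarith
  have hle : ((pairing μ X Q : ℝ) : EReal) ≤ ℛ X := by
    rw [henv X]
    exact le_iSup₂ (f := fun (Q : L2 μ) (_ : Q ∈ 𝒬) => ((pairing μ X Q : ℝ) : EReal)) Q hQ𝒬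
  exact lt_of_lt_of_le (by exact_mod_cast hmain) hle
end
end
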